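/- arXiv:math/0210297 — 4 statements merged into one kernel-verified Lean document; each statement's English description precedes it below -/
import Mathlib

section
/- Let z be a finite formal product of prime powers with attached finite abelian groups G_{z(x)} for each prime x | z, and let 𝒰_z be the universal norm distribution: the quotient of the free 𝒯-module 𝒜_z on symbols [g z'] (g ∈ G_{z'}, z' a stalk of z) by the 𝒯[G_z]-submodule generated by the elements λ_{z(x)}([g z']) = p(x; Fr_x^{-1})[g z'] − N_{z(x)}[g z(x) z'] for all x | z and stalks z' of z/z(x). Then 𝒰_z is a free 𝒯-module of rank |G_z| = ∏_{x|z} |G_{z(x)}|, with basis the images of those [g z'] such that the component of g in G_{z(x)} is nontrivial for every prime x | z'. -/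
/-! Universal norm distribution scaffold.  The finite element `z` has prime set `ι`
(totally ordered), multiplicities recorded only through the finite abelian groups
`G x = G_{z(x)}`; `G_z = ∏_{x|z} G_{z(x)}`.  A basis symbol `[g z']` of `𝒜_z` is a pair
of a stalk (a subset `S ⊆ ι`) and a group element `g ∈ G_{z'} = ∏_{x∈S} G x`, encoded
as a function on all of `ι` which is trivial outside `S`. -/

/-- Basis symbols `[g z']` of `𝒜_z`. -/
def UndIdx (ι : Type) (G : ι → Type) [∀ i, CommGroup (G i)] : Type :=
  {q : Finset ι × (∀ i, G i) // ∀ i ∉ q.1, q.2 i = 1}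

section
variable (ι : Type) [Fintype ι] [LinearOrder ι]
  (G : ι → Type) [∀ i, CommGroup (G i)] [∀ i, Fintype (G i)]

/-- Action of `σ ∈ G_z` on a symbol `[g z']`: multiply the components in the stalk. -/
def undAct (σ : ∀ i, G i) (q : UndIdx ι G) : UndIdx ι G :=
  ⟨(q.1.1, fun i => if i ∈ q.1.1 then σ i * q.1.2 i else 1), fun _ hi => if_neg hi⟩

/-- The symbol `[g h z(x) z']` obtained from `[g z']` by extending the stalk by `z(x)`
with component `h ∈ G_{z(x)}`. -/
def undExt (x : ι) (h : G x) (q : UndIdx ι G) : UndIdx ι G :=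
  ⟨(insert x q.1.1, Function.update q.1.2 x h), by
    intro i hi
    have hix : i ≠ x := fun e => hi (e ▸ Finset.mem_insert_self x q.1.1)
    show Function.update q.1.2 x h i = 1
    rw [Function.update_of_ne hix]
    exact q.2 i fun hm => hi (Finset.mem_insert_of_mem hm)⟩

variable (𝒯 : Type) [CommRing 𝒯] (p : ι → Polynomial 𝒯) (fr : ι → ∀ i, G i)

/-- The distribution relation `λ_{z(x)}([g z']) = p(x; Fr_x^{-1})[g z'] − N_{z(x)}[g z(x) z']`
(for `x` not dividing the stalk `z'`), as an element of the free module `𝒜_z`. -/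
noncomputable def undLam (x : ι) (q : UndIdx ι G) : UndIdx ι G →₀ 𝒯 :=
  (∑ k ∈ (p x).support,
      Finsupp.single (undAct ι G (fun i => (fr x i)⁻¹ ^ k) q) ((p x).coeff k))
    - ∑ h : G x, Finsupp.single (undExt ι G x h q) 1

/-- The `𝒯[G_z]`-submodule `𝒟_z` of distribution relations: the `𝒯`-span of all
`G_z`-translates of the `λ_{z(x)}([g z'])`, `x ∤ z'`. -/
noncomputable def undRel : Submodule 𝒯 (UndIdx ι G →₀ 𝒯) :=
  Submodule.span 𝒯
    {v | ∃ (σ : ∀ i, G i) (x : ι) (q : UndIdx ι G), x ∉ q.1.1 ∧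
      v = Finsupp.mapDomain (undAct ι G σ) (undLam ι G 𝒯 p fr x q)}

/-- The universal norm distribution `𝒰_z = 𝒜_z/𝒟_z`. -/
noncomputable abbrev UND : Type := (UndIdx ι G →₀ 𝒯) ⧸ undRel ι G 𝒯 p fr

end


set_option linter.unusedSectionVars false
set_option linter.unusedVariables false
section aux
variable {ι : Type} [Fintype ι] [LinearOrder ι]
  {G : ι → Type} [∀ i, CommGroup (G i)] [∀ i, Fintype (G i)]

lemma UndIdx.ext' {q r : UndIdx ι G} (h1 : q.1.1 = r.1.1) (h2 : ∀ i, q.1.2 i = r.1.2 i) :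
    q = r := Subtype.ext (Prod.ext h1 (funext h2))

/-- Delete `x` from the stalk. -/
def undDel (x : ι) (q : UndIdx ι G) : UndIdx ι G :=
  ⟨(q.1.1.erase x, Function.update q.1.2 x 1), by
    intro i hi
    show Function.update q.1.2 x 1 i = 1
    rcases eq_or_ne i x with rfl | h
    · simp
    · rw [Function.update_of_ne h]
      exact q.2 i fun hm => hi (Finset.mem_erase.mpr ⟨h, hm⟩)⟩

variable (σ τ : ∀ i, G i) (q t : UndIdx ι G) (x y : ι)

lemma act_act : undAct ι G σ (undAct ι G τ q) = undAct ι G (σ * τ) q := by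
  refine UndIdx.ext' rfl fun i => ?_
  show (if i ∈ q.1.1 then σ i * (if i ∈ q.1.1 then τ i * q.1.2 i else 1) else 1) = _
  by_cases hi : i ∈ q.1.1 <;> simp [undAct, hi, mul_assoc]

lemma act_one : undAct ι G 1 q = q := by
  refine UndIdx.ext' rfl fun i => ?_
  show (if i ∈ q.1.1 then 1 * q.1.2 i else 1) = q.1.2 i
  by_cases hi : i ∈ q.1.1
  · simp [hi]
  · simp [hi, (q.2 i hi).symm]

lemma act_comm : undAct ι G σ (undAct ι G τ q) = undAct ι G τ (undAct ι G σ q) := by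
  rw [act_act, act_act, mul_comm]

lemma act_ext (h : G x) : undAct ι G σ (undExt ι G x h q) = undExt ι G x (σ x * h) (undAct ι G σ q) := by
  refine UndIdx.ext' rfl fun i => ?_
  show (if i ∈ insert x q.1.1 then σ i * Function.update q.1.2 x h i else 1)
      = Function.update (undAct ι G σ q).1.2 x (σ x * h) i
  rcases eq_or_ne i x with rfl | hix
  · simp
  · rw [Function.update_of_ne hix, Function.update_of_ne hix]
    show _ = (if i ∈ q.1.1 then σ i * q.1.2 i else 1)
    by_cases hi : i ∈ q.1.1 <;> simp [hi, hix]

lemma ext_ext (hxy : x ≠ y) (h : G x) (h' : G y) :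
    undExt ι G x h (undExt ι G y h' q) = undExt ι G y h' (undExt ι G x h q) := by
  refine UndIdx.ext' (Finset.insert_comm _ _ _) fun i => ?_
  exact congrFun (Function.update_comm hxy.symm h' h q.1.2) i

lemma del_ext (hx : x ∉ q.1.1) (h : G x) : undDel x (undExt ι G x h q) = q := by
  refine UndIdx.ext' (Finset.erase_insert hx) fun i => ?_
  show Function.update (Function.update q.1.2 x h) x 1 i = q.1.2 i
  rcases eq_or_ne i x with rfl | hix
  · simp [(q.2 i hx).symm]
  · simp [Function.update_of_ne hix]

lemma ext_del (hx : x ∈ q.1.1) (hq : q.1.2 x = 1) : undExt ι G x 1 (undDel x q) = q := by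
  refine UndIdx.ext' (Finset.insert_erase hx) fun i => ?_
  show Function.update (Function.update q.1.2 x 1) x 1 i = q.1.2 i
  rcases eq_or_ne i x with rfl | hix
  · simp [hq.symm]
  · simp [Function.update_of_ne hix]

lemma del_ext_comm (hxy : x ≠ y) (h : G x) :
    undDel y (undExt ι G x h q) = undExt ι G x h (undDel y q) := by
  refine UndIdx.ext' (Finset.erase_insert_of_ne hxy) fun i => ?_
  show Function.update (Function.update q.1.2 x h) y 1 i
      = Function.update (Function.update q.1.2 y 1) x h i
  exact congrFun (Function.update_comm hxy h 1 q.1.2) i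

open Classical in
/-- The set of `i` in the stalk where the component is trivial. -/
noncomputable def trivset (q : UndIdx ι G) : Finset ι := q.1.1.filter (fun i => q.1.2 i = 1)

lemma mem_trivset {q : UndIdx ι G} {i : ι} : i ∈ trivset q ↔ i ∈ q.1.1 ∧ q.1.2 i = 1 := by
  simp [trivset]

lemma trivset_subset : trivset q ⊆ q.1.1 := fun i hi => (mem_trivset.mp hi).1

lemma trivset_act : trivset (undAct ι G σ q) ⊆ q.1.1 := trivset_subset _

lemma trivset_ext_ne {h : G x} (hx : x ∉ q.1.1) (hh : h ≠ 1) :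
    trivset (undExt ι G x h q) = trivset q := by
  ext i
  rw [mem_trivset, mem_trivset]
  show i ∈ insert x q.1.1 ∧ Function.update q.1.2 x h i = 1 ↔ _
  rcases eq_or_ne i x with rfl | hix
  · simp [hh, hx]
  · simp [Function.update_of_ne hix, hix]

lemma trivset_ext_one (hx : x ∉ q.1.1) :
    trivset (undExt ι G x 1 q) = insert x (trivset q) := by
  ext i
  rw [mem_trivset, Finset.mem_insert, mem_trivset]
  show i ∈ insert x q.1.1 ∧ Function.update q.1.2 x 1 i = 1 ↔ _
  rcases eq_or_ne i x with rfl | hix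
  · simp
  · simp [Function.update_of_ne hix, hix]

lemma trivset_del : trivset (undDel x q) = (trivset q).erase x := by
  ext i
  rw [mem_trivset, Finset.mem_erase, mem_trivset]
  show i ∈ q.1.1.erase x ∧ Function.update q.1.2 x 1 i = 1 ↔ _
  rcases eq_or_ne i x with rfl | hix
  · simp
  · simp [Function.update_of_ne hix, hix, Finset.mem_erase, and_assoc]

/-- complexity measure -/
noncomputable def mu (q : UndIdx ι G) : ℕ :=
  (Fintype.card ι + 1) * q.1.1.card + (trivset q).card

lemma mu_ext_one (hx : x ∉ t.1.1) :
    mu (undExt ι G x 1 t) = mu t + Fintype.card ι + 2 := by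
  have h1 : (undExt ι G x 1 t).1.1 = insert x t.1.1 := rfl
  have hxt : x ∉ trivset t := fun hc => hx (trivset_subset _ hc)
  rw [mu, mu, h1, trivset_ext_one _ _ hx, Finset.card_insert_of_notMem hx,
    Finset.card_insert_of_notMem hxt]
  ring

lemma mu_ext_ne {h : G x} (hx : x ∉ t.1.1) (hh : h ≠ 1) :
    mu (undExt ι G x h t) = mu t + Fintype.card ι + 1 := by
  have h1 : (undExt ι G x h t).1.1 = insert x t.1.1 := rfl
  rw [mu, mu, h1, trivset_ext_ne _ _ hx hh, Finset.card_insert_of_notMem hx]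
  ring

lemma mu_act_le : mu (undAct ι G σ t) ≤ (Fintype.card ι + 1) * t.1.1.card + Fintype.card ι := by
  refine Nat.add_le_add_left ?_ _
  exact le_trans (Finset.card_le_card (trivset_act σ t)) (Finset.card_le_univ _)

lemma mu_act_le' : mu (undAct ι G σ t) ≤ mu t + Fintype.card ι :=
  le_trans (mu_act_le σ t) (by rw [mu]; omega)

lemma mu_del_act_lt (hx1 : x ∈ q.1.1) (hx2 : q.1.2 x = 1) :
    mu (undAct ι G σ (undDel x q)) < mu q := by
  have hq : q = undExt ι G x 1 (undDel x q) := (ext_del q x hx1 hx2).symm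
  have hxd : x ∉ (undDel x q).1.1 := Finset.notMem_erase x q.1.1
  have h2 : mu q = mu (undDel x q) + Fintype.card ι + 2 := by
    conv_lhs => rw [hq]
    exact mu_ext_one (undDel x q) x hxd
  have h3 := mu_act_le' σ (undDel x q)
  omega

lemma mu_del_ext_lt {h : G x} (hx1 : x ∈ q.1.1) (hx2 : q.1.2 x = 1) (hh : h ≠ 1) :
    mu (undExt ι G x h (undDel x q)) < mu q := by
  have hq : q = undExt ι G x 1 (undDel x q) := (ext_del q x hx1 hx2).symm
  have hxd : x ∉ (undDel x q).1.1 := Finset.notMem_erase x q.1.1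
  have h2 : mu q = mu (undDel x q) + Fintype.card ι + 2 := by
    conv_lhs => rw [hq]
    exact mu_ext_one (undDel x q) x hxd
  have h3 := mu_ext_ne (undDel x q) x hxd hh
  omega

end aux
section gdef
variable {ι : Type} [Fintype ι] [LinearOrder ι]
  {G : ι → Type} [∀ i, CommGroup (G i)] [∀ i, Fintype (G i)]
  (𝒯 : Type) [CommRing 𝒯] (p : ι → Polynomial 𝒯) (fr : ι → ∀ i, G i)

open scoped Classical

lemma trivset_nonempty {q : UndIdx ι G} (hq : ¬ ∀ i ∈ q.1.1, q.1.2 i ≠ 1) :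
    (trivset q).Nonempty := by
  push_neg at hq
  obtain ⟨i, hi, h1⟩ := hq
  exact ⟨i, mem_trivset.mpr ⟨hi, h1⟩⟩

/-- The reduction map on symbols. -/
noncomputable def gfun (q : UndIdx ι G) :
    {q : UndIdx ι G // ∀ i ∈ q.1.1, q.1.2 i ≠ 1} →₀ 𝒯 :=
  if hq : ∀ i ∈ q.1.1, q.1.2 i ≠ 1 then Finsupp.single ⟨q, hq⟩ 1
  else
    let x := (trivset q).min' (trivset_nonempty hq)
    (∑ k ∈ (p x).support,
        (p x).coeff k • gfun (undAct ι G (fun i => (fr x i)⁻¹ ^ k) (undDel x q)))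
      - ∑ h : {h : G x // h ≠ 1}, gfun (undExt ι G x h.1 (undDel x q))
termination_by mu q
decreasing_by
  · have hx := Finset.min'_mem (trivset q) (trivset_nonempty hq)
    exact mu_del_act_lt _ _ _ (mem_trivset.mp hx).1 (mem_trivset.mp hx).2
  · have hx := Finset.min'_mem (trivset q) (trivset_nonempty hq)
    exact mu_del_ext_lt _ _ (mem_trivset.mp hx).1 (mem_trivset.mp hx).2 h.2

lemma gfun_spec_mem {q : UndIdx ι G} (hq : ∀ i ∈ q.1.1, q.1.2 i ≠ 1) :
    gfun 𝒯 p fr q = Finsupp.single ⟨q, hq⟩ 1 := by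
  rw [gfun, dif_pos hq]

lemma gfun_spec_ne {q : UndIdx ι G} (hq : ¬ ∀ i ∈ q.1.1, q.1.2 i ≠ 1) :
    gfun 𝒯 p fr q =
      (∑ k ∈ (p ((trivset q).min' (trivset_nonempty hq))).support,
        (p ((trivset q).min' (trivset_nonempty hq))).coeff k •
          gfun 𝒯 p fr (undAct ι G
            (fun i => (fr ((trivset q).min' (trivset_nonempty hq)) i)⁻¹ ^ k)
            (undDel ((trivset q).min' (trivset_nonempty hq)) q)))
      - ∑ h : {h : G ((trivset q).min' (trivset_nonempty hq)) // h ≠ 1},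
          gfun 𝒯 p fr (undExt ι G ((trivset q).min' (trivset_nonempty hq)) h.1
            (undDel ((trivset q).min' (trivset_nonempty hq)) q)) := by
  rw [gfun, dif_neg hq]

lemma sum_ne_one {M : Type} [AddCommGroup M] {x : ι} [F : Fintype {h : G x // h ≠ 1}] (f : G x → M) :
    ∑ h : {h : G x // h ≠ 1}, f h.1 = (∑ h : G x, f h) - f 1 := by
  rw [← Finset.sum_erase_eq_sub (Finset.mem_univ (1 : G x))]
  exact (Finset.sum_subtype (Finset.univ.erase 1) (fun h => by simp) f).symm
lemma key_of_def (q : UndIdx ι G) (hq : ¬ ∀ i ∈ q.1.1, q.1.2 i ≠ 1) :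
    (∑ k ∈ (p ((trivset q).min' (trivset_nonempty hq))).support,
        (p ((trivset q).min' (trivset_nonempty hq))).coeff k •
          gfun 𝒯 p fr (undAct ι G
            (fun i => (fr ((trivset q).min' (trivset_nonempty hq)) i)⁻¹ ^ k)
            (undDel ((trivset q).min' (trivset_nonempty hq)) q)))
      = ∑ h : G ((trivset q).min' (trivset_nonempty hq)),
          gfun 𝒯 p fr (undExt ι G ((trivset q).min' (trivset_nonempty hq)) h
            (undDel ((trivset q).min' (trivset_nonempty hq)) q)) := by
  have hs := gfun_spec_ne 𝒯 p fr hq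
  set x := (trivset q).min' (trivset_nonempty hq) with hxdef
  rw [sum_ne_one (fun h => gfun 𝒯 p fr (undExt ι G x h (undDel x q)))] at hs
  have hx := Finset.min'_mem (trivset q) (trivset_nonempty hq)
  rw [← hxdef] at hx
  have he : undExt ι G x 1 (undDel x q) = q :=
    ext_del q x (mem_trivset.mp hx).1 (mem_trivset.mp hx).2
  rw [he] at hs
  have h2 := eq_sub_iff_add_eq.mp hs
  have h3 : gfun 𝒯 p fr q +
      ((∑ h : G x, gfun 𝒯 p fr (undExt ι G x h (undDel x q))) - gfun 𝒯 p fr q)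
      = ∑ h : G x, gfun 𝒯 p fr (undExt ι G x h (undDel x q)) := by abel
  exact h2.symm.trans h3
lemma key (n : ℕ) : ∀ (x : ι) (t : UndIdx ι G), mu (undExt ι G x 1 t) < n → x ∉ t.1.1 →
    (∑ k ∈ (p x).support, (p x).coeff k •
        gfun 𝒯 p fr (undAct ι G (fun i => (fr x i)⁻¹ ^ k) t))
      = ∑ h : G x, gfun 𝒯 p fr (undExt ι G x h t) := by
  induction n with
  | zero => exact fun x t hn _ => absurd hn (Nat.not_lt_zero _)
  | succ n ih =>
    intro x t hn hx
    set q := undExt ι G x 1 t with hqdef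
    have hq : ¬ ∀ i ∈ q.1.1, q.1.2 i ≠ 1 := by
      intro H
      exact H x (Finset.mem_insert_self x t.1.1) (Function.update_self x 1 t.1.2)
    have hkd := key_of_def 𝒯 p fr q hq
    set x₀ := (trivset q).min' (trivset_nonempty hq) with hx₀def
    have hx₀ : x₀ ∈ trivset q := by rw [hx₀def]; exact Finset.min'_mem _ _
    by_cases hxx : x₀ = x
    · -- the chosen trivial index is x itself
      rw [hxx] at hkd
      have hdel : undDel x q = t := by rw [hqdef]; exact del_ext t x hx 1
      rwa [hdel] at hkd
    · -- confluence case
      have hx₀' := mem_trivset.mp hx₀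
      have hx₀t : x₀ ∈ t.1.1 := by
        have h1 : x₀ ∈ insert x t.1.1 := hx₀'.1
        exact (Finset.mem_insert.mp h1).resolve_left hxx
      have hx₀1 : t.1.2 x₀ = 1 := by
        have h2 : Function.update t.1.2 x 1 x₀ = 1 := hx₀'.2
        rwa [Function.update_of_ne hxx] at h2
      set s := undDel x₀ t with hsdef
      have hts : undExt ι G x₀ 1 s = t := ext_del t x₀ hx₀t hx₀1
      have hxs : x ∉ s.1.1 := fun hc => hx (Finset.erase_subset _ _ hc)
      have hx₀s : x₀ ∉ s.1.1 := Finset.notMem_erase _ _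
      have hxx' : x ≠ x₀ := fun e => hxx e.symm
      have hr : undDel x₀ q = undExt ι G x 1 s := by
        rw [hqdef, hsdef]; exact del_ext_comm t x x₀ hxx' 1
      -- measure bookkeeping
      have hmuts : mu t = mu s + Fintype.card ι + 2 := by
        have h1 := mu_ext_one s x₀ hx₀s
        rwa [hts] at h1
      have hmuq : mu q = mu t + Fintype.card ι + 2 := mu_ext_one t x hx
      have hmu1 : ∀ (y : ι) (σ : ∀ i, G i), y ∉ s.1.1 →
          mu (undExt ι G y 1 (undAct ι G σ s)) < n := by
        intro y σ hy
        have h1 : mu (undExt ι G y 1 (undAct ι G σ s))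
            = mu (undAct ι G σ s) + Fintype.card ι + 2 := mu_ext_one _ y hy
        have h2 := mu_act_le' σ s
        omega
      have hmu2 : ∀ (y y' : ι) (h' : G y'), y ∉ s.1.1 → y' ∉ s.1.1 → y ≠ y' → h' ≠ 1 →
          mu (undExt ι G y 1 (undExt ι G y' h' s)) < n := by
        intro y y' h' hy hy' hyy' hh'
        have hyi : y ∉ (undExt ι G y' h' s).1.1 := by
          show y ∉ insert y' s.1.1
          simp [hyy', hy]
        have h1 : mu (undExt ι G y 1 (undExt ι G y' h' s))
            = mu (undExt ι G y' h' s) + Fintype.card ι + 2 := mu_ext_one _ y hyi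
        have h2 : mu (undExt ι G y' h' s) = mu s + Fintype.card ι + 1 :=
          mu_ext_ne s y' hy' hh'
        omega
      have hx₀i : ∀ h : G x, x₀ ∉ (undExt ι G x h s).1.1 := by
        intro h
        show x₀ ∉ insert x s.1.1
        simp [hxx, hx₀s]
      -- the key identity at (x₀, undExt x h s), for every h : G x
      have hstar : ∀ h : G x,
          (∑ j ∈ (p x₀).support, (p x₀).coeff j •
              gfun 𝒯 p fr (undAct ι G (fun i => (fr x₀ i)⁻¹ ^ j) (undExt ι G x h s)))
            = ∑ h' : G x₀, gfun 𝒯 p fr (undExt ι G x₀ h' (undExt ι G x h s)) := by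
        intro h
        by_cases hh : h = 1
        · subst hh
          rwa [hr] at hkd
        · exact ih x₀ (undExt ι G x h s) (hmu2 x₀ x h hx₀s hxs hxx hh) (hx₀i h)
      -- rewrite each summand of the goal's RHS
      have hRH : ∀ h : G x,
          gfun 𝒯 p fr (undExt ι G x h t)
            = (∑ j ∈ (p x₀).support, (p x₀).coeff j •
                gfun 𝒯 p fr (undAct ι G (fun i => (fr x₀ i)⁻¹ ^ j) (undExt ι G x h s)))
              - ∑ h' ∈ Finset.univ.erase (1 : G x₀),
                  gfun 𝒯 p fr (undExt ι G x₀ h' (undExt ι G x h s)) := by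
        intro h
        rw [Finset.sum_erase_eq_sub (Finset.mem_univ (1 : G x₀)), ← hstar h]
        have h1 : undExt ι G x₀ 1 (undExt ι G x h s) = undExt ι G x h t := by
          rw [ext_ext s x₀ x (fun e => hxx e) 1 h, hts]
        rw [h1]
        abel
      calc
        (∑ k ∈ (p x).support, (p x).coeff k •
            gfun 𝒯 p fr (undAct ι G (fun i => (fr x i)⁻¹ ^ k) t))
          = ∑ k ∈ (p x).support, (p x).coeff k •
            gfun 𝒯 p fr (undExt ι G x₀ ((fr x x₀)⁻¹ ^ k)
              (undAct ι G (fun i => (fr x i)⁻¹ ^ k) s)) := by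
            refine Finset.sum_congr rfl fun k _ => ?_
            congr 1
            conv_lhs => rw [← hts]
            rw [act_ext _ s x₀ 1, mul_one]
        _ = ∑ k ∈ (p x).support, (p x).coeff k •
            ((∑ h'' : G x₀, gfun 𝒯 p fr (undExt ι G x₀ h''
                (undAct ι G (fun i => (fr x i)⁻¹ ^ k) s)))
              - ∑ h' ∈ Finset.univ.erase (1 : G x₀),
                  gfun 𝒯 p fr (undExt ι G x₀ ((fr x x₀)⁻¹ ^ k * h')
                    (undAct ι G (fun i => (fr x i)⁻¹ ^ k) s))) := by
            refine Finset.sum_congr rfl fun k _ => ?_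
            congr 1
            rw [Finset.sum_erase_eq_sub (Finset.mem_univ (1 : G x₀)), mul_one]
            have h2 : ∀ h' : G x₀,
                gfun 𝒯 p fr (undExt ι G x₀ ((fr x x₀)⁻¹ ^ k * h')
                  (undAct ι G (fun i => (fr x i)⁻¹ ^ k) s))
                = (fun h' => gfun 𝒯 p fr (undExt ι G x₀ h'
                  (undAct ι G (fun i => (fr x i)⁻¹ ^ k) s))) ((fr x x₀)⁻¹ ^ k * h') :=
              fun h' => rfl
            rw [show (∑ h' : G x₀,
                gfun 𝒯 p fr (undExt ι G x₀ ((fr x x₀)⁻¹ ^ k * h')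
                  (undAct ι G (fun i => (fr x i)⁻¹ ^ k) s)))
                = ∑ h' : G x₀, gfun 𝒯 p fr (undExt ι G x₀ h'
                  (undAct ι G (fun i => (fr x i)⁻¹ ^ k) s)) from
              Fintype.sum_equiv (Equiv.mulLeft ((fr x x₀)⁻¹ ^ k)) _ _
                (fun h' => by rw [Equiv.coe_mulLeft])]
            abel
        _ = ∑ h : G x, gfun 𝒯 p fr (undExt ι G x h t) := by
            have hR : (∑ h : G x, gfun 𝒯 p fr (undExt ι G x h t))
                = ∑ k ∈ (p x).support, (p x).coeff k •
                    ((∑ h'' : G x₀, gfun 𝒯 p fr (undExt ι G x₀ h''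
                        (undAct ι G (fun i => (fr x i)⁻¹ ^ k) s)))
                      - ∑ h' ∈ Finset.univ.erase (1 : G x₀),
                          gfun 𝒯 p fr (undExt ι G x₀ ((fr x x₀)⁻¹ ^ k * h')
                            (undAct ι G (fun i => (fr x i)⁻¹ ^ k) s))) := by
              calc
                (∑ h : G x, gfun 𝒯 p fr (undExt ι G x h t))
                  = ∑ h : G x,
                      ((∑ j ∈ (p x₀).support, (p x₀).coeff j •
                          gfun 𝒯 p fr (undAct ι G (fun i => (fr x₀ i)⁻¹ ^ j)
                            (undExt ι G x h s)))
                        - ∑ h' ∈ Finset.univ.erase (1 : G x₀),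
                            gfun 𝒯 p fr (undExt ι G x₀ h' (undExt ι G x h s))) :=
                    Finset.sum_congr rfl fun h _ => hRH h
                _ = (∑ h : G x, ∑ j ∈ (p x₀).support, (p x₀).coeff j •
                        gfun 𝒯 p fr (undAct ι G (fun i => (fr x₀ i)⁻¹ ^ j)
                          (undExt ι G x h s)))
                      - ∑ h : G x, ∑ h' ∈ Finset.univ.erase (1 : G x₀),
                          gfun 𝒯 p fr (undExt ι G x₀ h' (undExt ι G x h s)) :=
                    Finset.sum_sub_distrib _ _
                _ = (∑ j ∈ (p x₀).support, (p x₀).coeff j •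
                        ∑ h : G x, gfun 𝒯 p fr (undExt ι G x h
                          (undAct ι G (fun i => (fr x₀ i)⁻¹ ^ j) s)))
                      - ∑ h' ∈ Finset.univ.erase (1 : G x₀),
                          ∑ h : G x, gfun 𝒯 p fr (undExt ι G x h (undExt ι G x₀ h' s)) := by
                    congr 1
                    · rw [Finset.sum_comm]
                      refine Finset.sum_congr rfl fun j _ => ?_
                      rw [Finset.smul_sum]
                      have he : ∀ h : G x,
                          undAct ι G (fun i => (fr x₀ i)⁻¹ ^ j) (undExt ι G x h s)
                            = undExt ι G x ((fr x₀ x)⁻¹ ^ j * h)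
                                (undAct ι G (fun i => (fr x₀ i)⁻¹ ^ j) s) :=
                        fun h => act_ext _ s x h
                      calc
                        (∑ h : G x, (p x₀).coeff j • gfun 𝒯 p fr
                            (undAct ι G (fun i => (fr x₀ i)⁻¹ ^ j) (undExt ι G x h s)))
                          = ∑ h : G x, (p x₀).coeff j •
                              gfun 𝒯 p fr (undExt ι G x ((fr x₀ x)⁻¹ ^ j * h)
                                (undAct ι G (fun i => (fr x₀ i)⁻¹ ^ j) s)) :=
                            Finset.sum_congr rfl fun h _ =>
                              congrArg _ (congrArg _ (he h))
                        _ = ∑ h : G x, (p x₀).coeff j •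
                              gfun 𝒯 p fr (undExt ι G x h
                                (undAct ι G (fun i => (fr x₀ i)⁻¹ ^ j) s)) :=
                            Fintype.sum_equiv (Equiv.mulLeft ((fr x₀ x)⁻¹ ^ j)) _ _
                              (fun h => by rw [Equiv.coe_mulLeft])
                    · rw [Finset.sum_comm]
                      refine Finset.sum_congr rfl fun h' _ =>
                        Finset.sum_congr rfl fun h _ => congrArg _ ?_
                      exact ext_ext s x₀ x hxx h' h
                _ = (∑ j ∈ (p x₀).support, (p x₀).coeff j •
                        ∑ k ∈ (p x).support, (p x).coeff k •
                          gfun 𝒯 p fr (undAct ι G (fun i => (fr x i)⁻¹ ^ k)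
                            (undAct ι G (fun i => (fr x₀ i)⁻¹ ^ j) s)))
                      - ∑ h' ∈ Finset.univ.erase (1 : G x₀),
                          ∑ k ∈ (p x).support, (p x).coeff k •
                            gfun 𝒯 p fr (undAct ι G (fun i => (fr x i)⁻¹ ^ k)
                              (undExt ι G x₀ h' s)) := by
                    congr 1
                    · refine Finset.sum_congr rfl fun j _ => congrArg _ ?_
                      exact (ih x (undAct ι G (fun i => (fr x₀ i)⁻¹ ^ j) s)
                        (hmu1 x _ hxs) hxs).symm
                    · refine Finset.sum_congr rfl fun h' hh' => ?_
                      have hne1 : h' ≠ 1 := (Finset.mem_erase.mp hh').1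
                      have hxe : x ∉ (undExt ι G x₀ h' s).1.1 := by
                        show x ∉ insert x₀ s.1.1
                        simp [hxx', hxs]
                      exact (ih x (undExt ι G x₀ h' s)
                        (hmu2 x x₀ h' hxs hx₀s hxx' hne1) hxe).symm
                _ = (∑ k ∈ (p x).support, (p x).coeff k •
                        ∑ j ∈ (p x₀).support, (p x₀).coeff j •
                          gfun 𝒯 p fr (undAct ι G (fun i => (fr x₀ i)⁻¹ ^ j)
                            (undAct ι G (fun i => (fr x i)⁻¹ ^ k) s)))
                      - ∑ k ∈ (p x).support, (p x).coeff k •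
                          ∑ h' ∈ Finset.univ.erase (1 : G x₀),
                            gfun 𝒯 p fr (undExt ι G x₀ ((fr x x₀)⁻¹ ^ k * h')
                              (undAct ι G (fun i => (fr x i)⁻¹ ^ k) s)) := by
                    congr 1
                    · simp only [Finset.smul_sum, smul_smul]
                      rw [Finset.sum_comm]
                      refine Finset.sum_congr rfl fun k _ =>
                        Finset.sum_congr rfl fun j _ => ?_
                      rw [mul_comm ((p x₀).coeff j) ((p x).coeff k), act_comm]
                    · rw [Finset.sum_comm]
                      refine Finset.sum_congr rfl fun k _ => ?_
                      rw [Finset.smul_sum]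
                      refine Finset.sum_congr rfl fun h' _ => congrArg _ (congrArg _ ?_)
                      exact act_ext _ s x₀ h'
                _ = ∑ k ∈ (p x).support, (p x).coeff k •
                    ((∑ h'' : G x₀, gfun 𝒯 p fr (undExt ι G x₀ h''
                        (undAct ι G (fun i => (fr x i)⁻¹ ^ k) s)))
                      - ∑ h' ∈ Finset.univ.erase (1 : G x₀),
                          gfun 𝒯 p fr (undExt ι G x₀ ((fr x x₀)⁻¹ ^ k * h')
                            (undAct ι G (fun i => (fr x i)⁻¹ ^ k) s))) := by
                    rw [← Finset.sum_sub_distrib]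
                    refine Finset.sum_congr rfl fun k _ => ?_
                    rw [← smul_sub]
                    congr 1
                    congr 1
                    exact ih x₀ (undAct ι G (fun i => (fr x i)⁻¹ ^ k) s)
                      (hmu1 x₀ _ hx₀s) hx₀s
            exact hR.symm
lemma keyE (x : ι) (t : UndIdx ι G) (hx : x ∉ t.1.1) :
    (∑ k ∈ (p x).support, (p x).coeff k •
        gfun 𝒯 p fr (undAct ι G (fun i => (fr x i)⁻¹ ^ k) t))
      = ∑ h : G x, gfun 𝒯 p fr (undExt ι G x h t) :=
  key 𝒯 p fr (mu (undExt ι G x 1 t) + 1) x t (Nat.lt_succ_self _) hx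

/-- The reduction, as a linear map on the free module. -/
noncomputable def piRed : (UndIdx ι G →₀ 𝒯) →ₗ[𝒯]
    ({q : UndIdx ι G // ∀ i ∈ q.1.1, q.1.2 i ≠ 1} →₀ 𝒯) :=
  Finsupp.linearCombination 𝒯 (gfun 𝒯 p fr)

lemma piRed_lam (σ : ∀ i, G i) (x : ι) (q : UndIdx ι G) (hx : x ∉ q.1.1) :
    piRed 𝒯 p fr (Finsupp.mapDomain (undAct ι G σ) (undLam ι G 𝒯 p fr x q)) = 0 := by
  rw [piRed, Finsupp.linearCombination_mapDomain, undLam, map_sub, map_sum, map_sum]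
  simp only [Finsupp.linearCombination_single, Function.comp_apply, one_smul]
  have h1 : ∀ k : ℕ, undAct ι G σ (undAct ι G (fun i => (fr x i)⁻¹ ^ k) q)
      = undAct ι G (fun i => (fr x i)⁻¹ ^ k) (undAct ι G σ q) :=
    fun k => act_comm σ _ q
  have h2 : ∀ h : G x, undAct ι G σ (undExt ι G x h q)
      = undExt ι G x (σ x * h) (undAct ι G σ q) :=
    fun h => act_ext σ q x h
  rw [show (∑ k ∈ (p x).support, (p x).coeff k •
        gfun 𝒯 p fr (undAct ι G σ (undAct ι G (fun i => (fr x i)⁻¹ ^ k) q)))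
      = ∑ k ∈ (p x).support, (p x).coeff k •
        gfun 𝒯 p fr (undAct ι G (fun i => (fr x i)⁻¹ ^ k) (undAct ι G σ q)) from
    Finset.sum_congr rfl fun k _ => congrArg _ (congrArg _ (h1 k))]
  rw [show (∑ h : G x, gfun 𝒯 p fr (undAct ι G σ (undExt ι G x h q)))
      = ∑ h : G x, gfun 𝒯 p fr (undExt ι G x h (undAct ι G σ q)) from by
    rw [show (∑ h : G x, gfun 𝒯 p fr (undAct ι G σ (undExt ι G x h q)))
        = ∑ h : G x, gfun 𝒯 p fr (undExt ι G x (σ x * h) (undAct ι G σ q)) from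
      Finset.sum_congr rfl fun h _ => congrArg _ (h2 h)]
    exact Fintype.sum_equiv (Equiv.mulLeft (σ x)) _ _ (fun h => by rw [Equiv.coe_mulLeft])]
  rw [keyE 𝒯 p fr x (undAct ι G σ q) hx, sub_self]

lemma rel_le_ker : undRel ι G 𝒯 p fr ≤ LinearMap.ker (piRed 𝒯 p fr) := by
  rw [undRel, Submodule.span_le]
  rintro v ⟨σ, x, q, hx, rfl⟩
  exact piRed_lam 𝒯 p fr σ x q hx

/-- The inverse map, from the free module on the claimed basis to the quotient. -/
noncomputable def jmap : ({q : UndIdx ι G // ∀ i ∈ q.1.1, q.1.2 i ≠ 1} →₀ 𝒯) →ₗ[𝒯]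
    UND ι G 𝒯 p fr :=
  Finsupp.linearCombination 𝒯
    (fun b => Submodule.Quotient.mk (Finsupp.single b.1 (1 : 𝒯)))

lemma jmap_gfun (n : ℕ) : ∀ q : UndIdx ι G, mu q < n →
    jmap 𝒯 p fr (gfun 𝒯 p fr q) = Submodule.Quotient.mk (Finsupp.single q (1 : 𝒯)) := by
  induction n with
  | zero => exact fun q hn => absurd hn (Nat.not_lt_zero _)
  | succ n ih =>
    intro q hn
    have hn' : mu q ≤ n := Nat.lt_succ_iff.mp hn
    by_cases hq : ∀ i ∈ q.1.1, q.1.2 i ≠ 1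
    · rw [gfun_spec_mem 𝒯 p fr hq, jmap, Finsupp.linearCombination_single, one_smul]
    · rw [gfun_spec_ne 𝒯 p fr hq]
      set x := (trivset q).min' (trivset_nonempty hq) with hxdef
      have hx : x ∈ trivset q := by rw [hxdef]; exact Finset.min'_mem _ _
      have hx1 : x ∈ q.1.1 := (mem_trivset.mp hx).1
      have hx2 : q.1.2 x = 1 := (mem_trivset.mp hx).2
      have he : undExt ι G x 1 (undDel x q) = q := ext_del q x hx1 hx2
      rw [map_sub, map_sum, map_sum]
      have hact : ∀ k ∈ (p x).support,
          jmap 𝒯 p fr ((p x).coeff k •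
            gfun 𝒯 p fr (undAct ι G (fun i => (fr x i)⁻¹ ^ k) (undDel x q)))
          = (p x).coeff k • (Submodule.Quotient.mk
              (Finsupp.single (undAct ι G (fun i => (fr x i)⁻¹ ^ k) (undDel x q)) (1 : 𝒯))
                : UND ι G 𝒯 p fr) := by
        intro k _
        rw [map_smul, ih _ (lt_of_lt_of_le (mu_del_act_lt _ q x hx1 hx2) hn')]
      have hext : ∀ (h : {h : G x // h ≠ 1}) (_ : h ∈ Finset.univ),
          jmap 𝒯 p fr (gfun 𝒯 p fr (undExt ι G x h.1 (undDel x q)))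
          = (Submodule.Quotient.mk
              (Finsupp.single (undExt ι G x h.1 (undDel x q)) (1 : 𝒯)) : UND ι G 𝒯 p fr) :=
        fun h _ => ih _ (lt_of_lt_of_le (mu_del_ext_lt q x hx1 hx2 h.2) hn')
      rw [Finset.sum_congr rfl hact, Finset.sum_congr rfl hext]
      -- the distribution relation holds in the quotient
      have hlam : (Submodule.Quotient.mk (undLam ι G 𝒯 p fr x (undDel x q))
          : UND ι G 𝒯 p fr) = 0 := by
        rw [Submodule.Quotient.mk_eq_zero]
        apply Submodule.subset_span
        refine ⟨1, x, undDel x q, Finset.notMem_erase _ _, ?_⟩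
        rw [show undAct ι G (1 : ∀ i, G i) = id from funext (fun r => act_one r),
          Finsupp.mapDomain_id]
      rw [undLam] at hlam
      rw [show (Submodule.Quotient.mk ((∑ k ∈ (p x).support,
            Finsupp.single (undAct ι G (fun i => (fr x i)⁻¹ ^ k) (undDel x q))
              ((p x).coeff k))
            - ∑ h : G x, Finsupp.single (undExt ι G x h (undDel x q)) (1 : 𝒯))
          : UND ι G 𝒯 p fr)
          = (∑ k ∈ (p x).support, (p x).coeff k • (Submodule.Quotient.mk
              (Finsupp.single (undAct ι G (fun i => (fr x i)⁻¹ ^ k) (undDel x q)) (1 : 𝒯))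
                : UND ι G 𝒯 p fr))
            - ∑ h : G x, (Submodule.Quotient.mk
              (Finsupp.single (undExt ι G x h (undDel x q)) (1 : 𝒯)) : UND ι G 𝒯 p fr) from by
        rw [← Submodule.mkQ_apply, map_sub, map_sum, map_sum]
        simp only [Submodule.mkQ_apply]
        congr 1
        refine Finset.sum_congr rfl fun k _ => ?_
        rw [← Finsupp.smul_single_one, Submodule.Quotient.mk_smul]] at hlam
      rw [sum_ne_one (fun h => (Submodule.Quotient.mk
        (Finsupp.single (undExt ι G x h (undDel x q)) (1 : 𝒯)) : UND ι G 𝒯 p fr)), he] at *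
      rw [sub_eq_zero] at hlam
      rw [hlam]
      abel
/-- The reduction map descends to the quotient. -/
noncomputable def piBar : UND ι G 𝒯 p fr →ₗ[𝒯]
    ({q : UndIdx ι G // ∀ i ∈ q.1.1, q.1.2 i ≠ 1} →₀ 𝒯) :=
  Submodule.liftQ _ (piRed 𝒯 p fr) (rel_le_ker 𝒯 p fr)

lemma comp1 : (piBar 𝒯 p fr).comp (jmap 𝒯 p fr) = LinearMap.id := by
  apply Finsupp.lhom_ext
  intro b c
  rw [LinearMap.comp_apply, jmap, Finsupp.linearCombination_single, map_smul, piBar,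
    Submodule.liftQ_apply, piRed, Finsupp.linearCombination_single, one_smul,
    gfun_spec_mem 𝒯 p fr b.2, LinearMap.id_apply, Subtype.coe_eta,
    Finsupp.smul_single_one]

lemma comp2 : (jmap 𝒯 p fr).comp (piBar 𝒯 p fr) = LinearMap.id := by
  apply Submodule.linearMap_qext
  apply Finsupp.lhom_ext
  intro q c
  rw [LinearMap.comp_apply, LinearMap.comp_apply, Submodule.mkQ_apply, piBar,
    Submodule.liftQ_apply, piRed, Finsupp.linearCombination_single, map_smul,
    jmap_gfun 𝒯 p fr (mu q + 1) q (Nat.lt_succ_self _), LinearMap.comp_apply,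
    Submodule.mkQ_apply, LinearMap.id_apply, ← Submodule.Quotient.mk_smul,
    Finsupp.smul_single_one]

lemma card_B : Nat.card {q : UndIdx ι G // ∀ i ∈ q.1.1, q.1.2 i ≠ 1}
    = ∏ i, Fintype.card (G i) := by
  classical
  have e2 : {q : UndIdx ι G // ∀ i ∈ q.1.1, q.1.2 i ≠ 1} ≃ (∀ i, G i) :=
    { toFun := fun q => q.1.1.2
      invFun := fun g =>
        ⟨⟨(Finset.univ.filter (fun i => g i ≠ 1), g), fun i hi => by
            simpa using hi⟩, fun i hi => by simpa using hi⟩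
      left_inv := fun q => by
        refine Subtype.ext (UndIdx.ext' ?_ (fun i => rfl))
        ext i
        simp only [Finset.mem_filter, Finset.mem_univ, true_and]
        constructor
        · intro hne
          by_contra hni
          exact hne (q.1.2 i hni)
        · exact fun hi => q.2 i hi
      right_inv := fun g => rfl }
  rw [Nat.card_congr e2, Nat.card_eq_fintype_card, Fintype.card_pi]
end gdef


/-- the universal norm distribution `𝒰_z` is a free `𝒯`-module of rank
`|G_z| = ∏_{x|z} |G_{z(x)}|`, a basis being given by the images of the symbols `[g z']`
whose `G_{z(x)}`-component is nontrivial for every `x | z'` (the set `B_0 ∩ A_z`). -/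
theorem stmt10 (ι : Type) [Fintype ι] [LinearOrder ι]
    (G : ι → Type) [∀ i, CommGroup (G i)] [∀ i, Fintype (G i)]
    (𝒪 : Type) [CommRing 𝒪] [IsDomain 𝒪]
    (𝒯 : Type) [CommRing 𝒯] [Algebra 𝒪 𝒯] [NoZeroSMulDivisors 𝒪 𝒯] [Module.Finite 𝒪 𝒯]
    (p : ι → Polynomial 𝒯) (fr : ι → ∀ i, G i) (hfr : ∀ x, fr x x = 1) :
    (∃ b : Module.Basis {q : UndIdx ι G // ∀ i ∈ q.1.1, q.1.2 i ≠ 1} 𝒯 (UND ι G 𝒯 p fr),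
        ∀ q, b q = Submodule.Quotient.mk (Finsupp.single q.1 (1 : 𝒯))) ∧
      Nat.card {q : UndIdx ι G // ∀ i ∈ q.1.1, q.1.2 i ≠ 1}
        = ∏ i, Fintype.card (G i) := by
  refine ⟨⟨Module.Basis.ofRepr (LinearEquiv.ofLinear (piBar 𝒯 p fr) (jmap 𝒯 p fr)
    (comp1 𝒯 p fr) (comp2 𝒯 p fr)), ?_⟩, card_B (G := G)⟩
  intro q
  rw [Module.Basis.coe_ofRepr]
  show (LinearEquiv.ofLinear (piBar 𝒯 p fr) (jmap 𝒯 p fr) (comp1 𝒯 p fr)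
    (comp2 𝒯 p fr)).symm (Finsupp.single q 1) = _
  rw [LinearEquiv.ofLinear_symm_apply, jmap, Finsupp.linearCombination_single, one_smul]
end

section
/- Let Λ = R[x_1,...,x_m] be a polynomial ring over a commutative ring R and let K^• be the Koszul complex of Λ with respect to the regular sequence x_1,...,x_m, i.e., the exterior algebra ⨁_{S⊆{1,...,m}} Λ e_S with differential d e_{x_i} = x_i. Let C^• ⊆ K^• be the graded R-submodule generated by elements of the form (∏_{i∈S''} x_i) e_{S'} for disjoint subsets S', S'' of {1,...,m}. Then C^• is a subcomplex of K^•, C^• is acyclic in nonzero degrees, and H^0(C^•) is a free R-module of rank 1 generated by the class of e_∅. -/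
open MvPolynomial

/-- Degree-`(−s)` component of the Koszul complex of `Λ = R[x_1,…,x_m]` with respect to
the regular sequence `x_1,…,x_m`: a copy of `Λ` for each exterior index set `S` with
`|S| = s` (the coefficient of `e_S`). -/
abbrev KosC (R : Type) [CommRing R] (m s : ℕ) : Type :=
  {S : Finset (Fin m) // S.card = s} → MvPolynomial (Fin m) R

/-- The Koszul differential `d e_{x_i} = x_i`, of degree `+1`, written on coefficient
functions: `(d f)(S) = ∑_{j∉S} (−1)^{#{j'∈S : j'<j}} x_j · f(S ∪ {j})`. -/
noncomputable def kosD (R : Type) [CommRing R] (m s : ℕ) :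
    KosC R m (s + 1) →ₗ[R] KosC R m s :=
  LinearMap.pi fun S =>
    ∑ j ∈ (S.1ᶜ).attach,
      ((-1 : ℤ) ^ ((S.1.filter (fun x => x < j.1)).card)) •
        ((LinearMap.mulLeft R (X j.1)).restrictScalars R ∘ₗ
          LinearMap.proj
            (⟨insert j.1 S.1, by
                rw [Finset.card_insert_of_notMem (Finset.mem_compl.mp j.2), S.2]⟩ :
              {S : Finset (Fin m) // S.card = s + 1}))

/-- The truncated Koszul subcomplex `C^•`: in each component, the `R`-span of the
squarefree monomials `∏_{i∈T} x_i` with `T` disjoint from the exterior index set `S`. -/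
noncomputable def kosTrunc (R : Type) [CommRing R] (m s : ℕ) : Submodule R (KosC R m s) :=
  Submodule.pi Set.univ fun S =>
    Submodule.span R
      {q : MvPolynomial (Fin m) R |
        ∃ T : Finset (Fin m), Disjoint T S.1 ∧ q = ∏ i ∈ T, X i}

variable (R : Type) [CommRing R] (m : ℕ)

/-- extension of a component function to all Finsets, junk value 0. -/
noncomputable def KosCext {s : ℕ} (f : KosC R m s) (U : Finset (Fin m)) :
    MvPolynomial (Fin m) R :=
  if h : U.card = s then f ⟨U, h⟩ else 0

lemma KosCext_apply {s : ℕ} (f : KosC R m s) (S : {S : Finset (Fin m) // S.card = s}) :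
    KosCext R m f S.1 = f S := by
  rw [KosCext, dif_pos S.2]

lemma kosD_apply {s : ℕ} (f : KosC R m (s+1)) (S : {S : Finset (Fin m) // S.card = s}) :
    kosD R m s f S =
      ∑ j ∈ S.1ᶜ, ((-1 : ℤ) ^ ((S.1.filter (fun x => x < j)).card)) •
        (X j * KosCext R m f (insert j S.1)) := by
  rw [kosD]
  rw [LinearMap.pi_apply, LinearMap.sum_apply]
  rw [← Finset.sum_attach (S.1ᶜ) (fun j => ((-1 : ℤ) ^ ((S.1.filter (fun x => x < j)).card)) •
        (X j * KosCext R m f (insert j S.1)))]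
  refine Finset.sum_congr rfl fun j _ => ?_
  rw [LinearMap.smul_apply, LinearMap.comp_apply]
  congr 1
  rw [LinearMap.restrictScalars_apply, LinearMap.mulLeft_apply]
  congr 1
  rw [LinearMap.proj_apply, KosCext]
  rw [dif_pos]
open MvPolynomial
section
variable (R : Type) [CommRing R] (m : ℕ)

/-- `i` is the minimum of the (nonempty) support of `α`. -/
def condH (i : Fin m) (α : Fin m →₀ ℕ) : Prop :=
  α i ≠ 0 ∧ ∀ j ∈ α.support, i ≤ j

instance (i : Fin m) (α : Fin m →₀ ℕ) : Decidable (condH m i α) :=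
  inferInstanceAs (Decidable (_ ∧ _))

noncomputable def Hcomp (i : Fin m) :
    MvPolynomial (Fin m) R →ₗ[R] MvPolynomial (Fin m) R :=
  (MvPolynomial.basisMonomials (Fin m) R).constr ℕ fun α =>
    if condH m i α then monomial (α - Finsupp.single i 1) 1 else 0

lemma Hcomp_monomial (i : Fin m) (α : Fin m →₀ ℕ) (c : R) :
    Hcomp R m i (monomial α c) =
      if condH m i α then monomial (α - Finsupp.single i 1) c else 0 := by
  have h1 : monomial α c = c • monomial α 1 := by
    rw [smul_monomial, smul_eq_mul, mul_one]
  rw [h1, map_smul]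
  have h2 : monomial α (1:R) = (MvPolynomial.basisMonomials (Fin m) R) α := by
    rw [coe_basisMonomials]
  rw [h2, Hcomp, Module.Basis.constr_basis]
  split
  · rw [smul_monomial, smul_eq_mul, mul_one]
  · rw [smul_zero]

lemma nonempty_of_card {s : ℕ} (S : {S : Finset (Fin m) // S.card = s + 1}) :
    S.1.Nonempty := Finset.card_pos.mp (by rw [S.2]; omega)

noncomputable def Hmap (s : ℕ) : KosC R m s →ₗ[R] KosC R m (s+1) :=
  LinearMap.pi fun S' =>
    Hcomp R m (S'.1.min' (nonempty_of_card m S')) ∘ₗ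
      LinearMap.proj
        (⟨S'.1.erase (S'.1.min' (nonempty_of_card m S')), by
            simp [Finset.card_erase_of_mem (Finset.min'_mem _ _), S'.2]⟩ :
          {S : Finset (Fin m) // S.card = s})

lemma Hmap_apply {s : ℕ} (f : KosC R m s) (S' : {S : Finset (Fin m) // S.card = s + 1}) :
    Hmap R m s f S' =
      Hcomp R m (S'.1.min' (nonempty_of_card m S'))
        (KosCext R m f (S'.1.erase (S'.1.min' (nonempty_of_card m S')))) := by
  rw [Hmap, LinearMap.pi_apply, LinearMap.comp_apply, LinearMap.proj_apply]
  congr 1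
  rw [KosCext, dif_pos]

/-- indicator Finsupp of a Finset -/
noncomputable def deltaF (T : Finset (Fin m)) : Fin m →₀ ℕ := ∑ i ∈ T, Finsupp.single i 1

lemma deltaF_apply (T : Finset (Fin m)) (j : Fin m) :
    deltaF m T j = if j ∈ T then 1 else 0 := by
  rw [deltaF, Finset.sum_apply']
  simp [Finsupp.single_apply]

lemma deltaF_support (T : Finset (Fin m)) : (deltaF m T).support = T := by
  ext j
  simp [Finsupp.mem_support_iff, deltaF_apply]

lemma prod_X_eq (T : Finset (Fin m)) :
    (∏ i ∈ T, X i : MvPolynomial (Fin m) R) = monomial (deltaF m T) 1 := by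
  classical
  induction T using Finset.induction with
  | empty => simp [deltaF]
  | @insert a s h ih =>
    rw [Finset.prod_insert h, ih]
    have hd : deltaF m (insert a s) = Finsupp.single a 1 + deltaF m s := by
      rw [deltaF, deltaF, Finset.sum_insert h]
    rw [hd, X, monomial_mul, one_mul]

lemma deltaF_sub_single {T : Finset (Fin m)} {i : Fin m} (hi : i ∈ T) :
    deltaF m T - Finsupp.single i 1 = deltaF m (T.erase i) := by
  ext j
  rw [Finsupp.tsub_apply, deltaF_apply, deltaF_apply, Finsupp.single_apply]
  by_cases hj : j = i
  · subst hj; simp [hi]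
  · have h2 : ¬ i = j := fun h => hj h.symm
    simp [h2, Finset.mem_erase, hj]

lemma condH_deltaF (i : Fin m) (T : Finset (Fin m)) :
    condH m i (deltaF m T) ↔ i ∈ T ∧ ∀ j ∈ T, i ≤ j := by
  rw [condH, deltaF_support]
  constructor
  · rintro ⟨h1, h2⟩
    refine ⟨?_, h2⟩
    by_contra h
    simp [deltaF_apply, h] at h1
  · rintro ⟨h1, h2⟩
    exact ⟨by simp [deltaF_apply, h1], h2⟩

lemma mem_kosTrunc {s : ℕ} (f : KosC R m s) :
    f ∈ kosTrunc R m s ↔ ∀ S : {S : Finset (Fin m) // S.card = s},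
      f S ∈ Submodule.span R
        {q : MvPolynomial (Fin m) R |
          ∃ T : Finset (Fin m), Disjoint T S.1 ∧ q = ∏ i ∈ T, X i} := by
  rw [kosTrunc, Submodule.mem_pi]
  simp

lemma X_mul_mem_span {S : Finset (Fin m)} {j : Fin m} (hj : j ∉ S)
    {p : MvPolynomial (Fin m) R}
    (hp : p ∈ Submodule.span R
      {q : MvPolynomial (Fin m) R |
        ∃ T : Finset (Fin m), Disjoint T (insert j S) ∧ q = ∏ i ∈ T, X i}) :
    X j * p ∈ Submodule.span R
      {q : MvPolynomial (Fin m) R |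
        ∃ T : Finset (Fin m), Disjoint T S ∧ q = ∏ i ∈ T, X i} := by
  induction hp using Submodule.span_induction with
  | mem q hq =>
    obtain ⟨T, hT, rfl⟩ := hq
    have hjT : j ∉ T := fun h => (Finset.disjoint_left.mp hT h) (Finset.mem_insert_self _ _)
    refine Submodule.subset_span ⟨insert j T, ?_, ?_⟩
    · rw [Finset.disjoint_left]
      intro a ha
      rcases Finset.mem_insert.mp ha with h | h
      · subst h; exact hj
      · exact fun hmem => (Finset.disjoint_left.mp hT h) (Finset.mem_insert_of_mem hmem)
    · rw [Finset.prod_insert hjT]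
  | zero => simp
  | add p q _ _ hp hq => rw [mul_add]; exact Submodule.add_mem _ hp hq
  | smul r p _ hp => rw [mul_smul_comm]; exact Submodule.smul_mem _ _ hp

lemma part1 (s : ℕ) (f : KosC R m (s + 1)) (hf : f ∈ kosTrunc R m (s + 1)) :
    kosD R m s f ∈ kosTrunc R m s := by
  rw [mem_kosTrunc] at hf ⊢
  intro S
  rw [kosD_apply]
  refine Submodule.sum_mem _ fun j hj => ?_
  have hjS : j ∉ S.1 := Finset.mem_compl.mp hj
  have hcard : (insert j S.1).card = s + 1 := by
    rw [Finset.card_insert_of_notMem hjS, S.2]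
  have : KosCext R m f (insert j S.1) = f ⟨insert j S.1, hcard⟩ := by
    rw [KosCext, dif_pos]
  rw [this]
  have hx := X_mul_mem_span R m hjS (hf ⟨insert j S.1, hcard⟩)
  exact zsmul_mem hx _

lemma Hcomp_mem_span (i : Fin m) (S' : Finset (Fin m))
    {p : MvPolynomial (Fin m) R}
    (hp : p ∈ Submodule.span R
      {q : MvPolynomial (Fin m) R |
        ∃ T : Finset (Fin m), Disjoint T (S'.erase i) ∧ q = ∏ i ∈ T, X i}) :
    Hcomp R m i p ∈ Submodule.span R
      {q : MvPolynomial (Fin m) R |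
        ∃ T : Finset (Fin m), Disjoint T S' ∧ q = ∏ i ∈ T, X i} := by
  induction hp using Submodule.span_induction with
  | mem q hq =>
    obtain ⟨T, hT, rfl⟩ := hq
    rw [prod_X_eq, Hcomp_monomial]
    split
    · next hc =>
      rw [condH_deltaF] at hc
      rw [deltaF_sub_single m hc.1, ← prod_X_eq]
      refine Submodule.subset_span ⟨T.erase i, ?_, rfl⟩
      rw [Finset.disjoint_left]
      intro a ha haS
      obtain ⟨hai, haT⟩ := Finset.mem_erase.mp ha
      exact (Finset.disjoint_left.mp hT haT) (Finset.mem_erase.mpr ⟨hai, haS⟩)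
    · exact Submodule.zero_mem _
  | zero => rw [map_zero]; exact Submodule.zero_mem _
  | add p q _ _ hp hq => rw [map_add]; exact Submodule.add_mem _ hp hq
  | smul r p _ hp => rw [map_smul]; exact Submodule.smul_mem _ _ hp


lemma Hmap_mem_trunc {s : ℕ} (f : KosC R m s) (hf : f ∈ kosTrunc R m s) :
    Hmap R m s f ∈ kosTrunc R m (s + 1) := by
  rw [mem_kosTrunc] at hf ⊢
  intro S'
  rw [Hmap_apply]
  set i := S'.1.min' (nonempty_of_card m S')
  have hcard : (S'.1.erase i).card = s := by
    have hi : i ∈ S'.1 := Finset.min'_mem _ _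
    simp [Finset.card_erase_of_mem hi, S'.2]
  have hext : KosCext R m f (S'.1.erase i) = f ⟨S'.1.erase i, hcard⟩ := by
    rw [KosCext, dif_pos]
  rw [hext]
  apply Hcomp_mem_span
  exact hf ⟨S'.1.erase i, hcard⟩

section helpers
variable {m : ℕ}

lemma X_mul_monomial' {R : Type} [CommRing R] (j : Fin m) (β : Fin m →₀ ℕ) (c : R) :
    (X j : MvPolynomial (Fin m) R) * monomial β c = monomial (Finsupp.single j 1 + β) c := by
  rw [X, monomial_mul, one_mul]

lemma single_add_tsub_cancel {α : Fin m →₀ ℕ} {i : Fin m} (h : α i ≠ 0) :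
    Finsupp.single i 1 + (α - Finsupp.single i 1) = α := by
  ext k
  rw [Finsupp.add_apply, Finsupp.tsub_apply, Finsupp.single_apply]
  by_cases hk : i = k
  · subst hk; simp; omega
  · simp [hk]

lemma add_single_tsub_cancel (α : Fin m →₀ ℕ) (i : Fin m) :
    (Finsupp.single i 1 + α) - Finsupp.single i 1 = α := by
  ext k
  rw [Finsupp.tsub_apply, Finsupp.add_apply, Finsupp.single_apply]
  omega

lemma condH_single_add_self (i : Fin m) (α : Fin m →₀ ℕ) :
    condH m i (Finsupp.single i 1 + α) ↔ ∀ k ∈ α.support, i ≤ k := by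
  rw [condH]
  constructor
  · rintro ⟨-, h2⟩ k hk
    refine h2 k ?_
    rw [Finsupp.mem_support_iff] at hk ⊢
    rw [Finsupp.add_apply]
    omega
  · intro h
    constructor
    · rw [Finsupp.add_apply, Finsupp.single_apply, if_pos rfl]
      omega
    · intro k hk
      rw [Finsupp.mem_support_iff, Finsupp.add_apply, Finsupp.single_apply] at hk
      by_cases hik : i = k
      · omega
      · refine h k ?_
        rw [Finsupp.mem_support_iff]
        simp [hik] at hk
        omega

lemma condH_single_add_of_lt {i j : Fin m} (hij : i < j) (α : Fin m →₀ ℕ) :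
    condH m i (Finsupp.single j 1 + α) ↔ condH m i α := by
  have hne : j ≠ i := ne_of_gt hij
  rw [condH, condH]
  constructor
  · rintro ⟨h1, h2⟩
    rw [Finsupp.add_apply, Finsupp.single_apply, if_neg hne, zero_add] at h1
    refine ⟨h1, fun k hk => h2 k ?_⟩
    rw [Finsupp.mem_support_iff] at hk ⊢
    rw [Finsupp.add_apply]
    omega
  · rintro ⟨h1, h2⟩
    constructor
    · rw [Finsupp.add_apply, Finsupp.single_apply, if_neg hne, zero_add]
      exact h1
    · intro k hk
      rw [Finsupp.mem_support_iff, Finsupp.add_apply, Finsupp.single_apply] at hk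
      by_cases hjk : j = k
      · subst hjk; exact le_of_lt hij
      · refine h2 k ?_
        rw [Finsupp.mem_support_iff]
        simp [hjk] at hk
        omega

lemma not_condH_single_add_of_gt {i j : Fin m} (hij : j < i) (α : Fin m →₀ ℕ) :
    ¬ condH m i (Finsupp.single j 1 + α) := by
  rintro ⟨-, h2⟩
  have : j ∈ (Finsupp.single j 1 + α).support := by
    rw [Finsupp.mem_support_iff, Finsupp.add_apply, Finsupp.single_apply, if_pos rfl]
    omega
  exact absurd (h2 j this) (not_le.mpr hij)

lemma single_add_tsub_comm {i j : Fin m} (hij : i ≠ j) (α : Fin m →₀ ℕ) :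
    Finsupp.single j 1 + (α - Finsupp.single i 1) =
      (Finsupp.single j 1 + α) - Finsupp.single i 1 := by
  ext k
  rw [Finsupp.add_apply, Finsupp.tsub_apply, Finsupp.tsub_apply, Finsupp.add_apply,
    Finsupp.single_apply, Finsupp.single_apply]
  split_ifs <;> omega
end helpers

lemma KosCext_single {s : ℕ} (S₀ : {S : Finset (Fin m) // S.card = s})
    (p : MvPolynomial (Fin m) R) (U : Finset (Fin m)) :
    KosCext R m (Pi.single S₀ p) U = if U = S₀.1 then p else 0 := by
  classical
  by_cases h : U.card = s
  · rw [KosCext, dif_pos h, Pi.single_apply]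
    by_cases hU : U = S₀.1
    · rw [if_pos hU, if_pos (Subtype.ext hU)]
    · rw [if_neg hU, if_neg (fun he => hU (congrArg Subtype.val he))]
  · rw [KosCext, dif_neg h, if_neg (by intro hU; exact h (by rw [hU]; exact S₀.2))]

lemma KosCext_Hmap {s : ℕ} (f : KosC R m s) (U : Finset (Fin m))
    (hU : U.card = s + 1) (hne : U.Nonempty) :
    KosCext R m (Hmap R m s f) U =
      Hcomp R m (U.min' hne) (KosCext R m f (U.erase (U.min' hne))) := by
  rw [KosCext, dif_pos hU]
  exact Hmap_apply R m f ⟨U, hU⟩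

lemma compl_erase_min' (S : Finset (Fin m)) {i : Fin m} (hi : i ∈ S) :
    (S.erase i)ᶜ = insert i Sᶜ := by
  ext a
  simp only [Finset.mem_compl, Finset.mem_erase, Finset.mem_insert, not_and]
  by_cases ha : a = i <;> simp [ha]

lemma filter_lt_min'_eq_empty (S : Finset (Fin m)) (hS : S.Nonempty) :
    (S.erase (S.min' hS)).filter (fun x => x < S.min' hS) = ∅ := by
  rw [Finset.filter_eq_empty_iff]
  intro x hx
  have := S.min'_le x (Finset.mem_of_mem_erase hx)
  omega

lemma filter_lt_of_lt_min' (S : Finset (Fin m)) (hS : S.Nonempty) {j : Fin m}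
    (hj : j < S.min' hS) : S.filter (fun x => x < j) = ∅ := by
  rw [Finset.filter_eq_empty_iff]
  intro x hx
  have := S.min'_le x hx
  omega

lemma filter_card_erase (S : Finset (Fin m)) (hS : S.Nonempty) {j : Fin m}
    (hj : S.min' hS < j) :
    (S.filter (fun x => x < j)).card =
      ((S.erase (S.min' hS)).filter (fun x => x < j)).card + 1 := by
  have hmem : S.min' hS ∈ S.filter (fun x => x < j) :=
    Finset.mem_filter.mpr ⟨S.min'_mem hS, hj⟩
  rw [Finset.filter_erase, Finset.card_erase_of_mem hmem]
  have : 0 < (S.filter (fun x => x < j)).card := Finset.card_pos.mpr ⟨S.min' hS, hmem⟩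
  omega

lemma min'_insert_of_lt {S : Finset (Fin m)} (hS : S.Nonempty) {j : Fin m}
    (hj : j < S.min' hS) :
    (insert j S).min' (Finset.insert_nonempty _ _) = j := by
  refine le_antisymm (Finset.min'_le _ _ (Finset.mem_insert_self _ _)) (Finset.le_min' _ _ _ ?_)
  intro y hy
  rcases Finset.mem_insert.mp hy with h | h
  · omega
  · have := S.min'_le y h; omega

lemma min'_insert_of_gt {S : Finset (Fin m)} (hS : S.Nonempty) {j : Fin m}
    (hj : S.min' hS < j) :
    (insert j S).min' (Finset.insert_nonempty _ _) = S.min' hS := by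
  refine le_antisymm (Finset.min'_le _ _ (Finset.mem_insert_of_mem (S.min'_mem hS)))
    (Finset.le_min' _ _ _ ?_)
  intro y hy
  rcases Finset.mem_insert.mp hy with h | h
  · omega
  · exact S.min'_le y h

lemma erase_insert_of_ne {S : Finset (Fin m)} {i j : Fin m} (hij : j ≠ i) (hiS : i ∈ S) :
    (insert j S).erase i = insert j (S.erase i) := by
  ext a
  simp only [Finset.mem_erase, Finset.mem_insert]
  by_cases ha : a = j <;> simp [ha, hij]

set_option maxHeartbeats 1000000 in
lemma core (s : ℕ) (S₀ : {S : Finset (Fin m) // S.card = s + 1}) (α : Fin m →₀ ℕ) (c : R) :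
    kosD R m (s+1) (Hmap R m (s+1) (Pi.single S₀ (monomial α c)))
      + Hmap R m s (kosD R m s (Pi.single S₀ (monomial α c)))
      = Pi.single S₀ (monomial α c) := by
  classical
  funext S
  have hS : S.1.Nonempty := nonempty_of_card m S
  set b : KosC R m (s+1) := Pi.single S₀ (monomial α c) with hb
  set i₀ := S.1.min' (nonempty_of_card m S) with hi₀
  have hi₀mem : i₀ ∈ S.1 := S.1.min'_mem _
  have hi₀c : i₀ ∉ S.1ᶜ := by simp [hi₀mem]
  have hcard_erase : (S.1.erase i₀).card = s := by
    simp [Finset.card_erase_of_mem hi₀mem, S.2]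
  -- B decomposition
  have hB : Hmap R m s (kosD R m s b) S =
      Hcomp R m i₀ (X i₀ * KosCext R m b S.1) +
      ∑ j ∈ S.1ᶜ, ((-1:ℤ) ^ (((S.1.erase i₀).filter (fun x => x < j)).card)) •
        Hcomp R m i₀ (X j * KosCext R m b (insert j (S.1.erase i₀))) := by
    rw [Hmap_apply]
    rw [show KosCext R m (kosD R m s b) (S.1.erase i₀) =
        kosD R m s b ⟨S.1.erase i₀, hcard_erase⟩ from by rw [KosCext, dif_pos hcard_erase]]
    rw [kosD_apply]
    have hcompl : (S.1.erase i₀)ᶜ = insert i₀ S.1ᶜ := compl_erase_min' m S.1 hi₀mem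
    rw [show (⟨S.1.erase i₀, hcard_erase⟩ : {S : Finset (Fin m) // S.card = s}).1
        = S.1.erase i₀ from rfl]
    rw [hcompl, Finset.sum_insert hi₀c, map_add, map_sum]
    congr 1
    · rw [filter_lt_min'_eq_empty m S.1 (nonempty_of_card m S), Finset.card_empty, pow_zero,
        one_smul, Finset.insert_erase hi₀mem]
    · refine Finset.sum_congr rfl fun j hj => ?_
      rw [map_zsmul]
  -- A pieces
  have hAterm : ∀ j ∈ S.1ᶜ,
      ((-1:ℤ) ^ ((S.1.filter (fun x => x < j)).card)) •
        (X j * KosCext R m (Hmap R m (s+1) b) (insert j S.1)) =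
      if hlt : j < i₀ then
        (X j * Hcomp R m j (KosCext R m b S.1))
      else
        ((-1:ℤ) ^ ((S.1.filter (fun x => x < j)).card)) •
          (X j * Hcomp R m i₀ (KosCext R m b (insert j (S.1.erase i₀)))) := by
    intro j hj
    have hjS : j ∉ S.1 := Finset.mem_compl.mp hj
    have hins : (insert j S.1).card = s + 1 + 1 := by
      rw [Finset.card_insert_of_notMem hjS, S.2]
    rw [KosCext_Hmap R m _ _ hins (Finset.insert_nonempty _ _)]
    by_cases hlt : j < i₀
    · rw [dif_pos hlt, min'_insert_of_lt m (nonempty_of_card m S) hlt,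
        Finset.erase_insert hjS,
        filter_lt_of_lt_min' m S.1 (nonempty_of_card m S) hlt, Finset.card_empty,
        pow_zero, one_smul]
    · have hne : j ≠ i₀ := fun h => hjS (h ▸ hi₀mem)
      have hgt : i₀ < j := lt_of_le_of_ne (not_lt.mp hlt) (Ne.symm hne)
      rw [dif_neg hlt, min'_insert_of_gt m (nonempty_of_card m S) hgt,
        erase_insert_of_ne m hne hi₀mem]
  rw [Pi.add_apply, kosD_apply, Finset.sum_congr rfl hAterm, hB]
  by_cases hSS : S = S₀
  · subst hSS
    have hbS : KosCext R m b S.1 = monomial α c := by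
      rw [hb, KosCext_single, if_pos rfl]
    have hbins : ∀ j ∈ S.1ᶜ, KosCext R m b (insert j (S.1.erase i₀)) = 0 := by
      intro j hj
      rw [hb, KosCext_single, if_neg]
      intro he
      exact (Finset.mem_compl.mp hj) (he ▸ Finset.mem_insert_self j _)
    have hhead : Hcomp R m i₀ (X i₀ * KosCext R m b S.1) =
        if ∀ k ∈ α.support, i₀ ≤ k then monomial α c else 0 := by
      rw [hbS, X_mul_monomial', Hcomp_monomial]
      by_cases hc : condH m i₀ (Finsupp.single i₀ 1 + α)
      · rw [if_pos hc, if_pos ((condH_single_add_self i₀ α).mp hc), add_single_tsub_cancel]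
      · rw [if_neg hc, if_neg (fun h => hc ((condH_single_add_self i₀ α).mpr h))]
    have htail : ∀ j ∈ S.1ᶜ,
        ((-1:ℤ) ^ (((S.1.erase i₀).filter (fun x => x < j)).card)) •
          Hcomp R m i₀ (X j * KosCext R m b (insert j (S.1.erase i₀))) = 0 := by
      intro j hj
      rw [hbins j hj, mul_zero, map_zero, smul_zero]
    have hA : ∀ j ∈ S.1ᶜ,
        (if _ : j < i₀ then (X j * Hcomp R m j (KosCext R m b S.1))
         else ((-1:ℤ) ^ ((S.1.filter (fun x => x < j)).card)) •
          (X j * Hcomp R m i₀ (KosCext R m b (insert j (S.1.erase i₀))))) =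
        if j < i₀ ∧ condH m j α then monomial α c else 0 := by
      intro j hj
      by_cases hlt : j < i₀
      · rw [dif_pos hlt, hbS, Hcomp_monomial, mul_ite, mul_zero, X_mul_monomial']
        by_cases hc : condH m j α
        · rw [if_pos hc, if_pos ⟨hlt, hc⟩, single_add_tsub_cancel hc.1]
        · rw [if_neg hc, if_neg (fun h => hc h.2)]
      · rw [dif_neg hlt, hbins j hj, map_zero, mul_zero, smul_zero,
          if_neg (fun h => hlt h.1)]
    rw [Finset.sum_congr rfl hA, Finset.sum_eq_zero htail, hhead, add_zero]
    rw [hb, Pi.single_apply, if_pos rfl]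
    by_cases hall : ∀ k ∈ α.support, i₀ ≤ k
    · rw [if_pos hall, Finset.sum_eq_zero, zero_add]
      intro j hj
      rw [if_neg]
      rintro ⟨hlt, hc⟩
      have := hall j (Finsupp.mem_support_iff.mpr hc.1)
      omega
    · rw [if_neg hall, add_zero]
      push_neg at hall
      obtain ⟨k, hk, hki⟩ := hall
      have hne : α.support.Nonempty := ⟨k, hk⟩
      set j₀ := α.support.min' hne with hj₀
      have hj₀supp : j₀ ∈ α.support := α.support.min'_mem hne
      have hj₀lt : j₀ < i₀ := lt_of_le_of_lt (α.support.min'_le k hk) hki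
      have hj₀c : j₀ ∈ S.1ᶜ := by
        rw [Finset.mem_compl]
        intro hmem
        have := S.1.min'_le j₀ hmem
        omega
      have hcond : ∀ j, (j < i₀ ∧ condH m j α) ↔ j = j₀ := by
        intro j
        constructor
        · rintro ⟨hlt, hc⟩
          have h1 : j ≤ j₀ := hc.2 j₀ hj₀supp
          have h2 : j₀ ≤ j := α.support.min'_le j (Finsupp.mem_support_iff.mpr hc.1)
          omega
        · rintro rfl
          exact ⟨hj₀lt, Finsupp.mem_support_iff.mp hj₀supp,
            fun l hl => α.support.min'_le l hl⟩
      calc ∑ j ∈ S.1ᶜ, (if j < i₀ ∧ condH m j α then monomial α c else 0)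
          = ∑ j ∈ S.1ᶜ, (if j = j₀ then monomial α c else (0 : MvPolynomial (Fin m) R)) :=
            Finset.sum_congr rfl (fun j _ => if_congr (hcond j) rfl rfl)
        _ = monomial α c := by rw [Finset.sum_ite_eq' S.1ᶜ j₀ (fun _ => monomial α c),
              if_pos hj₀c]
  · have hSS1 : S.1 ≠ S₀.1 := fun h => hSS (Subtype.ext h)
    have hbS : KosCext R m b S.1 = 0 := by rw [hb, KosCext_single, if_neg hSS1]
    have hhead : Hcomp R m i₀ (X i₀ * KosCext R m b S.1) = 0 := by
      rw [hbS, mul_zero, map_zero]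
    rw [hhead, hb, Pi.single_apply, if_neg (fun h => hSS h), zero_add,
      ← Finset.sum_add_distrib]
    refine Finset.sum_eq_zero fun j hj => ?_
    have hjS : j ∉ S.1 := Finset.mem_compl.mp hj
    by_cases hlt : j < i₀
    · rw [dif_pos hlt, hbS, map_zero, mul_zero, zero_add]
      by_cases hP : insert j (S.1.erase i₀) = S₀.1
      · rw [KosCext_single, if_pos hP, X_mul_monomial', Hcomp_monomial,
          if_neg (not_condH_single_add_of_gt hlt α), smul_zero]
      · rw [KosCext_single, if_neg hP, mul_zero, map_zero, smul_zero]
    · have hne : j ≠ i₀ := fun h => hjS (h ▸ hi₀mem)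
      have hgt : i₀ < j := lt_of_le_of_ne (not_lt.mp hlt) (Ne.symm hne)
      rw [dif_neg hlt]
      by_cases hP : insert j (S.1.erase i₀) = S₀.1
      · rw [KosCext_single, if_pos hP, Hcomp_monomial, X_mul_monomial', Hcomp_monomial]
        simp only [mul_ite, mul_zero, X_mul_monomial', condH_single_add_of_lt hgt α,
          ← single_add_tsub_comm (ne_of_lt hgt) α]
        rw [filter_card_erase m S.1 (nonempty_of_card m S) hgt, pow_succ, mul_comm,
          mul_smul, neg_one_smul]
        exact neg_add_cancel _
      · rw [KosCext_single, if_neg hP]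
        simp

lemma homotopyMap (s : ℕ) :
    (kosD R m (s+1)) ∘ₗ (Hmap R m (s+1)) + (Hmap R m s) ∘ₗ (kosD R m s)
      = (LinearMap.id : KosC R m (s+1) →ₗ[R] KosC R m (s+1)) := by
  classical
  apply LinearMap.pi_ext
  intro S₀ x
  induction x using MvPolynomial.induction_on' with
  | monomial α c =>
    simpa [LinearMap.add_apply, LinearMap.comp_apply] using core R m s S₀ α c
  | add p q hp hq =>
    rw [Pi.single_add, map_add, map_add, hp, hq]

lemma homotopy (s : ℕ) (f : KosC R m (s+1)) :
    kosD R m (s+1) (Hmap R m (s+1) f) + Hmap R m s (kosD R m s f) = f := by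
  have h := homotopyMap R m s
  rw [LinearMap.ext_iff] at h
  simpa [LinearMap.add_apply, LinearMap.comp_apply] using h f

lemma part2 (s : ℕ) (f : KosC R m (s + 1)) (hf : f ∈ kosTrunc R m (s + 1))
    (hdf : kosD R m s f = 0) :
    ∃ g : KosC R m (s + 2), g ∈ kosTrunc R m (s + 2) ∧ kosD R m (s + 1) g = f := by
  refine ⟨Hmap R m (s+1) f, Hmap_mem_trunc R m _ hf, ?_⟩
  have h := homotopy R m s f
  rw [hdf, map_zero, add_zero] at h
  exact h

noncomputable def ccLin : MvPolynomial (Fin m) R →ₗ[R] R where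
  toFun := constantCoeff
  map_add' p q := map_add _ p q
  map_smul' r p := by simp [constantCoeff_smul, smul_eq_mul]

@[simp] lemma ccLin_apply (p : MvPolynomial (Fin m) R) : ccLin R m p = constantCoeff p := rfl

def idxE : {S : Finset (Fin m) // S.card = 0} := ⟨∅, Finset.card_empty⟩

lemma idxE_unique (U : {S : Finset (Fin m) // S.card = 0}) : U = idxE m :=
  Subtype.ext (Finset.card_eq_zero.mp U.2)

lemma cc_kosD (g : KosC R m 1) (U : {S : Finset (Fin m) // S.card = 0}) :
    constantCoeff (kosD R m 0 g U) = 0 := by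
  rw [kosD_apply]
  rw [map_sum]
  refine Finset.sum_eq_zero fun j hj => ?_
  rw [map_zsmul, map_mul, constantCoeff_X, zero_mul, smul_zero]

lemma claim3 (p : MvPolynomial (Fin m) R)
    (hp : p ∈ Submodule.span R
      {q : MvPolynomial (Fin m) R |
        ∃ T : Finset (Fin m), Disjoint T (∅ : Finset (Fin m)) ∧ q = ∏ i ∈ T, X i}) :
    ∃ g ∈ kosTrunc R m 1, kosD R m 0 g =
      fun _ => p - MvPolynomial.C (constantCoeff p) := by
  classical
  induction hp using Submodule.span_induction with
  | mem q hq =>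
    obtain ⟨T, -, rfl⟩ := hq
    by_cases hT : T = ∅
    · subst hT
      refine ⟨0, Submodule.zero_mem _, ?_⟩
      rw [map_zero]
      funext U
      simp
    · have hTne : T.Nonempty := Finset.nonempty_of_ne_empty hT
      set j := T.min' hTne with hj
      have hcc : constantCoeff (∏ i ∈ T, (X i : MvPolynomial (Fin m) R)) = 0 := by
        rw [map_prod]
        exact Finset.prod_eq_zero (T.min'_mem hTne) (by simp)
      refine ⟨Pi.single ⟨{j}, Finset.card_singleton j⟩ (∏ i ∈ T.erase j, X i), ?_, ?_⟩
      · rw [mem_kosTrunc]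
        intro U
        rw [Pi.single_apply]
        split
        · next hU =>
          refine Submodule.subset_span ⟨T.erase j, ?_, rfl⟩
          have hU1 : U.1 = {j} := by rw [hU]
          rw [hU1]
          simp [Finset.disjoint_singleton_right]
        · exact Submodule.zero_mem _
      · funext U
        have hU : U.1 = ∅ := Finset.card_eq_zero.mp U.2
        rw [kosD_apply, hcc, map_zero, sub_zero]
        calc ∑ j' ∈ U.1ᶜ, ((-1:ℤ) ^ ((U.1.filter (fun x => x < j')).card)) •
              (X j' * KosCext R m (Pi.single ⟨{j}, Finset.card_singleton j⟩
                (∏ i ∈ T.erase j, X i)) (insert j' U.1))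
            = ∑ j' ∈ Finset.univ, (if j' = j then
                X j' * ∏ i ∈ T.erase j, X i else 0) := by
              rw [show U.1ᶜ = Finset.univ from by rw [hU]; exact Finset.compl_empty]
              refine Finset.sum_congr rfl fun j' _ => ?_
              rw [KosCext_single]
              rw [show U.1.filter (fun x => x < j') = ∅ from by rw [hU]; rfl,
                Finset.card_empty, pow_zero, one_smul]
              rw [show insert j' U.1 = {j'} from by rw [hU]; rfl]
              by_cases hjj : j' = j
              · rw [if_pos (by rw [hjj]), if_pos hjj]
              · rw [if_neg (by simpa using hjj), if_neg hjj, mul_zero]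
          _ = ∏ i ∈ T, X i := by
              rw [Finset.sum_ite_eq' Finset.univ j
                (fun j' => X j' * ∏ i ∈ T.erase j, X i), if_pos (Finset.mem_univ j)]
              exact Finset.mul_prod_erase T _ (T.min'_mem hTne)
  | zero =>
    refine ⟨0, Submodule.zero_mem _, ?_⟩
    rw [map_zero]
    funext U
    simp
  | add p q _ _ hp hq =>
    obtain ⟨g1, hg1, hd1⟩ := hp
    obtain ⟨g2, hg2, hd2⟩ := hq
    refine ⟨g1 + g2, Submodule.add_mem _ hg1 hg2, ?_⟩
    rw [map_add, hd1, hd2]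
    funext U
    simp only [Pi.add_apply, map_add]
    ring
  | smul r p _ hp =>
    obtain ⟨g, hg, hd⟩ := hp
    refine ⟨r • g, Submodule.smul_mem _ _ hg, ?_⟩
    rw [map_smul, hd]
    funext U
    simp only [Pi.smul_apply, constantCoeff_smul, smul_eq_mul, map_mul, smul_sub,
      smul_eq_C_mul, constantCoeff_C]

lemma part3 :
    ∃ φ :
        (kosTrunc R m 0 ⧸
            Submodule.comap (kosTrunc R m 0).subtype
              (Submodule.map (kosD R m 0) (kosTrunc R m 1)))
          ≃ₗ[R] R,
      φ (Submodule.Quotient.mk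
          ⟨(fun _ => 1 : KosC R m 0), by
            intro S _
            exact Submodule.subset_span ⟨∅, by simp⟩⟩) = 1 := by
  classical
  set N := Submodule.comap (kosTrunc R m 0).subtype
    (Submodule.map (kosD R m 0) (kosTrunc R m 1)) with hN
  set ψ : (kosTrunc R m 0) →ₗ[R] R :=
    (ccLin R m) ∘ₗ (LinearMap.proj (idxE m)) ∘ₗ (kosTrunc R m 0).subtype with hψ
  have hψ_apply : ∀ x : (kosTrunc R m 0), ψ x = constantCoeff (x.1 (idxE m)) := fun x => rfl
  have hN_le : N ≤ LinearMap.ker ψ := by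
    rintro ⟨x, hx⟩ hmem
    rw [hN, Submodule.mem_comap] at hmem
    obtain ⟨g, hg, hdg⟩ := hmem
    rw [LinearMap.mem_ker, hψ_apply]
    show constantCoeff (x (idxE m)) = 0
    have hxg : x (idxE m) = kosD R m 0 g (idxE m) := by
      rw [hdg]; rfl
    rw [hxg]
    exact cc_kosD R m g _
  have hker_le : LinearMap.ker ψ ≤ N := by
    rintro ⟨x, hx⟩ hk
    rw [LinearMap.mem_ker, hψ_apply] at hk
    replace hk : constantCoeff (x (idxE m)) = 0 := hk
    rw [hN, Submodule.mem_comap]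
    have hx0 := (mem_kosTrunc R m x).mp hx (idxE m)
    obtain ⟨g, hg, hdg⟩ := claim3 R m (x (idxE m)) hx0
    refine ⟨g, hg, ?_⟩
    rw [hdg]
    funext U
    show x (idxE m) - MvPolynomial.C (constantCoeff (x (idxE m))) = x U
    rw [hk, map_zero, sub_zero, idxE_unique m U]
  set l := Submodule.liftQ N ψ hN_le with hl
  have hinj : Function.Injective l := by
    rw [← LinearMap.ker_eq_bot]
    exact Submodule.ker_liftQ_eq_bot N ψ hN_le hker_le
  have hone : (fun _ => 1 : KosC R m 0) ∈ kosTrunc R m 0 := by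
    intro S _
    exact Submodule.subset_span ⟨∅, by simp⟩
  have hψone : ∀ h, ψ ⟨(fun _ => 1 : KosC R m 0), h⟩ = 1 := by
    intro h
    rw [hψ_apply]
    exact map_one constantCoeff
  have hsurj : Function.Surjective l := by
    intro r
    refine ⟨Submodule.Quotient.mk (r • ⟨(fun _ => 1 : KosC R m 0), hone⟩), ?_⟩
    rw [hl, Submodule.liftQ_apply, map_smul, hψone, smul_eq_mul, mul_one]
  refine ⟨LinearEquiv.ofBijective l ⟨hinj, hsurj⟩, ?_⟩
  change l _ = 1
  rw [hl, Submodule.liftQ_apply]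
  exact hψone _


/-- the truncated Koszul subcomplex `C^•` of the Koszul complex of the
regular sequence `(x_1,…,x_m)` in `R[x_1,…,x_m]` is a subcomplex, is acyclic in nonzero
degrees, and `H^0(C^•)` is a free `R`-module of rank one generated by the class of
`e_∅`. -/
theorem stmt12 (R : Type) [CommRing R] (m : ℕ) :
    (∀ (s : ℕ) (f : KosC R m (s + 1)), f ∈ kosTrunc R m (s + 1) →
        kosD R m s f ∈ kosTrunc R m s) ∧
      (∀ (s : ℕ) (f : KosC R m (s + 1)), f ∈ kosTrunc R m (s + 1) →
        kosD R m s f = 0 →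
          ∃ g : KosC R m (s + 2), g ∈ kosTrunc R m (s + 2) ∧ kosD R m (s + 1) g = f) ∧
      ∃ φ :
          (kosTrunc R m 0 ⧸
              Submodule.comap (kosTrunc R m 0).subtype
                (Submodule.map (kosD R m 0) (kosTrunc R m 1)))
            ≃ₗ[R] R,
        φ (Submodule.Quotient.mk
            ⟨(fun _ => 1 : KosC R m 0), by
              intro S _
              exact Submodule.subset_span ⟨∅, by simp⟩⟩) = 1 := by
  exact ⟨fun s f hf => part1 R m s f hf, fun s f hf hdf => part2 R m s f hf hdf, part3 R m⟩
end
end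

section
/- Anderson's resolution: let ℒ_z = ⨁_{y | z̄} 𝒜_{z/z(y)}[y], graded by deg[a,y] = −deg y, with differential d[a,y] = ∑_{x|y} ω(x,y) λ_{z(x)}[a, y/x], where ω(x,y) = (−1)^{#{x' | y : x' < x}} and λ_{z(x)}[a'] = p(x;Fr_x^{-1})[a'] − N_{z(x)}[z(x)a'] for a' not divisible by x (and 0 otherwise). Then the augmentation u: ℒ_z → 𝒰_z sending [a,1] ↦ [a] and [a,y] ↦ 0 for y ≠ 1 is a quasi-isomorphism: H^n(ℒ_z, d) = 0 for n ≠ 0 and H^0(ℒ_z, d) ≅ 𝒰_z. -/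
section
variable (ι : Type) [Fintype ι] [LinearOrder ι]
  (G : ι → Type) [∀ i, CommGroup (G i)] [∀ i, Fintype (G i)]
  (𝒯 : Type) [CommRing 𝒯] (p : ι → Polynomial 𝒯) (fr : ι → ∀ i, G i)

/-- Basis symbols `[a, y]` of the degree-`(−n)` component `ℒ_z^{−n} = ⨁_{deg y = n} 𝒜_{z/z(y)}[y]`
of Anderson's resolution: `y` a squarefree divisor of `z̄` of degree `n` and `a` a symbol
of `𝒜_{z/z(y)}` (a stalk disjoint from `y` together with a group element). -/
def AndIdx (n : ℕ) : Type :=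
  {t : Finset ι × UndIdx ι G // t.1.card = n ∧ Disjoint t.1 t.2.1.1}

/-- The differential `d [a,y] = ∑_{x∣y} ω(x,y) λ_{z(x)} [a, y/x]` of Anderson's
resolution, from the degree-`(−n−1)` component to the degree-`(−n)` component, where
`ω(x,y) = (−1)^{#{x'∣y : x'<x}}` and
`λ_{z(x)}[a] = p(x;Fr_x^{-1})[a] − N_{z(x)}[z(x)a]`. -/
noncomputable def andD (n : ℕ) :
    (AndIdx ι G (n + 1) →₀ 𝒯) →ₗ[𝒯] (AndIdx ι G n →₀ 𝒯) :=
  Finsupp.lsum 𝒯 fun t => LinearMap.toSpanSingleton 𝒯 _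
    (∑ x ∈ t.1.1.attach,
      ((-1 : ℤ) ^ ((t.1.1.filter (fun x' => x' < x.1)).card)) •
        ((∑ k ∈ (p x.1).support,
            Finsupp.single
              (⟨(t.1.1.erase x.1, undAct ι G (fun i => (fr x.1 i)⁻¹ ^ k) t.1.2), by
                refine ⟨?_, ?_⟩
                · simp [Finset.card_erase_of_mem x.2, t.2.1]
                · exact t.2.2.mono_left (Finset.erase_subset _ _)⟩ : AndIdx ι G n)
              ((p x.1).coeff k))
          - ∑ h : G x.1,
              Finsupp.single
                (⟨(t.1.1.erase x.1, undExt ι G x.1 h t.1.2), by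
                  refine ⟨?_, ?_⟩
                  · simp [Finset.card_erase_of_mem x.2, t.2.1]
                  · show Disjoint (t.1.1.erase x.1) (insert x.1 t.1.2.1.1)
                    rw [Finset.disjoint_insert_right]
                    exact ⟨Finset.notMem_erase _ _,
                      t.2.2.mono_left (Finset.erase_subset _ _)⟩⟩ : AndIdx ι G n)
                (1 : 𝒯)))

/-- The augmentation `u : ℒ_z^0 → 𝒰_z`, `[a, 1] ↦ [a]`. -/
noncomputable def andU : (AndIdx ι G 0 →₀ 𝒯) →ₗ[𝒯] UND ι G 𝒯 p fr :=
  Finsupp.lsum 𝒯 fun t => LinearMap.toSpanSingleton 𝒯 _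
    (Submodule.Quotient.mk (Finsupp.single t.1.2 (1 : 𝒯)))

end
section Dev
set_option linter.unusedSectionVars false
open Finsupp
open scoped Classical

variable {ι : Type} [Fintype ι] [LinearOrder ι]
  {G : ι → Type} [∀ i, CommGroup (G i)] [∀ i, Fintype (G i)]
  {𝒯 : Type} [CommRing 𝒯] {p : ι → Polynomial 𝒯} {fr : ι → ∀ i, G i}

namespace AndRes

theorem undIdx_ext {a b : UndIdx ι G} (h1 : a.1.1 = b.1.1) (h2 : a.1.2 = b.1.2) : a = b :=
  Subtype.ext (Prod.ext h1 h2)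

theorem andIdx_ext {n : ℕ} {a b : AndIdx ι G n} (h1 : a.1.1 = b.1.1)
    (h2 : a.1.2.1.1 = b.1.2.1.1) (h3 : a.1.2.1.2 = b.1.2.1.2) : a = b :=
  Subtype.ext (Prod.ext h1 (Subtype.ext (Prod.ext h2 h3)))

theorem notstalk {n : ℕ} (t : AndIdx ι G n) {x : ι} (hx : x ∈ t.1.1) : x ∉ t.1.2.1.1 :=
  Finset.disjoint_left.mp t.2.2 hx

theorem stalk_one {n : ℕ} (t : AndIdx ι G n) {x : ι} (hx : x ∈ t.1.1) : t.1.2.1.2 x = 1 :=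
  t.1.2.2 x (notstalk t hx)

theorem noty {n : ℕ} (t : AndIdx ι G n) {x : ι} (hx : x ∈ t.1.2.1.1) : x ∉ t.1.1 :=
  Finset.disjoint_right.mp t.2.2 hx

theorem undAct_undAct (σ τ : ∀ i, G i) (q : UndIdx ι G) :
    undAct ι G σ (undAct ι G τ q) = undAct ι G (fun i => σ i * τ i) q := by
  refine undIdx_ext rfl (funext fun i => ?_)
  show (if i ∈ q.1.1 then σ i * (if i ∈ q.1.1 then τ i * q.1.2 i else 1) else 1)
      = (if i ∈ q.1.1 then (σ i * τ i) * q.1.2 i else 1)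
  by_cases h : i ∈ q.1.1 <;> simp [h, mul_assoc]

theorem undAct_comm (σ τ : ∀ i, G i) (q : UndIdx ι G) :
    undAct ι G σ (undAct ι G τ q) = undAct ι G τ (undAct ι G σ q) := by
  rw [undAct_undAct, undAct_undAct]
  exact congrArg (fun s => undAct ι G s q) (funext fun i => mul_comm _ _)

theorem undAct_one (q : UndIdx ι G) : undAct ι G (fun _ => 1) q = q := by
  refine undIdx_ext rfl (funext fun i => ?_)
  show (if i ∈ q.1.1 then 1 * q.1.2 i else 1) = q.1.2 i
  by_cases h : i ∈ q.1.1
  · simp [h]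
  · simp [h, (q.2 i h).symm]

theorem undAct_undExt (σ : ∀ i, G i) (x : ι) (h : G x) (q : UndIdx ι G) :
    undAct ι G σ (undExt ι G x h q) = undExt ι G x (σ x * h) (undAct ι G σ q) := by
  refine undIdx_ext rfl (funext fun i => ?_)
  show (if i ∈ insert x q.1.1 then σ i * (Function.update q.1.2 x h i) else 1)
      = Function.update (fun j => if j ∈ q.1.1 then σ j * q.1.2 j else 1) x (σ x * h) i
  rcases eq_or_ne i x with rfl | hne
  · simp
  · rw [Function.update_of_ne hne, Function.update_of_ne hne]
    simp [Finset.mem_insert, hne]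

theorem undExt_undExt {x x' : ι} (hne : x ≠ x') (h : G x) (h' : G x') (q : UndIdx ι G) :
    undExt ι G x h (undExt ι G x' h' q) = undExt ι G x' h' (undExt ι G x h q) := by
  refine undIdx_ext ?_ ?_
  · show insert x (insert x' q.1.1) = insert x' (insert x q.1.1)
    exact Finset.insert_comm x x' q.1.1
  · show Function.update (Function.update q.1.2 x' h') x h
        = Function.update (Function.update q.1.2 x h) x' h'
    exact (Function.update_comm hne h h' q.1.2).symm

/-- `[g z']` with `x ∈ y` moved out of `y`, acted by `fr x ^ (-k)`. -/
def tPel (fr : ι → ∀ i, G i) {n : ℕ} (t : AndIdx ι G (n+1)) (x : ι) (hx : x ∈ t.1.1)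
    (k : ℕ) : AndIdx ι G n :=
  ⟨(t.1.1.erase x, undAct ι G (fun i => (fr x i)⁻¹ ^ k) t.1.2), by
    refine ⟨?_, ?_⟩
    · simp [Finset.card_erase_of_mem hx, t.2.1]
    · exact t.2.2.mono_left (Finset.erase_subset _ _)⟩

/-- `[g z']` with `x ∈ y` moved into the stalk with component `h`. -/
def tNel {n : ℕ} (t : AndIdx ι G (n+1)) (x : ι) (hx : x ∈ t.1.1) (h : G x) : AndIdx ι G n :=
  ⟨(t.1.1.erase x, undExt ι G x h t.1.2), by
    refine ⟨?_, ?_⟩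
    · simp [Finset.card_erase_of_mem hx, t.2.1]
    · show Disjoint (t.1.1.erase x) (insert x t.1.2.1.1)
      rw [Finset.disjoint_insert_right]
      exact ⟨Finset.notMem_erase _ _, t.2.2.mono_left (Finset.erase_subset _ _)⟩⟩

def eps {n : ℕ} (t : AndIdx ι G n) (x : ι) : ℤ :=
  (-1) ^ ((t.1.1.filter (fun x' => x' < x)).card)

/-- The block `λ_{z(x)}` of `d` applied to basis element `t`, `x ∈ y`. -/
noncomputable def lamB (p : ι → Polynomial 𝒯) (fr : ι → ∀ i, G i) {n : ℕ}
    (t : AndIdx ι G (n+1)) (x : ι) : AndIdx ι G n →₀ 𝒯 :=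
  if hx : x ∈ t.1.1 then
    (∑ k ∈ (p x).support, single (tPel fr t x hx k) ((p x).coeff k))
      - ∑ h : G x, single (tNel t x hx h) 1
  else 0

/-- The `h = 1` part of the norm block. -/
noncomputable def nB (𝒯 : Type) [CommRing 𝒯] {n : ℕ} (t : AndIdx ι G (n+1)) (x : ι) :
    AndIdx ι G n →₀ 𝒯 :=
  if hx : x ∈ t.1.1 then single (tNel t x hx 1) 1 else 0

theorem andD_single {n : ℕ} (t : AndIdx ι G (n+1)) (c : 𝒯) :
    andD ι G 𝒯 p fr n (single t c) = c • ∑ x ∈ t.1.1, eps t x • lamB p fr t x := by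
  rw [andD, Finsupp.lsum_single, LinearMap.toSpanSingleton_apply]
  congr 1
  rw [← Finset.sum_attach t.1.1 (fun x => eps t x • lamB p fr t x)]
  refine Finset.sum_congr rfl fun x _ => ?_
  rw [lamB, dif_pos x.2]
  rfl

end AndRes
end Dev
section Dev2
set_option linter.unusedSectionVars false
open Finsupp
open scoped Classical

variable {ι : Type} [Fintype ι] [LinearOrder ι]
  {G : ι → Type} [∀ i, CommGroup (G i)] [∀ i, Fintype (G i)]
  {𝒯 : Type} [CommRing 𝒯] {p : ι → Polynomial 𝒯} {fr : ι → ∀ i, G i}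

namespace AndRes

/-- The `h = 1` part of the differential (single-term Koszul differential). -/
noncomputable def d1 (𝒯 : Type) [CommRing 𝒯] (n : ℕ) :
    (AndIdx ι G (n+1) →₀ 𝒯) →ₗ[𝒯] (AndIdx ι G n →₀ 𝒯) :=
  Finsupp.lsum 𝒯 fun t => LinearMap.toSpanSingleton 𝒯 _ (-∑ x ∈ t.1.1, eps t x • nB 𝒯 t x)

theorem d1_single {n : ℕ} (t : AndIdx ι G (n+1)) (c : 𝒯) :
    d1 𝒯 n (single t c) = c • (-∑ x ∈ t.1.1, eps t x • nB 𝒯 t x) := by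
  rw [d1, Finsupp.lsum_single, LinearMap.toSpanSingleton_apply]

/-- Candidates for the contracting homotopy: stalk elements with trivial component
lying below all of `y`. -/
noncomputable def TT {n : ℕ} (t : AndIdx ι G n) : Finset ι :=
  t.1.2.1.1.filter (fun x => t.1.2.1.2 x = 1 ∧ ∀ x' ∈ t.1.1, x < x')

theorem TT_stalk {n : ℕ} {t : AndIdx ι G n} {x : ι} (hx : x ∈ TT t) : x ∈ t.1.2.1.1 :=
  (Finset.mem_filter.mp hx).1

theorem TT_one {n : ℕ} {t : AndIdx ι G n} {x : ι} (hx : x ∈ TT t) : t.1.2.1.2 x = 1 :=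
  (Finset.mem_filter.mp hx).2.1

theorem TT_lt {n : ℕ} {t : AndIdx ι G n} {x : ι} (hx : x ∈ TT t) :
    ∀ x' ∈ t.1.1, x < x' := (Finset.mem_filter.mp hx).2.2

/-- Move `x ∈ TT t` from the stalk into `y`. -/
def toY {n : ℕ} (t : AndIdx ι G n) (x : ι) (hx : x ∈ TT t) : AndIdx ι G (n+1) :=
  ⟨(insert x t.1.1, ⟨(t.1.2.1.1.erase x, t.1.2.1.2), fun i hi => by
      rcases eq_or_ne i x with rfl | hne
      · exact TT_one hx
      · exact t.1.2.2 i fun him => hi (Finset.mem_erase.mpr ⟨hne, him⟩)⟩), by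
    refine ⟨?_, ?_⟩
    · rw [Finset.card_insert_of_notMem (noty t (TT_stalk hx)), t.2.1]
    · rw [Finset.disjoint_insert_left]
      exact ⟨Finset.notMem_erase _ _, t.2.2.mono_right (Finset.erase_subset _ _)⟩⟩

/-- The contracting homotopy on basis elements. -/
noncomputable def shaux (𝒯 : Type) [CommRing 𝒯] {n : ℕ} (t : AndIdx ι G n) :
    AndIdx ι G (n+1) →₀ 𝒯 :=
  if h : (TT t).Nonempty then -single (toY t ((TT t).min' h) (Finset.min'_mem _ h)) 1 else 0

noncomputable def sh (𝒯 : Type) [CommRing 𝒯] (n : ℕ) :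
    (AndIdx ι G n →₀ 𝒯) →ₗ[𝒯] (AndIdx ι G (n+1) →₀ 𝒯) :=
  Finsupp.lsum 𝒯 fun t => LinearMap.toSpanSingleton 𝒯 _ (shaux 𝒯 t)

theorem sh_single {n : ℕ} (t : AndIdx ι G n) (c : 𝒯) :
    sh 𝒯 n (single t c) = c • shaux 𝒯 t := by
  rw [sh, Finsupp.lsum_single, LinearMap.toSpanSingleton_apply]

/-- The measure: `(C+1)·(#y + #S) − #{i ∈ S | g i ≠ 1}`. -/
noncomputable def mu {n : ℕ} (t : AndIdx ι G n) : ℕ :=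
  (Fintype.card ι + 1) * (t.1.1.card + t.1.2.1.1.card)
    - (t.1.2.1.1.filter (fun i => t.1.2.1.2 i ≠ 1)).card

noncomputable def FF (𝒯 : Type) [CommRing 𝒯] (n m : ℕ) :
    Submodule 𝒯 (AndIdx ι G n →₀ 𝒯) :=
  Finsupp.supported 𝒯 𝒯 {t : AndIdx ι G n | mu t ≤ m}

theorem nu_le {n : ℕ} (t : AndIdx ι G n) :
    (t.1.2.1.1.filter (fun i => t.1.2.1.2 i ≠ 1)).card ≤ t.1.2.1.1.card :=
  Finset.card_le_card (Finset.filter_subset _ _)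

theorem stalkcard_le {n : ℕ} (t : AndIdx ι G n) : t.1.2.1.1.card ≤ Fintype.card ι :=
  Finset.card_le_univ _

theorem mu_lb {n : ℕ} (t : AndIdx ι G n) :
    (Fintype.card ι + 1) * (t.1.1.card + t.1.2.1.1.card) - Fintype.card ι ≤ mu t :=
  Nat.sub_le_sub_left ((nu_le t).trans (stalkcard_le t)) _

theorem mu_ub {n : ℕ} (t : AndIdx ι G n) :
    mu t ≤ (Fintype.card ι + 1) * (Fintype.card ι + Fintype.card ι) :=
  (Nat.sub_le _ _).trans (Nat.mul_le_mul_left _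
    (Nat.add_le_add (Finset.card_le_univ _) (Finset.card_le_univ _)))

end AndRes
end Dev2
section Dev3
set_option linter.unusedSectionVars false
open Finsupp
open scoped Classical

variable {ι : Type} [Fintype ι] [LinearOrder ι]
  {G : ι → Type} [∀ i, CommGroup (G i)] [∀ i, Fintype (G i)]
  {𝒯 : Type} [CommRing 𝒯] {p : ι → Polynomial 𝒯} {fr : ι → ∀ i, G i}

namespace AndRes

theorem mu_tPel {n : ℕ} (t : AndIdx ι G (n+1)) {x : ι} (hx : x ∈ t.1.1) (k : ℕ) :
    mu (tPel fr t x hx k) < mu t := by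
  have he : (tPel fr t x hx k).1.1.card = n := (tPel fr t x hx k).2.1
  have hy : t.1.1.card = n + 1 := t.2.1
  have hs : (tPel fr t x hx k).1.2.1.1.card = t.1.2.1.1.card := rfl
  have b1 : ((tPel fr t x hx k).1.2.1.1.filter
      (fun i => (tPel fr t x hx k).1.2.1.2 i ≠ 1)).card ≤ Fintype.card ι :=
    (nu_le _).trans (stalkcard_le _)
  have b2 : (t.1.2.1.1.filter (fun i => t.1.2.1.2 i ≠ 1)).card ≤ Fintype.card ι :=
    (nu_le _).trans (stalkcard_le _)
  have key : (Fintype.card ι + 1) * (n + 1 + t.1.2.1.1.card)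
      = (Fintype.card ι + 1) * (n + t.1.2.1.1.card) + (Fintype.card ι + 1) := by ring
  simp only [mu]
  rw [he, hy, hs]
  omega

theorem mu_tNel {n : ℕ} (t : AndIdx ι G (n+1)) {x : ι} (hx : x ∈ t.1.1) {h : G x}
    (hh : h ≠ 1) : mu (tNel t x hx h) < mu t := by
  have he : (tNel t x hx h).1.1.card = n := (tNel t x hx h).2.1
  have hy : t.1.1.card = n + 1 := t.2.1
  have hxS : x ∉ t.1.2.1.1 := notstalk t hx
  have hs : (tNel t x hx h).1.2.1.1.card = t.1.2.1.1.card + 1 := by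
    show (insert x t.1.2.1.1).card = _
    exact Finset.card_insert_of_notMem hxS
  have hnu : ((tNel t x hx h).1.2.1.1.filter
      (fun i => (tNel t x hx h).1.2.1.2 i ≠ 1)).card
      = (t.1.2.1.1.filter (fun i => t.1.2.1.2 i ≠ 1)).card + 1 := by
    show ((insert x t.1.2.1.1).filter (fun i => Function.update t.1.2.1.2 x h i ≠ 1)).card = _
    rw [Finset.filter_insert, if_pos (by simp [hh])]
    rw [Finset.filter_congr (fun i hi => by
      have hne : i ≠ x := fun e => hxS (e ▸ hi)
      rw [Function.update_of_ne hne])]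
    exact Finset.card_insert_of_notMem fun hm => hxS (Finset.mem_of_mem_filter _ hm)
  have b2 : (t.1.2.1.1.filter (fun i => t.1.2.1.2 i ≠ 1)).card ≤ Fintype.card ι :=
    (nu_le _).trans (stalkcard_le _)
  have key : (Fintype.card ι + 1) * (n + (t.1.2.1.1.card + 1))
      = (Fintype.card ι + 1) * (n + 1 + t.1.2.1.1.card) := by ring
  have key2 : (Fintype.card ι + 1) * 1 ≤ (Fintype.card ι + 1) * (n + 1 + t.1.2.1.1.card) :=
    Nat.mul_le_mul_left _ (by omega)
  simp only [mu]
  rw [he, hy, hs, hnu]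
  omega

theorem mu_toY {n : ℕ} (t : AndIdx ι G n) (x : ι) (hx : x ∈ TT t) :
    mu (toY t x hx) = mu t := by
  have he : (toY t x hx).1.1.card = n + 1 := (toY t x hx).2.1
  have hy : t.1.1.card = n := t.2.1
  have hxS : x ∈ t.1.2.1.1 := TT_stalk hx
  have hs : t.1.2.1.1.card = (toY t x hx).1.2.1.1.card + 1 := by
    show _ = (t.1.2.1.1.erase x).card + 1
    exact (Finset.card_erase_add_one hxS).symm
  have hnu : ((toY t x hx).1.2.1.1.filter (fun i => (toY t x hx).1.2.1.2 i ≠ 1)).card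
      = (t.1.2.1.1.filter (fun i => t.1.2.1.2 i ≠ 1)).card := by
    show ((t.1.2.1.1.erase x).filter (fun i => t.1.2.1.2 i ≠ 1)).card = _
    rw [Finset.filter_erase, Finset.erase_eq_of_notMem]
    simp [TT_one hx]
  have key : (Fintype.card ι + 1) * (n + 1 + (toY t x hx).1.2.1.1.card)
      = (Fintype.card ι + 1) * (n + ((toY t x hx).1.2.1.1.card + 1)) := by ring
  simp only [mu]
  rw [he, hy, hs, hnu]
  omega

end AndRes
end Dev3
section Dev4
set_option linter.unusedSectionVars false
open Finsupp
open scoped Classical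

variable {ι : Type} [Fintype ι] [LinearOrder ι]
  {G : ι → Type} [∀ i, CommGroup (G i)] [∀ i, Fintype (G i)]
  {𝒯 : Type} [CommRing 𝒯] {p : ι → Polynomial 𝒯} {fr : ι → ∀ i, G i}

namespace AndRes

theorem map_supported {A B : Type} (ℱ : (A →₀ 𝒯) →ₗ[𝒯] (B →₀ 𝒯)) {s : Set A} {s' : Set B}
    (h : ∀ t ∈ s, ℱ (single t 1) ∈ Finsupp.supported 𝒯 𝒯 s') {f : A →₀ 𝒯}
    (hf : f ∈ Finsupp.supported 𝒯 𝒯 s) :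
    ℱ f ∈ Finsupp.supported 𝒯 𝒯 s' := by
  have hf' : ∀ a ∈ f.support, a ∈ s := fun a ha => hf ha
  rw [← Finsupp.sum_single f, Finsupp.sum, map_sum]
  refine Submodule.sum_mem _ fun a ha => ?_
  have : single a (f a) = (f a) • single a (1 : 𝒯) := by
    rw [Finsupp.smul_single, smul_eq_mul, mul_one]
  rw [this, map_smul]
  exact Submodule.smul_mem _ _ (h a (hf' a ha))

theorem lamB_add_nB {n : ℕ} (t : AndIdx ι G (n+1)) {x : ι} (hx : x ∈ t.1.1) :
    lamB p fr t x + nB 𝒯 t x ∈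
      Finsupp.supported 𝒯 𝒯 {t' : AndIdx ι G n | mu t' < mu t} := by
  rw [lamB, nB, dif_pos hx, dif_pos hx,
    ← Finset.sum_erase_add Finset.univ _ (Finset.mem_univ (1 : G x))]
  have : ((∑ k ∈ (p x).support, single (tPel fr t x hx k) ((p x).coeff k)) -
        ((∑ h ∈ Finset.univ.erase (1 : G x), single (tNel t x hx h) (1:𝒯))
          + single (tNel t x hx 1) (1:𝒯))) + single (tNel t x hx 1) (1:𝒯)
      = (∑ k ∈ (p x).support, single (tPel fr t x hx k) ((p x).coeff k)) -
        ∑ h ∈ Finset.univ.erase (1 : G x), single (tNel t x hx h) (1:𝒯) := by abel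
  rw [this]
  refine sub_mem (Submodule.sum_mem _ fun k _ => ?_) (Submodule.sum_mem _ fun h hh => ?_)
  · exact Finsupp.single_mem_supported 𝒯 _ (mu_tPel t hx k)
  · exact Finsupp.single_mem_supported 𝒯 _ (mu_tNel t hx (Finset.ne_of_mem_erase hh))

theorem shaux_supported {n : ℕ} (t : AndIdx ι G n) :
    shaux 𝒯 t ∈ Finsupp.supported 𝒯 𝒯 {t' : AndIdx ι G (n+1) | mu t' ≤ mu t} := by
  rw [shaux]
  split
  · refine neg_mem (Finsupp.single_mem_supported 𝒯 _ ?_)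
    exact le_of_eq (mu_toY _ _ _)
  · exact zero_mem _

theorem sh_mem_FF {n m : ℕ} {f : AndIdx ι G n →₀ 𝒯} (hf : f ∈ FF 𝒯 n m) :
    sh 𝒯 n f ∈ FF 𝒯 (n+1) m := by
  refine map_supported _ (fun t ht => ?_) hf
  rw [sh_single, one_smul]
  exact Finsupp.supported_mono (fun t' (ht' : mu t' ≤ mu t) => le_trans ht' ht)
    (shaux_supported t)

theorem R_mem_FF {n m : ℕ} {f : AndIdx ι G (n+1) →₀ 𝒯} (hf : f ∈ FF 𝒯 (n+1) (m+1)) :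
    andD ι G 𝒯 p fr n f - d1 𝒯 n f ∈ FF 𝒯 n m := by
  refine map_supported (andD ι G 𝒯 p fr n - d1 𝒯 n) (fun t ht => ?_) hf
  rw [LinearMap.sub_apply, andD_single, d1_single, one_smul, one_smul, sub_neg_eq_add,
    ← Finset.sum_add_distrib]
  refine Submodule.sum_mem _ fun x hx => ?_
  rw [← smul_add]
  have hmem := lamB_add_nB (p := p) (fr := fr) (𝒯 := 𝒯) t hx
  have : ({t' : AndIdx ι G n | mu t' < mu t} : Set (AndIdx ι G n)) ⊆ {t' | mu t' ≤ m} :=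
    fun t' ht' => by have := ht; simp only [Set.mem_setOf_eq] at *; omega
  exact (FF 𝒯 n m).toAddSubgroup.zsmul_mem (Finsupp.supported_mono this hmem) _

theorem mem_FF_big {n : ℕ} (f : AndIdx ι G n →₀ 𝒯) :
    f ∈ FF 𝒯 n ((Fintype.card ι + 1) * (Fintype.card ι + Fintype.card ι)) :=
  fun t _ => mu_ub t

theorem FF_zero {n : ℕ} {f : AndIdx ι G (n+1) →₀ 𝒯} (hf : f ∈ FF 𝒯 (n+1) 0) : f = 0 := by
  ext t
  by_contra hne
  have ht : t ∈ f.support := Finsupp.mem_support_iff.mpr hne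
  have h0 : mu t ≤ 0 := hf ht
  have h1 := mu_lb t
  have hy : t.1.1.card = n + 1 := t.2.1
  have : Fintype.card ι + 1 ≤ (Fintype.card ι + 1) * (t.1.1.card + t.1.2.1.1.card) := by
    rw [hy]
    calc Fintype.card ι + 1 = (Fintype.card ι + 1) * 1 := by ring
    _ ≤ _ := Nat.mul_le_mul_left _ (by omega)
  omega

end AndRes
end Dev4
section Dev5
set_option linter.unusedSectionVars false
open Finsupp
open scoped Classical

variable {ι : Type} [Fintype ι] [LinearOrder ι]
  {G : ι → Type} [∀ i, CommGroup (G i)] [∀ i, Fintype (G i)]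
  {𝒯 : Type} [CommRing 𝒯] {p : ι → Polynomial 𝒯} {fr : ι → ∀ i, G i}

namespace AndRes

theorem TT_tNel_mem {n : ℕ} (t : AndIdx ι G (n+1)) {x : ι} (hx : x ∈ t.1.1) {z : ι} :
    z ∈ TT (tNel t x hx 1) ↔
      (z = x ∨ (z ∈ t.1.2.1.1 ∧ t.1.2.1.2 z = 1)) ∧ ∀ w ∈ t.1.1.erase x, z < w := by
  have hTT : TT (tNel t x hx 1) = (insert x t.1.2.1.1).filter
      (fun z => Function.update t.1.2.1.2 x (1 : G x) z = 1 ∧ ∀ w ∈ t.1.1.erase x, z < w) := rfl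
  rw [hTT, Finset.mem_filter, Finset.mem_insert]
  constructor
  · rintro ⟨hzS, hz1, hzlt⟩
    refine ⟨?_, hzlt⟩
    rcases eq_or_ne z x with rfl | hne
    · exact Or.inl rfl
    · rw [Function.update_of_ne hne] at hz1
      exact Or.inr ⟨hzS.resolve_left hne, hz1⟩
  · rintro ⟨hcase, hlt⟩
    rcases hcase with rfl | ⟨hzS, hz1⟩
    · exact ⟨Or.inl rfl, by rw [Function.update_self], hlt⟩
    · have hne : z ≠ x := fun e => (notstalk t hx) (e ▸ hzS)
      exact ⟨Or.inr hzS, by rw [Function.update_of_ne hne]; exact hz1, hlt⟩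

theorem mem_TT_iff {n : ℕ} (t : AndIdx ι G n) {z : ι} :
    z ∈ TT t ↔ z ∈ t.1.2.1.1 ∧ t.1.2.1.2 z = 1 ∧ ∀ w ∈ t.1.1, z < w := by
  rw [TT]
  simp [Finset.mem_filter, and_assoc]

/-- Case A: for non-minimal `x ∈ y`, no homotopy candidates. -/
theorem TT_tNel_empty {n : ℕ} (t : AndIdx ι G (n+1)) (hy : t.1.1.Nonempty)
    (hTT : ¬(TT t).Nonempty) {x : ι} (hx : x ∈ t.1.1) (hne : x ≠ t.1.1.min' hy) :
    ¬(TT (tNel t x hx 1)).Nonempty := by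
  rintro ⟨z, hz⟩
  rw [TT_tNel_mem] at hz
  obtain ⟨hcase, hlt⟩ := hz
  have hy₀x : t.1.1.min' hy < x :=
    Finset.min'_lt_of_mem_erase_min' _ hy (Finset.mem_erase.mpr ⟨hne, hx⟩)
  have hy₀e : t.1.1.min' hy ∈ t.1.1.erase x :=
    Finset.mem_erase.mpr ⟨fun e => hne e.symm, Finset.min'_mem _ _⟩
  have hz0 : z < t.1.1.min' hy := hlt _ hy₀e
  rcases hcase with rfl | ⟨hzS, hz1⟩
  · exact absurd hz0 (not_lt.mpr hy₀x.le)
  · refine hTT ⟨z, (mem_TT_iff t).mpr ⟨hzS, hz1, fun w hw => ?_⟩⟩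
    rcases eq_or_ne w x with rfl | hwx
    · exact hz0.trans hy₀x
    · exact hlt _ (Finset.mem_erase.mpr ⟨hwx, hw⟩)

/-- Case A: for the minimal `x = y₀`, the unique candidate is `y₀` itself. -/
theorem TT_tNel_min_empty {n : ℕ} (t : AndIdx ι G (n+1)) (hy : t.1.1.Nonempty)
    (hTT : ¬(TT t).Nonempty) :
    ∃ hne : (TT (tNel t (t.1.1.min' hy) (Finset.min'_mem _ _) 1)).Nonempty,
      (TT (tNel t (t.1.1.min' hy) (Finset.min'_mem _ _) 1)).min' hne = t.1.1.min' hy := by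
  set y₀ := t.1.1.min' hy with hy₀
  have hmem : y₀ ∈ TT (tNel t y₀ (Finset.min'_mem _ _) 1) := by
    rw [TT_tNel_mem]
    exact ⟨Or.inl rfl, fun w hw => Finset.min'_lt_of_mem_erase_min' _ hy hw⟩
  refine ⟨⟨y₀, hmem⟩, le_antisymm (Finset.min'_le _ _ hmem) (Finset.le_min' _ _ _ ?_)⟩
  intro z hz
  by_contra hzy
  push_neg at hzy
  rw [TT_tNel_mem] at hz
  obtain ⟨hcase, hlt⟩ := hz
  rcases hcase with rfl | ⟨hzS, hz1⟩
  · exact lt_irrefl _ hzy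
  · refine hTT ⟨z, (mem_TT_iff t).mpr ⟨hzS, hz1, fun w hw => ?_⟩⟩
    rcases eq_or_ne w y₀ with rfl | hwy
    · exact hzy
    · exact hlt _ (Finset.mem_erase.mpr ⟨hwy, hw⟩)

/-- Case B: candidates after moving any `x ∈ y` out keep the same minimum. -/
theorem TT_tNel_min {n : ℕ} (t : AndIdx ι G (n+1)) (hTT : (TT t).Nonempty) {x : ι}
    (hx : x ∈ t.1.1) :
    ∃ hne : (TT (tNel t x hx 1)).Nonempty,
      (TT (tNel t x hx 1)).min' hne = (TT t).min' hTT := by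
  set x' := (TT t).min' hTT with hx'
  have hx'TT : x' ∈ TT t := Finset.min'_mem _ _
  obtain ⟨hx'S, hx'1, hx'lt⟩ := (mem_TT_iff t).mp hx'TT
  have hmem : x' ∈ TT (tNel t x hx 1) := by
    rw [TT_tNel_mem]
    exact ⟨Or.inr ⟨hx'S, hx'1⟩, fun w hw => hx'lt _ (Finset.mem_of_mem_erase hw)⟩
  refine ⟨⟨x', hmem⟩, le_antisymm (Finset.min'_le _ _ hmem) (Finset.le_min' _ _ _ ?_)⟩
  intro z hz
  by_contra hzx'
  push_neg at hzx'
  rw [TT_tNel_mem] at hz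
  obtain ⟨hcase, hlt⟩ := hz
  have hx'ltx : x' < x := hx'lt _ hx
  rcases hcase with rfl | ⟨hzS, hz1⟩
  · exact absurd (hzx'.trans hx'ltx) (lt_irrefl _)
  · have hzTT : z ∈ TT t := (mem_TT_iff t).mpr ⟨hzS, hz1, fun w hw => by
      rcases eq_or_ne w x with rfl | hwx
      · exact hzx'.trans hx'ltx
      · exact hlt _ (Finset.mem_erase.mpr ⟨hwx, hw⟩)⟩
    exact absurd (Finset.min'_le _ _ hzTT) (not_le.mpr hzx')

end AndRes
end Dev5
section Dev6
set_option linter.unusedSectionVars false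
open Finsupp
open scoped Classical

variable {ι : Type} [Fintype ι] [LinearOrder ι]
  {G : ι → Type} [∀ i, CommGroup (G i)] [∀ i, Fintype (G i)]
  {𝒯 : Type} [CommRing 𝒯] {p : ι → Polynomial 𝒯} {fr : ι → ∀ i, G i}

namespace AndRes

/-- E1: moving `x ∈ y` into the stalk commutes with moving `x' ∈ TT t` out. -/
theorem tNel_toY_comm {n : ℕ} (t : AndIdx ι G (n+1)) {x : ι} (hx : x ∈ t.1.1)
    {x' : ι} (hx' : x' ∈ TT t) (hx'1 : x' ∈ TT (tNel t x hx 1))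
    (hxy : x ∈ (toY t x' hx').1.1) :
    toY (tNel t x hx 1) x' hx'1 = tNel (toY t x' hx') x hxy 1 := by
  have hne : x' ≠ x := fun e => (notstalk t hx) (e ▸ TT_stalk hx')
  refine andIdx_ext ?_ ?_ ?_
  · show insert x' (t.1.1.erase x) = (insert x' t.1.1).erase x
    exact (Finset.erase_insert_of_ne hne).symm
  · show (insert x t.1.2.1.1).erase x' = insert x (t.1.2.1.1.erase x')
    exact Finset.erase_insert_of_ne hne.symm
  · rfl

/-- E2: moving `x' = min TT` out of the stalk and back in is the identity. -/
theorem tNel_toY_self {n : ℕ} (t : AndIdx ι G n) {x' : ι} (hx' : x' ∈ TT t)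
    (hxy : x' ∈ (toY t x' hx').1.1) :
    tNel (toY t x' hx') x' hxy 1 = t := by
  refine andIdx_ext ?_ ?_ ?_
  · show (insert x' t.1.1).erase x' = t.1.1
    exact Finset.erase_insert (noty t (TT_stalk hx'))
  · show insert x' (t.1.2.1.1.erase x') = t.1.2.1.1
    exact Finset.insert_erase (TT_stalk hx')
  · show Function.update t.1.2.1.2 x' 1 = t.1.2.1.2
    rw [← TT_one hx']
    exact Function.update_eq_self _ _

/-- E3: moving `y₀ ∈ y` into the stalk and back out is the identity. -/
theorem toY_tNel_self {n : ℕ} (t : AndIdx ι G (n+1)) {x : ι} (hx : x ∈ t.1.1)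
    (hx1 : x ∈ TT (tNel t x hx 1)) :
    toY (tNel t x hx 1) x hx1 = t := by
  refine andIdx_ext ?_ ?_ ?_
  · show insert x (t.1.1.erase x) = t.1.1
    exact Finset.insert_erase hx
  · show (insert x t.1.2.1.1).erase x = t.1.2.1.1
    exact Finset.erase_insert (notstalk t hx)
  · show Function.update t.1.2.1.2 x 1 = t.1.2.1.2
    rw [← stalk_one t hx]
    exact Function.update_eq_self _ _

theorem eps_toY_self {n : ℕ} (t : AndIdx ι G n) {x' : ι} (hx' : x' ∈ TT t) :
    eps (toY t x' hx') x' = 1 := by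
  rw [eps]
  have : (toY t x' hx').1.1.filter (fun z => z < x') = ∅ := by
    rw [Finset.filter_eq_empty_iff]
    intro z hz
    rcases Finset.mem_insert.mp hz with rfl | hzy
    · exact lt_irrefl _
    · exact not_lt.mpr (TT_lt hx' z hzy).le
  rw [this, Finset.card_empty, pow_zero]

theorem eps_toY {n : ℕ} (t : AndIdx ι G n) {x' : ι} (hx' : x' ∈ TT t) {x : ι}
    (hx : x ∈ t.1.1) : eps (toY t x' hx') x = -eps t x := by
  rw [eps, eps]
  have : (toY t x' hx').1.1.filter (fun z => z < x)
      = insert x' (t.1.1.filter (fun z => z < x)) := by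
    show (insert x' t.1.1).filter _ = _
    rw [Finset.filter_insert, if_pos (TT_lt hx' x hx)]
  rw [this, Finset.card_insert_of_notMem
    (fun hm => (noty t (TT_stalk hx')) (Finset.mem_of_mem_filter _ hm)), pow_succ]
  ring

theorem eps_min {n : ℕ} (t : AndIdx ι G n) (hy : t.1.1.Nonempty) :
    eps t (t.1.1.min' hy) = 1 := by
  rw [eps]
  have : t.1.1.filter (fun z => z < t.1.1.min' hy) = ∅ := by
    rw [Finset.filter_eq_empty_iff]
    exact fun z hz => not_lt.mpr (Finset.min'_le _ _ hz)
  rw [this, Finset.card_empty, pow_zero]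

end AndRes
end Dev6
section Dev7
set_option linter.unusedSectionVars false
open Finsupp
open scoped Classical

variable {ι : Type} [Fintype ι] [LinearOrder ι]
  {G : ι → Type} [∀ i, CommGroup (G i)] [∀ i, Fintype (G i)]
  {𝒯 : Type} [CommRing 𝒯] {p : ι → Polynomial 𝒯} {fr : ι → ∀ i, G i}

namespace AndRes

theorem toY_congr {n : ℕ} {t : AndIdx ι G n} {x₁ x₂ : ι} (e : x₁ = x₂) (h₁ : x₁ ∈ TT t)
    (h₂ : x₂ ∈ TT t) : toY t x₁ h₁ = toY t x₂ h₂ := by subst e; rfl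

theorem homotopy_single {n : ℕ} (t : AndIdx ι G (n+1)) :
    d1 𝒯 (n+1) (sh 𝒯 (n+1) (single t 1)) + sh 𝒯 n (d1 𝒯 n (single t 1))
      = single t (1 : 𝒯) := by
  have hy : t.1.1.Nonempty := Finset.card_pos.mp (by rw [t.2.1]; omega)
  rw [sh_single, one_smul, d1_single, one_smul, map_neg, map_sum]
  simp only [map_zsmul]
  by_cases hTT : (TT t).Nonempty
  · -- Case B
    set x' := (TT t).min' hTT with hx'def
    have hx' : x' ∈ TT t := Finset.min'_mem _ _
    have hst : shaux 𝒯 t = -single (toY t x' hx') 1 := by rw [shaux, dif_pos hTT]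
    rw [hst, map_neg, d1_single, one_smul, neg_neg]
    have hins : (toY t x' hx').1.1 = insert x' t.1.1 := rfl
    rw [hins, Finset.sum_insert (noty t (TT_stalk hx'))]
    have h1 : eps (toY t x' hx') x' • nB 𝒯 (toY t x' hx') x' = single t (1 : 𝒯) := by
      rw [eps_toY_self, one_smul, nB,
        dif_pos (show x' ∈ (toY t x' hx').1.1 from Finset.mem_insert_self x' t.1.1),
        tNel_toY_self]
    rw [h1]
    have h2 : ∀ x ∈ t.1.1,
        eps (toY t x' hx') x • nB 𝒯 (toY t x' hx') x = eps t x • sh 𝒯 n (nB 𝒯 t x) := by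
      intro x hx
      obtain ⟨hne', hmin⟩ := TT_tNel_min t hTT hx
      have hx'' : x' ∈ TT (tNel t x hx 1) := by
        have h := Finset.min'_mem _ hne'
        rw [hmin] at h
        exact h
      have hxy : x ∈ (toY t x' hx').1.1 := Finset.mem_insert_of_mem hx
      rw [eps_toY t hx' hx, nB, dif_pos hxy, nB, dif_pos hx, sh_single, one_smul,
        shaux, dif_pos hne', toY_congr hmin (Finset.min'_mem _ _) hx'',
        tNel_toY_comm t hx hx' hx'' hxy, neg_smul, smul_neg]
    rw [Finset.sum_congr rfl h2]
    abel
  · -- Case A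
    have hst : shaux 𝒯 t = 0 := by rw [shaux, dif_neg hTT]
    rw [hst, map_zero]
    have hsum : ∑ x ∈ t.1.1, eps t x • sh 𝒯 n (nB 𝒯 t x) = -single t (1 : 𝒯) := by
      rw [Finset.sum_eq_single_of_mem (t.1.1.min' hy) (Finset.min'_mem _ _)]
      · obtain ⟨hne', hmin⟩ := TT_tNel_min_empty t hy hTT
        have hmem' : t.1.1.min' hy ∈ TT (tNel t (t.1.1.min' hy) (Finset.min'_mem _ _) 1) := by
          have h := Finset.min'_mem _ hne'
          rw [hmin] at h
          exact h
        rw [nB, dif_pos (Finset.min'_mem _ _), sh_single, one_smul, shaux, dif_pos hne',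
          toY_congr hmin (Finset.min'_mem _ _) hmem', toY_tNel_self, eps_min t hy, one_smul]
      · intro x hx hne
        rw [nB, dif_pos hx, sh_single, one_smul, shaux,
          dif_neg (TT_tNel_empty t hy hTT hx hne), smul_zero]
    rw [hsum]
    abel

/-- The homotopy identity, map level. -/
theorem homotopy (n : ℕ) (f : AndIdx ι G (n+1) →₀ 𝒯) :
    d1 𝒯 (n+1) (sh 𝒯 (n+1) f) + sh 𝒯 n (d1 𝒯 n f) = f := by
  induction f using Finsupp.induction_linear with
  | zero => simp
  | add f g hf hg =>
    simp only [map_add]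
    rw [add_add_add_comm, hf, hg]
  | single t c =>
    have h1 : single t c = c • single t (1 : 𝒯) := by
      rw [Finsupp.smul_single, smul_eq_mul, mul_one]
    rw [h1, map_smul, map_smul, map_smul, map_smul, ← smul_add, homotopy_single]

end AndRes
end Dev7
section Dev8
set_option linter.unusedSectionVars false
open Finsupp
open scoped Classical

variable {ι : Type} [Fintype ι] [LinearOrder ι]
  {G : ι → Type} [∀ i, CommGroup (G i)] [∀ i, Fintype (G i)]
  {𝒯 : Type} [CommRing 𝒯] {p : ι → Polynomial 𝒯} {fr : ι → ∀ i, G i}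

namespace AndRes

theorem andIdx_ext2 {n : ℕ} {a b : AndIdx ι G n} (h1 : a.1.1 = b.1.1)
    (h2 : a.1.2 = b.1.2) : a = b := Subtype.ext (Prod.ext h1 h2)

theorem finset_erase_comm (s : Finset ι) (a b : ι) :
    (s.erase a).erase b = (s.erase b).erase a := by
  ext i; simp only [Finset.mem_erase]; tauto

def epsF (s : Finset ι) (x : ι) : ℤ := (-1) ^ ((s.filter (fun z => z < x)).card)

theorem eps_eq_epsF {n : ℕ} (t : AndIdx ι G n) (x : ι) : eps t x = epsF t.1.1 x := rfl

theorem epsF_erase_lt {y : Finset ι} {x x' : ι} (hx : x ∈ y) (h : x < x') :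
    epsF (y.erase x) x' = -epsF y x' := by
  have hmem : x ∈ y.filter (fun z => z < x') := Finset.mem_filter.mpr ⟨hx, h⟩
  rw [epsF, epsF, Finset.filter_erase, Finset.card_erase_of_mem hmem]
  have : (y.filter (fun z => z < x')).card ≠ 0 := Finset.card_ne_zero_of_mem hmem
  obtain ⟨m, hm⟩ : ∃ m, (y.filter (fun z => z < x')).card = m + 1 :=
    ⟨(y.filter (fun z => z < x')).card - 1, by omega⟩
  rw [hm]
  simp [pow_succ]

theorem epsF_erase_ge {y : Finset ι} {x x' : ι} (h : ¬x < x') :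
    epsF (y.erase x) x' = epsF y x' := by
  rw [epsF, epsF, Finset.filter_erase, Finset.erase_eq_of_notMem]
  intro hm
  exact h (Finset.mem_filter.mp hm).2

theorem epsF_antisym {y : Finset ι} {x x' : ι} (hx : x ∈ y) (hx' : x' ∈ y) (hne : x ≠ x') :
    epsF y x * epsF (y.erase x) x' = -(epsF y x' * epsF (y.erase x') x) := by
  rcases lt_or_gt_of_ne hne with h | h
  · rw [epsF_erase_lt hx h, epsF_erase_ge (not_lt.mpr h.le)]
    ring
  · rw [epsF_erase_ge (not_lt.mpr h.le), epsF_erase_lt hx' h]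
    ring

/-- PP commutation. -/
theorem tPel_tPel {n : ℕ} (t : AndIdx ι G (n+2)) {x x' : ι} (hx : x ∈ t.1.1)
    (hx' : x' ∈ t.1.1) (k k' : ℕ) (m1 : x' ∈ (tPel fr t x hx k).1.1)
    (m2 : x ∈ (tPel fr t x' hx' k').1.1) :
    tPel fr (tPel fr t x hx k) x' m1 k' = tPel fr (tPel fr t x' hx' k') x m2 k :=
  andIdx_ext2 (finset_erase_comm _ _ _) (undAct_comm _ _ _)

/-- NN commutation. -/
theorem tNel_tNel {n : ℕ} (t : AndIdx ι G (n+2)) {x x' : ι} (hx : x ∈ t.1.1)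
    (hx' : x' ∈ t.1.1) (hne : x ≠ x') (h : G x) (h' : G x') (m1 : x' ∈ (tNel t x hx h).1.1)
    (m2 : x ∈ (tNel t x' hx' h').1.1) :
    tNel (tNel t x hx h) x' m1 h' = tNel (tNel t x' hx' h') x m2 h :=
  andIdx_ext2 (finset_erase_comm _ _ _) (undExt_undExt hne.symm _ _ _)

/-- PN commutation. -/
theorem tPel_tNel {n : ℕ} (t : AndIdx ι G (n+2)) {x x' : ι} (hx : x ∈ t.1.1)
    (hx' : x' ∈ t.1.1) (k : ℕ) (h' : G x') (m1 : x' ∈ (tPel fr t x hx k).1.1)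
    (m2 : x ∈ (tNel t x' hx' h').1.1) :
    tPel fr (tNel t x' hx' h') x m2 k
      = tNel (tPel fr t x hx k) x' m1 (((fr x x')⁻¹ ^ k) * h') :=
  andIdx_ext2 (finset_erase_comm _ _ _) (undAct_undExt _ _ _ _)

end AndRes
end Dev8
section Dev9
set_option linter.unusedSectionVars false
open Finsupp
open scoped Classical

variable {ι : Type} [Fintype ι] [LinearOrder ι]
  {G : ι → Type} [∀ i, CommGroup (G i)] [∀ i, Fintype (G i)]
  {𝒯 : Type} [CommRing 𝒯] {p : ι → Polynomial 𝒯} {fr : ι → ∀ i, G i}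

namespace AndRes

/-- The composite block `λ_{x'} λ_x` applied to `t`. -/
noncomputable def LL (p : ι → Polynomial 𝒯) (fr : ι → ∀ i, G i) {n : ℕ}
    (t : AndIdx ι G (n+2)) (x x' : ι) : AndIdx ι G n →₀ 𝒯 :=
  if hx : x ∈ t.1.1 then
    (∑ k ∈ (p x).support, (p x).coeff k • lamB p fr (tPel fr t x hx k) x')
      - ∑ h : G x, lamB p fr (tNel t x hx h) x'
  else 0

theorem andD_single' {n : ℕ} (t₁ : AndIdx ι G (n+1)) (c : 𝒯) :
    andD ι G 𝒯 p fr n (single t₁ c)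
      = ∑ x' ∈ t₁.1.1, epsF t₁.1.1 x' • (c • lamB p fr t₁ x') := by
  rw [andD_single, Finset.smul_sum]
  exact Finset.sum_congr rfl fun x' _ => smul_comm _ _ _

theorem andD_lamB {n : ℕ} (t : AndIdx ι G (n+2)) {x : ι} (hx : x ∈ t.1.1) :
    andD ι G 𝒯 p fr n (lamB p fr t x)
      = ∑ x' ∈ t.1.1.erase x, epsF (t.1.1.erase x) x' • LL p fr t x x' := by
  rw [lamB, dif_pos hx, map_sub, map_sum, map_sum]
  rw [Finset.sum_congr rfl (fun k (_ : k ∈ (p x).support) =>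
    (andD_single' (tPel fr t x hx k) ((p x).coeff k) :
      _ = ∑ x' ∈ t.1.1.erase x, epsF (t.1.1.erase x) x'
            • ((p x).coeff k • lamB p fr (tPel fr t x hx k) x')))]
  rw [Finset.sum_congr rfl (fun h (_ : h ∈ (Finset.univ : Finset (G x))) =>
    (andD_single' (tNel t x hx h) (1 : 𝒯) :
      _ = ∑ x' ∈ t.1.1.erase x, epsF (t.1.1.erase x) x'
            • ((1 : 𝒯) • lamB p fr (tNel t x hx h) x')))]
  have hrhs : ∀ x' ∈ t.1.1.erase x, epsF (t.1.1.erase x) x' • LL p fr t x x'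
      = (∑ k ∈ (p x).support, epsF (t.1.1.erase x) x'
          • ((p x).coeff k • lamB p fr (tPel fr t x hx k) x'))
        - ∑ h : G x, epsF (t.1.1.erase x) x'
          • ((1 : 𝒯) • lamB p fr (tNel t x hx h) x') := by
    intro x' _
    rw [LL, dif_pos hx, smul_sub, Finset.smul_sum, Finset.smul_sum]
    simp only [one_smul]
  rw [Finset.sum_congr rfl hrhs, Finset.sum_sub_distrib]
  exact congrArg₂ Sub.sub Finset.sum_comm Finset.sum_comm

/-- Cross piece: the `N_{x'} P_x` double sum equals the `P_x N_{x'}` double sum. -/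
theorem cross_piece {n : ℕ} (t : AndIdx ι G (n+2)) {x x' : ι} (hx : x ∈ t.1.1)
    (hx' : x' ∈ t.1.1) (hne : x ≠ x') (hm1 : x' ∈ t.1.1.erase x)
    (hm2 : x ∈ t.1.1.erase x') :
    (∑ k ∈ (p x).support, (p x).coeff k
        • ∑ h' : G x', single (tNel (tPel fr t x hx k) x' hm1 h') (1 : 𝒯))
      = ∑ h' : G x', ∑ k ∈ (p x).support,
          single (tPel fr (tNel t x' hx' h') x hm2 k) ((p x).coeff k) := by
  rw [Finset.sum_comm]
  refine Finset.sum_congr rfl fun k _ => ?_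
  rw [Finset.smul_sum]
  rw [Finset.sum_congr rfl (fun (h' : G x') (_ : h' ∈ Finset.univ) => by
    rw [Finsupp.smul_single, smul_eq_mul, mul_one] :
    ∀ h' ∈ Finset.univ, (p x).coeff k • (single (tNel (tPel fr t x hx k) x' hm1 h') (1:𝒯))
      = single (tNel (tPel fr t x hx k) x' hm1 h') ((p x).coeff k))]
  exact (Fintype.sum_equiv (Equiv.mulLeft ((fr x x')⁻¹ ^ k))
    (fun h' => single (tPel fr (tNel t x' hx' h') x hm2 k) ((p x).coeff k))
    (fun h' => single (tNel (tPel fr t x hx k) x' hm1 h') ((p x).coeff k))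
    (fun h' => by
      show single (tPel fr (tNel t x' hx' h') x hm2 k) ((p x).coeff k)
          = single (tNel (tPel fr t x hx k) x' hm1 ((Equiv.mulLeft ((fr x x')⁻¹ ^ k)) h'))
              ((p x).coeff k)
      rw [tPel_tNel t hx hx' k h' hm1 hm2]
      rfl)).symm

end AndRes
end Dev9
section Dev10
set_option linter.unusedSectionVars false
open Finsupp
open scoped Classical

variable {ι : Type} [Fintype ι] [LinearOrder ι]
  {G : ι → Type} [∀ i, CommGroup (G i)] [∀ i, Fintype (G i)]
  {𝒯 : Type} [CommRing 𝒯] {p : ι → Polynomial 𝒯} {fr : ι → ∀ i, G i}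

namespace AndRes

theorem LL_expand {n : ℕ} (t : AndIdx ι G (n+2)) {x x' : ι} (hx : x ∈ t.1.1)
    (hx' : x' ∈ t.1.1) (hm1 : x' ∈ t.1.1.erase x) :
    LL p fr t x x'
      = ((∑ k ∈ (p x).support, ∑ k' ∈ (p x').support,
            single (tPel fr (tPel fr t x hx k) x' hm1 k') ((p x).coeff k * (p x').coeff k'))
          - ∑ k ∈ (p x).support, (p x).coeff k
              • ∑ h' : G x', single (tNel (tPel fr t x hx k) x' hm1 h') (1 : 𝒯))
        - ((∑ h : G x, ∑ k' ∈ (p x').support,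
              single (tPel fr (tNel t x hx h) x' hm1 k') ((p x').coeff k'))
          - ∑ h : G x, ∑ h' : G x',
              single (tNel (tNel t x hx h) x' hm1 h') (1 : 𝒯)) := by
  rw [LL, dif_pos hx]
  have h1 : ∀ k ∈ (p x).support, (p x).coeff k • lamB p fr (tPel fr t x hx k) x'
      = (∑ k' ∈ (p x').support,
          single (tPel fr (tPel fr t x hx k) x' hm1 k') ((p x).coeff k * (p x').coeff k'))
        - (p x).coeff k
            • ∑ h' : G x', single (tNel (tPel fr t x hx k) x' hm1 h') (1 : 𝒯) := by
    intro k _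
    rw [lamB, dif_pos (show x' ∈ (tPel fr t x hx k).1.1 from hm1)]
    rw [smul_sub, Finset.smul_sum]
    congr 1
    refine Finset.sum_congr rfl fun k' _ => ?_
    rw [Finsupp.smul_single, smul_eq_mul]
  have h2 : ∀ h ∈ (Finset.univ : Finset (G x)), lamB p fr (tNel t x hx h) x'
      = (∑ k' ∈ (p x').support,
          single (tPel fr (tNel t x hx h) x' hm1 k') ((p x').coeff k'))
        - ∑ h' : G x', single (tNel (tNel t x hx h) x' hm1 h') (1 : 𝒯) := by
    intro h _
    rw [lamB, dif_pos (show x' ∈ (tNel t x hx h).1.1 from hm1)]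
  rw [Finset.sum_congr rfl h1, Finset.sum_congr rfl h2, Finset.sum_sub_distrib,
    Finset.sum_sub_distrib]

theorem LL_symm {n : ℕ} (t : AndIdx ι G (n+2)) {x x' : ι} (hx : x ∈ t.1.1)
    (hx' : x' ∈ t.1.1) (hne : x ≠ x') : LL p fr t x x' = LL p fr t x' x := by
  have hm1 : x' ∈ t.1.1.erase x := Finset.mem_erase.mpr ⟨hne.symm, hx'⟩
  have hm2 : x ∈ t.1.1.erase x' := Finset.mem_erase.mpr ⟨hne, hx⟩
  rw [LL_expand t hx hx' hm1, LL_expand t hx' hx hm2,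
    cross_piece t hx hx' hne hm1 hm2, cross_piece t hx' hx hne.symm hm2 hm1]
  have hA : (∑ k ∈ (p x).support, ∑ k' ∈ (p x').support,
        single (tPel fr (tPel fr t x hx k) x' hm1 k') ((p x).coeff k * (p x').coeff k'))
      = ∑ k' ∈ (p x').support, ∑ k ∈ (p x).support,
        single (tPel fr (tPel fr t x' hx' k') x hm2 k)
          ((p x').coeff k' * (p x).coeff k) := by
    rw [Finset.sum_comm]
    refine Finset.sum_congr rfl fun k' _ => Finset.sum_congr rfl fun k _ => ?_
    rw [tPel_tPel t hx hx' k k' hm1 hm2, mul_comm]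
  have hD : (∑ h : G x, ∑ h' : G x',
        single (tNel (tNel t x hx h) x' hm1 h') (1 : 𝒯))
      = ∑ h' : G x', ∑ h : G x,
        single (tNel (tNel t x' hx' h') x hm2 h) (1 : 𝒯) := by
    rw [Finset.sum_comm]
    refine Finset.sum_congr rfl fun h' _ => Finset.sum_congr rfl fun h _ => ?_
    rw [tNel_tNel t hx hx' hne h h' hm1 hm2]
  rw [hA, hD]
  abel

theorem andD_andD_single {n : ℕ} (t : AndIdx ι G (n+2)) :
    andD ι G 𝒯 p fr n (andD ι G 𝒯 p fr (n+1) (single t (1 : 𝒯))) = 0 := by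
  rw [andD_single, one_smul, map_sum]
  have h1 : ∀ x ∈ t.1.1, andD ι G 𝒯 p fr n (eps t x • lamB p fr t x)
      = ∑ x' ∈ t.1.1.erase x,
          (epsF t.1.1 x * epsF (t.1.1.erase x) x') • LL p fr t x x' := by
    intro x hx
    rw [map_zsmul, andD_lamB t hx, Finset.smul_sum]
    refine Finset.sum_congr rfl fun x' _ => ?_
    rw [smul_smul]
    rfl
  rw [Finset.sum_congr rfl h1, Finset.sum_sigma']
  refine Finset.sum_involution (fun q _ => ⟨q.2, q.1⟩) ?_ ?_ ?_ ?_
  · intro q hq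
    obtain ⟨hq1, hq2⟩ := Finset.mem_sigma.mp hq
    obtain ⟨hne2, hq2y⟩ := Finset.mem_erase.mp hq2
    show (epsF t.1.1 q.1 * epsF (t.1.1.erase q.1) q.2) • LL p fr t q.1 q.2
      + (epsF t.1.1 q.2 * epsF (t.1.1.erase q.2) q.1) • LL p fr t q.2 q.1 = 0
    rw [LL_symm t hq1 hq2y hne2.symm, epsF_antisym hq1 hq2y hne2.symm, neg_smul]
    exact neg_add_cancel _
  · intro q hq hfne
    obtain ⟨hq1, hq2⟩ := Finset.mem_sigma.mp hq
    obtain ⟨hne2, hq2y⟩ := Finset.mem_erase.mp hq2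
    intro e
    exact hne2 (congrArg Sigma.fst e)
  · intro q hq
    obtain ⟨hq1, hq2⟩ := Finset.mem_sigma.mp hq
    obtain ⟨hne2, hq2y⟩ := Finset.mem_erase.mp hq2
    exact Finset.mem_sigma.mpr ⟨hq2y, Finset.mem_erase.mpr ⟨hne2.symm, hq1⟩⟩
  · intro q hq
    rfl

theorem andD_andD {n : ℕ} (f : AndIdx ι G (n+2) →₀ 𝒯) :
    andD ι G 𝒯 p fr n (andD ι G 𝒯 p fr (n+1) f) = 0 := by
  induction f using Finsupp.induction_linear with
  | zero => simp
  | add f g hf hg => simp [map_add, hf, hg]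
  | single t c =>
    have h1 : single t c = c • single t (1 : 𝒯) := by
      rw [Finsupp.smul_single, smul_eq_mul, mul_one]
    rw [h1, map_smul, map_smul, andD_andD_single, smul_zero]

end AndRes
end Dev10
section Dev11
set_option linter.unusedSectionVars false
open Finsupp
open scoped Classical

variable {ι : Type} [Fintype ι] [LinearOrder ι]
  {G : ι → Type} [∀ i, CommGroup (G i)] [∀ i, Fintype (G i)]
  {𝒯 : Type} [CommRing 𝒯] {p : ι → Polynomial 𝒯} {fr : ι → ∀ i, G i}

namespace AndRes

theorem exact_aux : ∀ (m n : ℕ) (f : AndIdx ι G (n+1) →₀ 𝒯),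
    andD ι G 𝒯 p fr n f = 0 → f ∈ FF 𝒯 (n+1) m →
    ∃ g, andD ι G 𝒯 p fr (n+1) g = f := by
  intro m
  induction m with
  | zero =>
    intro n f _ hm
    exact ⟨0, by rw [map_zero]; exact (FF_zero hm).symm⟩
  | succ m ih =>
    intro n f hf hm
    have hh := homotopy (𝒯 := 𝒯) n f
    have hsh : sh 𝒯 n (d1 𝒯 n f) = f - d1 𝒯 (n+1) (sh 𝒯 (n+1) f) :=
      eq_sub_of_add_eq' hh
    have key : f - andD ι G 𝒯 p fr (n+1) (sh 𝒯 (n+1) f)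
        = -(sh 𝒯 n (andD ι G 𝒯 p fr n f - d1 𝒯 n f))
          - (andD ι G 𝒯 p fr (n+1) (sh 𝒯 (n+1) f) - d1 𝒯 (n+1) (sh 𝒯 (n+1) f)) := by
      have e1 : sh 𝒯 n (andD ι G 𝒯 p fr n f - d1 𝒯 n f) = -sh 𝒯 n (d1 𝒯 n f) := by
        rw [hf, zero_sub, map_neg]
      rw [e1, neg_neg, hsh]
      abel
    have hd : andD ι G 𝒯 p fr n (f - andD ι G 𝒯 p fr (n+1) (sh 𝒯 (n+1) f)) = 0 := by
      rw [map_sub, hf, andD_andD, sub_zero]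
    have hmem : f - andD ι G 𝒯 p fr (n+1) (sh 𝒯 (n+1) f) ∈ FF 𝒯 (n+1) m := by
      rw [key]
      exact sub_mem (neg_mem (sh_mem_FF (R_mem_FF hm))) (R_mem_FF (sh_mem_FF hm))
    obtain ⟨g', hg'⟩ := ih n _ hd hmem
    refine ⟨sh 𝒯 (n+1) f + g', ?_⟩
    rw [map_add, hg']
    abel

theorem part1 (n : ℕ) (f : AndIdx ι G (n+1) →₀ 𝒯) (hf : andD ι G 𝒯 p fr n f = 0) :
    ∃ g, andD ι G 𝒯 p fr (n+1) g = f :=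
  exact_aux ((Fintype.card ι + 1) * (Fintype.card ι + Fintype.card ι)) n f hf (mem_FF_big f)

end AndRes
end Dev11
section Dev12
set_option linter.unusedSectionVars false
open Finsupp
open scoped Classical

variable {ι : Type} [Fintype ι] [LinearOrder ι]
  {G : ι → Type} [∀ i, CommGroup (G i)] [∀ i, Fintype (G i)]
  {𝒯 : Type} [CommRing 𝒯] {p : ι → Polynomial 𝒯} {fr : ι → ∀ i, G i}

namespace AndRes

def e0 : AndIdx ι G 0 ≃ UndIdx ι G where
  toFun t := t.1.2
  invFun q := ⟨(∅, q), by
    refine ⟨rfl, ?_⟩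
    exact Finset.disjoint_empty_left _⟩
  left_inv t := andIdx_ext2 (Finset.card_eq_zero.mp t.2.1).symm rfl
  right_inv q := rfl

/-- `ι₀`, the identification of the degree-0 part with `𝒜_z`. -/
noncomputable def iot (𝒯 : Type) [CommRing 𝒯] :
    (AndIdx ι G 0 →₀ 𝒯) ≃ₗ[𝒯] (UndIdx ι G →₀ 𝒯) := Finsupp.domLCongr e0

theorem andU_eq (f : AndIdx ι G 0 →₀ 𝒯) :
    andU ι G 𝒯 p fr f = Submodule.Quotient.mk (iot 𝒯 f) := by
  induction f using Finsupp.induction_linear with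
  | zero => simp
  | add f g hf hg =>
    simp [map_add, hf, hg]
  | single t c =>
    rw [andU, Finsupp.lsum_single, LinearMap.toSpanSingleton_apply, iot,
      Finsupp.domLCongr_single]
    rw [← Submodule.Quotient.mk_smul, Finsupp.smul_single, smul_eq_mul, mul_one]
    rfl

/-- Basis element `[q, {x}]` of `ℒ^{-1}`. -/
theorem e0_apply (t : AndIdx ι G 0) : e0 t = t.1.2 := rfl

def bY (x : ι) (q : UndIdx ι G) (hx : x ∉ q.1.1) : AndIdx ι G 1 :=
  ⟨({x}, q), by
    refine ⟨Finset.card_singleton x, ?_⟩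
    exact Finset.disjoint_singleton_left.mpr hx⟩

theorem domD0 (x : ι) (q : UndIdx ι G) (hx : x ∉ q.1.1) :
    iot 𝒯 (andD ι G 𝒯 p fr 0 (single (bY x q hx) (1 : 𝒯)))
      = undLam ι G 𝒯 p fr x q := by
  rw [andD_single, one_smul]
  have h1 : ∑ x' ∈ (bY x q hx).1.1, eps (bY x q hx) x' • lamB p fr (bY x q hx) x'
      = eps (bY x q hx) x • lamB p fr (bY x q hx) x := Finset.sum_singleton _ _
  rw [h1]
  have h2 : eps (bY x q hx) x = 1 := by
    rw [eps]
    have he : (bY x q hx).1.1.filter (fun z => z < x) = ∅ := by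
      rw [Finset.filter_eq_empty_iff]
      intro z hz
      have : z = x := Finset.mem_singleton.mp hz
      subst this
      exact lt_irrefl z
    rw [he, Finset.card_empty, pow_zero]
  rw [h2, one_smul, lamB, dif_pos (show x ∈ (bY x q hx).1.1 from Finset.mem_singleton_self x)]
  rw [map_sub, map_sum, map_sum, undLam]
  congr 1
  · refine Finset.sum_congr rfl fun k _ => ?_
    rw [iot, Finsupp.domLCongr_single, e0_apply]
    rfl
  · refine Finset.sum_congr rfl fun h _ => ?_
    rw [iot, Finsupp.domLCongr_single, e0_apply]
    rfl

theorem mapDomain_lam (σ : ∀ i, G i) (x : ι) (q : UndIdx ι G) :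
    Finsupp.mapDomain (undAct ι G σ) (undLam ι G 𝒯 p fr x q)
      = undLam ι G 𝒯 p fr x (undAct ι G σ q) := by
  rw [undLam, undLam]
  have hlin : ∀ v : UndIdx ι G →₀ 𝒯, Finsupp.mapDomain (undAct ι G σ) v
      = Finsupp.lmapDomain 𝒯 𝒯 (undAct ι G σ) v := fun v => rfl
  rw [hlin, map_sub, map_sum, map_sum]
  congr 1
  · refine Finset.sum_congr rfl fun k _ => ?_
    rw [Finsupp.lmapDomain_apply, Finsupp.mapDomain_single, undAct_comm]
  · refine (Fintype.sum_equiv (Equiv.mulLeft (σ x))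
      (fun h => Finsupp.lmapDomain 𝒯 𝒯 (undAct ι G σ) (single (undExt ι G x h q) (1:𝒯)))
      (fun h => single (undExt ι G x h (undAct ι G σ q)) (1:𝒯)) (fun h => ?_))
    show Finsupp.lmapDomain 𝒯 𝒯 (undAct ι G σ) (single (undExt ι G x h q) (1:𝒯))
        = single (undExt ι G x (σ x * h) (undAct ι G σ q)) (1:𝒯)
    rw [Finsupp.lmapDomain_apply, Finsupp.mapDomain_single, undAct_undExt]

end AndRes
end Dev12
section Dev13
set_option linter.unusedSectionVars false
open Finsupp
open scoped Classical

variable {ι : Type} [Fintype ι] [LinearOrder ι]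
  {G : ι → Type} [∀ i, CommGroup (G i)] [∀ i, Fintype (G i)]
  {𝒯 : Type} [CommRing 𝒯] {p : ι → Polynomial 𝒯} {fr : ι → ∀ i, G i}

namespace AndRes

theorem part2 : Function.Surjective (andU ι G 𝒯 p fr) := by
  intro w
  obtain ⟨v, rfl⟩ := Submodule.Quotient.mk_surjective _ w
  exact ⟨(iot 𝒯).symm v, by rw [andU_eq, LinearEquiv.apply_symm_apply]⟩

theorem uD0_single (t : AndIdx ι G 1) :
    iot 𝒯 (andD ι G 𝒯 p fr 0 (single t (1 : 𝒯))) ∈ undRel ι G 𝒯 p fr := by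
  obtain ⟨x, hx⟩ := Finset.card_eq_one.mp t.2.1
  have hxy : x ∈ t.1.1 := by rw [hx]; exact Finset.mem_singleton_self x
  have hxq : x ∉ t.1.2.1.1 := notstalk t hxy
  have ht : t = bY x t.1.2 hxq := andIdx_ext2 hx rfl
  rw [ht, domD0]
  refine Submodule.subset_span ⟨fun _ => 1, x, t.1.2, hxq, ?_⟩
  rw [mapDomain_lam, undAct_one]

theorem uD0 (g : AndIdx ι G 1 →₀ 𝒯) : andU ι G 𝒯 p fr (andD ι G 𝒯 p fr 0 g) = 0 := by
  induction g using Finsupp.induction_linear with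
  | zero => simp
  | add f g hf hg => simp [map_add, hf, hg]
  | single t c =>
    have h0 : andU ι G 𝒯 p fr (andD ι G 𝒯 p fr 0 (single t (1 : 𝒯))) = 0 := by
      rw [andU_eq, Submodule.Quotient.mk_eq_zero]
      exact uD0_single t
    have h1 : single t c = c • single t (1 : 𝒯) := by
      rw [Finsupp.smul_single, smul_eq_mul, mul_one]
    rw [h1, map_smul, map_smul, h0, smul_zero]

theorem part3 :
    LinearMap.ker (andU ι G 𝒯 p fr) = LinearMap.range (andD ι G 𝒯 p fr 0) := by
  apply le_antisymm
  · intro f hf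
    have hf0 : andU ι G 𝒯 p fr f = 0 := hf
    rw [andU_eq, Submodule.Quotient.mk_eq_zero] at hf0
    have key : ∀ v ∈ undRel ι G 𝒯 p fr,
        (iot 𝒯).symm v ∈ LinearMap.range (andD ι G 𝒯 p fr 0) := by
      intro v hv
      induction hv using Submodule.span_induction with
      | mem v hv =>
        obtain ⟨σ, x, q, hxq, rfl⟩ := hv
        have hxq' : x ∉ (undAct ι G σ q).1.1 := hxq
        refine ⟨single (bY x (undAct ι G σ q) hxq') 1, ?_⟩
        rw [LinearEquiv.eq_symm_apply, domD0, mapDomain_lam]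
      | zero => simpa using zero_mem _
      | add a b ha hb ha' hb' => rw [map_add]; exact add_mem ha' hb'
      | smul c a ha ha' => rw [map_smul]; exact Submodule.smul_mem _ _ ha'
    have hmem := key _ hf0
    rwa [LinearEquiv.symm_apply_apply] at hmem
  · rintro f ⟨g, rfl⟩
    exact uD0 g

end AndRes
end Dev13

/-- Anderson's resolution is a resolution: the augmentation
`u : ℒ_z^• → 𝒰_z` is a quasi-isomorphism, i.e. the complex `(ℒ_z^•, d)` is acyclic in
nonzero degrees (`ker d = im d` in each degree `≤ −1`), `u` is surjective, and
`ker u = im (d : ℒ_z^{−1} → ℒ_z^0)`, so `H^0(ℒ_z^•, d) ≅ 𝒰_z` via `u`. -/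
theorem stmt13 (ι : Type) [Fintype ι] [LinearOrder ι]
    (G : ι → Type) [∀ i, CommGroup (G i)] [∀ i, Fintype (G i)]
    (𝒪 : Type) [CommRing 𝒪] [IsDomain 𝒪]
    (𝒯 : Type) [CommRing 𝒯] [Algebra 𝒪 𝒯] [NoZeroSMulDivisors 𝒪 𝒯] [Module.Finite 𝒪 𝒯]
    (p : ι → Polynomial 𝒯) (fr : ι → ∀ i, G i) (hfr : ∀ x, fr x x = 1) :
    (∀ (n : ℕ) (f : AndIdx ι G (n + 1) →₀ 𝒯), andD ι G 𝒯 p fr n f = 0 →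
        ∃ g : AndIdx ι G (n + 2) →₀ 𝒯, andD ι G 𝒯 p fr (n + 1) g = f) ∧
      Function.Surjective (andU ι G 𝒯 p fr) ∧
      LinearMap.ker (andU ι G 𝒯 p fr) = LinearMap.range (andD ι G 𝒯 p fr 0) := by
  exact ⟨fun n f hf => AndRes.part1 n f hf, AndRes.part2, AndRes.part3⟩
end

section
/- Decompose the differential of Anderson's resolution as d = d_1 + d_2 where d_{1,x}[a,y] = −ω(x,y) N_{z(x)}[z(x)a, y/x] and d_{2,x}[a,y] = ω(x,y) p(x;Fr_x^{-1})[a, y/x], with d_i = ∑_{x|y} d_{i,x}. Then d_1² = d_2² = d_1 d_2 + d_2 d_1 = 0, so (ℒ_z; d_1, d_2) is a double complex, and each d_{i,x} commutes with the G_z-action. -/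
section
variable (ι : Type) [Fintype ι] [LinearOrder ι]
  (G : ι → Type) [∀ i, CommGroup (G i)] [∀ i, Fintype (G i)]
  (𝒯 : Type) [CommRing 𝒯] (p : ι → Polynomial 𝒯) (fr : ι → ∀ i, G i)

/-- The piece `d_{1,x}[a,y] = −ω(x,y) N_{z(x)}[z(x)a, y/x]` of the differential of
Anderson's resolution (zero when `x ∤ y`). -/
noncomputable def andD1x (n : ℕ) (x : ι) :
    (AndIdx ι G (n + 1) →₀ 𝒯) →ₗ[𝒯] (AndIdx ι G n →₀ 𝒯) :=
  Finsupp.lsum 𝒯 fun t => LinearMap.toSpanSingleton 𝒯 _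
    (if hx : x ∈ t.1.1 then
      (-((-1 : ℤ) ^ ((t.1.1.filter (fun x' => x' < x)).card))) •
        ∑ h : G x,
          Finsupp.single
            (⟨(t.1.1.erase x, undExt ι G x h t.1.2), by
              refine ⟨?_, ?_⟩
              · simp [Finset.card_erase_of_mem hx, t.2.1]
              · show Disjoint (t.1.1.erase x) (insert x t.1.2.1.1)
                rw [Finset.disjoint_insert_right]
                exact ⟨Finset.notMem_erase _ _,
                  t.2.2.mono_left (Finset.erase_subset _ _)⟩⟩ : AndIdx ι G n)
            (1 : 𝒯)
     else 0)

/-- The piece `d_{2,x}[a,y] = ω(x,y) p(x;Fr_x^{-1})[a, y/x]` of the differential of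
Anderson's resolution (zero when `x ∤ y`). -/
noncomputable def andD2x (n : ℕ) (x : ι) :
    (AndIdx ι G (n + 1) →₀ 𝒯) →ₗ[𝒯] (AndIdx ι G n →₀ 𝒯) :=
  Finsupp.lsum 𝒯 fun t => LinearMap.toSpanSingleton 𝒯 _
    (if hx : x ∈ t.1.1 then
      ((-1 : ℤ) ^ ((t.1.1.filter (fun x' => x' < x)).card)) •
        ∑ k ∈ (p x).support,
          Finsupp.single
            (⟨(t.1.1.erase x, undAct ι G (fun i => (fr x i)⁻¹ ^ k) t.1.2), by
              refine ⟨?_, ?_⟩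
              · simp [Finset.card_erase_of_mem hx, t.2.1]
              · exact t.2.2.mono_left (Finset.erase_subset _ _)⟩ : AndIdx ι G n)
            ((p x).coeff k)
     else 0)

/-- The `G_z`-action on the degree-`(−n)` component of Anderson's resolution. -/
noncomputable def andActL (n : ℕ) (σ : ∀ i, G i) :
    (AndIdx ι G n →₀ 𝒯) →ₗ[𝒯] (AndIdx ι G n →₀ 𝒯) :=
  Finsupp.lmapDomain 𝒯 𝒯
    (fun t => (⟨(t.1.1, undAct ι G σ t.1.2), ⟨t.2.1, t.2.2⟩⟩ : AndIdx ι G n))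

end


/-! ### Auxiliary machinery -/

set_option linter.unusedSectionVars false

section AuxDefs

variable {ι : Type} [Fintype ι] [LinearOrder ι]
  {G : ι → Type} [∀ i, CommGroup (G i)] [∀ i, Fintype (G i)]
  {𝒯 : Type} [CommRing 𝒯] {p : ι → Polynomial 𝒯} {fr : ι → ∀ i, G i}

/-- Commutation of two `undExt` at distinct primes. -/
theorem undExt_comm {x x' : ι} (hne : x ≠ x') (h : G x) (h' : G x') (q : UndIdx ι G) :
    undExt ι G x h (undExt ι G x' h' q) = undExt ι G x' h' (undExt ι G x h q) := by
  refine Subtype.ext (Prod.ext ?_ ?_)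
  · exact Finset.insert_comm x x' q.1.1
  · exact (Function.update_comm hne h h' q.1.2).symm

/-- Commutation of two `undAct`s. -/
theorem undAct_comm (σ τ : ∀ i, G i) (q : UndIdx ι G) :
    undAct ι G σ (undAct ι G τ q) = undAct ι G τ (undAct ι G σ q) := by
  refine Subtype.ext (Prod.ext rfl (funext fun i => ?_))
  show (if i ∈ q.1.1 then σ i * (if i ∈ q.1.1 then τ i * q.1.2 i else 1) else 1)
      = (if i ∈ q.1.1 then τ i * (if i ∈ q.1.1 then σ i * q.1.2 i else 1) else 1)
  by_cases hi : i ∈ q.1.1 <;> simp [hi, mul_left_comm]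

/-- `undAct` past `undExt`. -/
theorem undAct_undExt (σ : ∀ i, G i) (x : ι) (h : G x) (q : UndIdx ι G) :
    undAct ι G σ (undExt ι G x h q) = undExt ι G x (σ x * h) (undAct ι G σ q) := by
  refine Subtype.ext (Prod.ext rfl (funext fun i => ?_))
  show (if i ∈ insert x q.1.1 then σ i * Function.update q.1.2 x h i else 1)
      = Function.update (fun j => if j ∈ q.1.1 then σ j * q.1.2 j else 1) x (σ x * h) i
  rcases eq_or_ne i x with rfl | hix
  · simp
  · rw [Function.update_of_ne hix, Function.update_of_ne hix]
    by_cases hi : i ∈ q.1.1 <;> simp [hi, hix, Finset.mem_insert]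

/-- The index `[z(x)a, y/x]` (the `N`-part target). -/
def aE1 (n : ℕ) (x : ι) (h : G x) (t : AndIdx ι G (n + 1)) (hx : x ∈ t.1.1) : AndIdx ι G n :=
  ⟨(t.1.1.erase x, undExt ι G x h t.1.2), by
    refine ⟨?_, ?_⟩
    · simp [Finset.card_erase_of_mem hx, t.2.1]
    · show Disjoint (t.1.1.erase x) (insert x t.1.2.1.1)
      rw [Finset.disjoint_insert_right]
      exact ⟨Finset.notMem_erase _ _, t.2.2.mono_left (Finset.erase_subset _ _)⟩⟩

/-- The index `[σa, y/x]` (the `p`-part target, `σ = Fr_x^{-k}`). -/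
def aE2 (n : ℕ) (σ : ∀ i, G i) (x : ι) (t : AndIdx ι G (n + 1)) (hx : x ∈ t.1.1) :
    AndIdx ι G n :=
  ⟨(t.1.1.erase x, undAct ι G σ t.1.2),
    ⟨by simp [Finset.card_erase_of_mem hx, t.2.1],
      t.2.2.mono_left (Finset.erase_subset _ _)⟩⟩

/-- The index `[σa, y]`. -/
def aAct (n : ℕ) (σ : ∀ i, G i) (t : AndIdx ι G n) : AndIdx ι G n :=
  ⟨(t.1.1, undAct ι G σ t.1.2), ⟨t.2.1, t.2.2⟩⟩

@[simp] theorem aE1_fst (n : ℕ) (x : ι) (h : G x) (t : AndIdx ι G (n + 1)) (hx : x ∈ t.1.1) :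
    (aE1 n x h t hx).1.1 = t.1.1.erase x := rfl

@[simp] theorem aE2_fst (n : ℕ) (σ : ∀ i, G i) (x : ι) (t : AndIdx ι G (n + 1))
    (hx : x ∈ t.1.1) : (aE2 n σ x t hx).1.1 = t.1.1.erase x := rfl

@[simp] theorem aAct_fst (n : ℕ) (σ : ∀ i, G i) (t : AndIdx ι G n) :
    (aAct n σ t).1.1 = t.1.1 := rfl

theorem aE1_aE1 {n : ℕ} {x x' : ι} (hne : x ≠ x') (h : G x) (h' : G x')
    (t : AndIdx ι G (n + 2)) (hx : x ∈ t.1.1) (hx' : x' ∈ t.1.1) :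
    aE1 n x h (aE1 (n + 1) x' h' t hx') (Finset.mem_erase.2 ⟨hne, hx⟩)
      = aE1 n x' h' (aE1 (n + 1) x h t hx) (Finset.mem_erase.2 ⟨hne.symm, hx'⟩) := by
  refine Subtype.ext (Prod.ext ?_ ?_)
  · exact Finset.erase_right_comm
  · exact undExt_comm hne h h' t.1.2

theorem aE2_aE2 {n : ℕ} {x x' : ι} (σ σ' : ∀ i, G i)
    (t : AndIdx ι G (n + 2)) (hx : x ∈ t.1.1) (hx' : x' ∈ t.1.1) (hne : x ≠ x') :
    aE2 n σ x (aE2 (n + 1) σ' x' t hx') (Finset.mem_erase.2 ⟨hne, hx⟩)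
      = aE2 n σ' x' (aE2 (n + 1) σ x t hx) (Finset.mem_erase.2 ⟨hne.symm, hx'⟩) := by
  refine Subtype.ext (Prod.ext ?_ ?_)
  · exact Finset.erase_right_comm
  · exact undAct_comm σ σ' t.1.2

theorem aE2_aE1 {n : ℕ} {x x' : ι} (σ : ∀ i, G i) (h : G x)
    (t : AndIdx ι G (n + 2)) (hx : x ∈ t.1.1) (hx' : x' ∈ t.1.1) (hne : x ≠ x') :
    aE2 n σ x' (aE1 (n + 1) x h t hx) (Finset.mem_erase.2 ⟨hne.symm, hx'⟩)
      = aE1 n x (σ x * h) (aE2 (n + 1) σ x' t hx') (Finset.mem_erase.2 ⟨hne, hx⟩) := by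
  refine Subtype.ext (Prod.ext ?_ ?_)
  · exact Finset.erase_right_comm
  · exact undAct_undExt σ x h t.1.2

theorem aAct_aE1 {n : ℕ} (σ : ∀ i, G i) (x : ι) (h : G x) (t : AndIdx ι G (n + 1))
    (hx : x ∈ t.1.1) :
    aAct n σ (aE1 n x h t hx) = aE1 n x (σ x * h) (aAct (n + 1) σ t) hx := by
  refine Subtype.ext (Prod.ext rfl ?_)
  exact undAct_undExt σ x h t.1.2

theorem aAct_aE2 {n : ℕ} (σ τ : ∀ i, G i) (x : ι) (t : AndIdx ι G (n + 1))
    (hx : x ∈ t.1.1) :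
    aAct n σ (aE2 n τ x t hx) = aE2 n τ x (aAct (n + 1) σ t) hx := by
  refine Subtype.ext (Prod.ext rfl ?_)
  exact undAct_comm σ τ t.1.2

/-! ### Evaluation lemmas -/

theorem fs_smul_comm {α : Type} (c : 𝒯) (z : ℤ) (v : α →₀ 𝒯) : c • z • v = z • c • v :=
  smul_comm c z v

theorem andD1x_eq (n : ℕ) (x : ι) : andD1x ι G 𝒯 n x =
    Finsupp.lsum 𝒯 fun t => LinearMap.toSpanSingleton 𝒯 (AndIdx ι G n →₀ 𝒯)
      (if hx : x ∈ t.1.1 then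
        (-((-1 : ℤ) ^ ((t.1.1.filter (fun x' => x' < x)).card))) •
          ∑ h : G x, Finsupp.single
            (⟨(t.1.1.erase x, undExt ι G x h t.1.2), (aE1 n x h t hx).2⟩ : AndIdx ι G n) (1 : 𝒯)
       else 0) := rfl

theorem andD2x_eq (n : ℕ) (x : ι) : andD2x ι G 𝒯 p fr n x =
    Finsupp.lsum 𝒯 fun t => LinearMap.toSpanSingleton 𝒯 (AndIdx ι G n →₀ 𝒯)
      (if hx : x ∈ t.1.1 then
        ((-1 : ℤ) ^ ((t.1.1.filter (fun x' => x' < x)).card)) •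
          ∑ k ∈ (p x).support, Finsupp.single
            (⟨(t.1.1.erase x, undAct ι G (fun i => (fr x i)⁻¹ ^ k) t.1.2),
              (aE2 n (fun i => (fr x i)⁻¹ ^ k) x t hx).2⟩ : AndIdx ι G n) ((p x).coeff k)
       else 0) := rfl

theorem andD_eq (n : ℕ) : andD ι G 𝒯 p fr n =
    Finsupp.lsum 𝒯 fun t => LinearMap.toSpanSingleton 𝒯 (AndIdx ι G n →₀ 𝒯)
      (∑ x ∈ t.1.1.attach,
        ((-1 : ℤ) ^ ((t.1.1.filter (fun x' => x' < x.1)).card)) •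
          ((∑ k ∈ (p x.1).support, Finsupp.single
              (⟨(t.1.1.erase x.1, undAct ι G (fun i => (fr x.1 i)⁻¹ ^ k) t.1.2),
                (aE2 n (fun i => (fr x.1 i)⁻¹ ^ k) x.1 t x.2).2⟩ : AndIdx ι G n)
              ((p x.1).coeff k))
            - ∑ h : G x.1, Finsupp.single
              (⟨(t.1.1.erase x.1, undExt ι G x.1 h t.1.2), by exact (aE1 n x.1 h t x.2).2⟩ : AndIdx ι G n)
              (1 : 𝒯))) := rfl

theorem andD1x_single (n : ℕ) (x : ι) (t : AndIdx ι G (n + 1)) (c : 𝒯) (hx : x ∈ t.1.1) :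
    andD1x ι G 𝒯 n x (Finsupp.single t c)
      = (-((-1 : ℤ) ^ ((t.1.1.filter (fun x' => x' < x)).card))) •
          ∑ h : G x, Finsupp.single (aE1 n x h t hx) c := by
  rw [andD1x_eq, Finsupp.lsum_single, LinearMap.toSpanSingleton_apply]
  simp only [hx, ↓reduceDIte]
  refine (fs_smul_comm c _ _).trans ?_
  congr 1
  refine Finset.smul_sum.trans ?_
  exact Finset.sum_congr rfl fun h _ => (Finsupp.smul_single _ _ _).trans (congrArg _ (mul_one c))

theorem andD1x_single_not (n : ℕ) (x : ι) (t : AndIdx ι G (n + 1)) (c : 𝒯)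
    (hx : x ∉ t.1.1) : andD1x ι G 𝒯 n x (Finsupp.single t c) = 0 := by
  rw [andD1x_eq, Finsupp.lsum_single, LinearMap.toSpanSingleton_apply]
  simp only [hx, ↓reduceDIte, smul_zero]

theorem andD2x_single (n : ℕ) (x : ι) (t : AndIdx ι G (n + 1)) (c : 𝒯) (hx : x ∈ t.1.1) :
    andD2x ι G 𝒯 p fr n x (Finsupp.single t c)
      = ((-1 : ℤ) ^ ((t.1.1.filter (fun x' => x' < x)).card)) •
          ∑ k ∈ (p x).support,
            Finsupp.single (aE2 n (fun i => (fr x i)⁻¹ ^ k) x t hx) (c * (p x).coeff k) := by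
  rw [andD2x_eq, Finsupp.lsum_single, LinearMap.toSpanSingleton_apply]
  simp only [hx, ↓reduceDIte]
  refine (fs_smul_comm c _ _).trans ?_
  congr 1
  refine Finset.smul_sum.trans ?_
  exact Finset.sum_congr rfl fun k _ => Finsupp.smul_single _ _ _

theorem andD2x_single_not (n : ℕ) (x : ι) (t : AndIdx ι G (n + 1)) (c : 𝒯)
    (hx : x ∉ t.1.1) : andD2x ι G 𝒯 p fr n x (Finsupp.single t c) = 0 := by
  rw [andD2x_eq, Finsupp.lsum_single, LinearMap.toSpanSingleton_apply]
  simp only [hx, ↓reduceDIte, smul_zero]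

theorem andActL_single (n : ℕ) (σ : ∀ i, G i) (t : AndIdx ι G n) (c : 𝒯) :
    andActL ι G 𝒯 n σ (Finsupp.single t c) = Finsupp.single (aAct n σ t) c := by
  rw [andActL]; exact Finsupp.mapDomain_single

/-! ### Support and vanishing lemmas -/

theorem support_andD1x_single (n : ℕ) (x : ι) (t : AndIdx ι G (n + 1)) (c : 𝒯) :
    ∀ u ∈ (andD1x ι G 𝒯 n x (Finsupp.single t c)).support, u.1.1 = t.1.1.erase x := by
  classical
  intro u hu
  by_cases hx : x ∈ t.1.1
  · rw [andD1x_single n x t c hx] at hu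
    have h1 := Finsupp.support_smul hu
    have h2 := Finsupp.support_finset_sum h1
    obtain ⟨h, -, h3⟩ := Finset.mem_biUnion.1 h2
    have := Finsupp.support_single_subset h3
    rw [Finset.mem_singleton] at this
    rw [this]; rfl
  · rw [andD1x_single_not n x t c hx] at hu
    simp at hu

theorem support_andD2x_single (n : ℕ) (x : ι) (t : AndIdx ι G (n + 1)) (c : 𝒯) :
    ∀ u ∈ (andD2x ι G 𝒯 p fr n x (Finsupp.single t c)).support, u.1.1 = t.1.1.erase x := by
  classical
  intro u hu
  by_cases hx : x ∈ t.1.1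
  · rw [andD2x_single n x t c hx] at hu
    have h1 := Finsupp.support_smul hu
    have h2 := Finsupp.support_finset_sum h1
    obtain ⟨k, -, h3⟩ := Finset.mem_biUnion.1 h2
    have := Finsupp.support_single_subset h3
    rw [Finset.mem_singleton] at this
    rw [this]; rfl
  · rw [andD2x_single_not n x t c hx] at hu
    simp at hu

theorem andD1x_apply_eq_zero {n : ℕ} {x : ι} {v : AndIdx ι G (n + 1) →₀ 𝒯}
    (hv : ∀ u ∈ v.support, x ∉ u.1.1) : andD1x ι G 𝒯 n x v = 0 := by
  rw [andD1x_eq, Finsupp.lsum_apply, Finsupp.sum]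
  refine Finset.sum_eq_zero fun u hu => ?_
  rw [LinearMap.toSpanSingleton_apply]
  simp only [hv u hu, ↓reduceDIte, smul_zero]

theorem andD2x_apply_eq_zero {n : ℕ} {x : ι} {v : AndIdx ι G (n + 1) →₀ 𝒯}
    (hv : ∀ u ∈ v.support, x ∉ u.1.1) : andD2x ι G 𝒯 p fr n x v = 0 := by
  rw [andD2x_eq, Finsupp.lsum_apply, Finsupp.sum]
  refine Finset.sum_eq_zero fun u hu => ?_
  rw [LinearMap.toSpanSingleton_apply]
  simp only [hv u hu, ↓reduceDIte, smul_zero]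

/-! ### Sign lemma -/

theorem sign_aux1 {y : Finset ι} {x x' : ι} (hx : x ∈ y) (hlt : x < x') :
    (y.filter (fun u => u < x')).card
      = ((y.erase x).filter (fun u => u < x')).card + 1 := by
  have hmem : x ∈ y.filter (fun u => u < x') := Finset.mem_filter.2 ⟨hx, hlt⟩
  have hpos : 0 < (y.filter (fun u => u < x')).card := Finset.card_pos.2 ⟨x, hmem⟩
  rw [Finset.filter_erase, Finset.card_erase_of_mem hmem]
  omega

theorem sign_aux2 {y : Finset ι} {x x' : ι} (hlt : x < x') :
    (y.erase x').filter (fun u => u < x) = y.filter (fun u => u < x) := by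
  rw [Finset.filter_erase, Finset.erase_eq_of_notMem]
  intro hmem
  exact absurd (Finset.mem_filter.1 hmem).2 (not_lt.2 hlt.le)

theorem sign_lemma {y : Finset ι} {x x' : ι} (hx : x ∈ y) (hx' : x' ∈ y) (hne : x ≠ x') :
    ((-1 : ℤ) ^ ((y.filter (fun u => u < x')).card))
        * (-1 : ℤ) ^ (((y.erase x').filter (fun u => u < x)).card)
      = -(((-1 : ℤ) ^ ((y.filter (fun u => u < x)).card))
        * (-1 : ℤ) ^ (((y.erase x).filter (fun u => u < x')).card)) := by
  rcases hne.lt_or_gt with hlt | hlt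
  · rw [sign_aux2 hlt, sign_aux1 hx hlt, pow_succ]
    ring
  · rw [sign_aux2 hlt, sign_aux1 hx' hlt, pow_succ]
    ring

/-! ### Composition computations (good case) -/

theorem d1_d1_single {n : ℕ} (t : AndIdx ι G (n + 2)) (c : 𝒯) {x x' : ι}
    (hx : x ∈ t.1.1) (hx' : x' ∈ t.1.1) (hne : x ≠ x') :
    andD1x ι G 𝒯 n x (andD1x ι G 𝒯 (n + 1) x' (Finsupp.single t c))
      = (((-1 : ℤ) ^ ((t.1.1.filter (fun u => u < x')).card))
          * (-1 : ℤ) ^ (((t.1.1.erase x').filter (fun u => u < x)).card)) •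
          ∑ h' : G x', ∑ h : G x,
            Finsupp.single
              (aE1 n x h (aE1 (n + 1) x' h' t hx') (Finset.mem_erase.2 ⟨hne, hx⟩)) c := by
  rw [andD1x_single (n + 1) x' t c hx', map_zsmul, map_sum]
  rw [Finset.sum_congr rfl fun h' _ =>
    andD1x_single n x (aE1 (n + 1) x' h' t hx') c (Finset.mem_erase.2 ⟨hne, hx⟩)]
  simp only [aE1_fst]
  rw [← Finset.smul_sum, smul_smul, neg_mul_neg]

theorem d2_d2_single {n : ℕ} (t : AndIdx ι G (n + 2)) (c : 𝒯) {x x' : ι}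
    (hx : x ∈ t.1.1) (hx' : x' ∈ t.1.1) (hne : x ≠ x') :
    andD2x ι G 𝒯 p fr n x (andD2x ι G 𝒯 p fr (n + 1) x' (Finsupp.single t c))
      = (((-1 : ℤ) ^ ((t.1.1.filter (fun u => u < x')).card))
          * (-1 : ℤ) ^ (((t.1.1.erase x').filter (fun u => u < x)).card)) •
          ∑ k' ∈ (p x').support, ∑ k ∈ (p x).support,
            Finsupp.single
              (aE2 n (fun i => (fr x i)⁻¹ ^ k) x
                (aE2 (n + 1) (fun i => (fr x' i)⁻¹ ^ k') x' t hx')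
                (Finset.mem_erase.2 ⟨hne, hx⟩))
              (c * (p x').coeff k' * (p x).coeff k) := by
  rw [andD2x_single (n + 1) x' t c hx', map_zsmul, map_sum]
  rw [Finset.sum_congr rfl fun k' _ =>
    andD2x_single n x (aE2 (n + 1) (fun i => (fr x' i)⁻¹ ^ k') x' t hx')
      (c * (p x').coeff k') (Finset.mem_erase.2 ⟨hne, hx⟩)]
  simp only [aE2_fst]
  rw [← Finset.smul_sum, smul_smul]

theorem d1_d2_single {n : ℕ} (t : AndIdx ι G (n + 2)) (c : 𝒯) {x x' : ι}
    (hx : x ∈ t.1.1) (hx' : x' ∈ t.1.1) (hne : x ≠ x') :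
    andD1x ι G 𝒯 n x (andD2x ι G 𝒯 p fr (n + 1) x' (Finsupp.single t c))
      = (-(((-1 : ℤ) ^ ((t.1.1.filter (fun u => u < x')).card))
          * (-1 : ℤ) ^ (((t.1.1.erase x').filter (fun u => u < x)).card))) •
          ∑ k' ∈ (p x').support, ∑ h : G x,
            Finsupp.single
              (aE1 n x h (aE2 (n + 1) (fun i => (fr x' i)⁻¹ ^ k') x' t hx')
                (Finset.mem_erase.2 ⟨hne, hx⟩))
              (c * (p x').coeff k') := by
  rw [andD2x_single (n + 1) x' t c hx', map_zsmul, map_sum]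
  rw [Finset.sum_congr rfl fun k' _ =>
    andD1x_single n x (aE2 (n + 1) (fun i => (fr x' i)⁻¹ ^ k') x' t hx')
      (c * (p x').coeff k') (Finset.mem_erase.2 ⟨hne, hx⟩)]
  simp only [aE2_fst]
  rw [← Finset.smul_sum, smul_smul, mul_neg, ← neg_mul]

theorem d2_d1_single {n : ℕ} (t : AndIdx ι G (n + 2)) (c : 𝒯) {x x' : ι}
    (hx : x ∈ t.1.1) (hx' : x' ∈ t.1.1) (hne : x ≠ x') :
    andD2x ι G 𝒯 p fr n x' (andD1x ι G 𝒯 (n + 1) x (Finsupp.single t c))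
      = (-(((-1 : ℤ) ^ ((t.1.1.filter (fun u => u < x)).card))
          * (-1 : ℤ) ^ (((t.1.1.erase x).filter (fun u => u < x')).card))) •
          ∑ h : G x, ∑ k' ∈ (p x').support,
            Finsupp.single
              (aE2 n (fun i => (fr x' i)⁻¹ ^ k') x' (aE1 (n + 1) x h t hx)
                (Finset.mem_erase.2 ⟨hne.symm, hx'⟩))
              (c * (p x').coeff k') := by
  rw [andD1x_single (n + 1) x t c hx, map_zsmul, map_sum]
  rw [Finset.sum_congr rfl fun h _ =>
    andD2x_single n x' (aE1 (n + 1) x h t hx) c (Finset.mem_erase.2 ⟨hne.symm, hx'⟩)]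
  simp only [aE1_fst]
  rw [← Finset.smul_sum, smul_smul, neg_mul]

/-! ### Vanishing of compositions outside the good range -/

theorem d1_d1_zero {n : ℕ} (t : AndIdx ι G (n + 2)) (c : 𝒯) {x x' : ι}
    (hcond : ¬(x' ∈ t.1.1 ∧ x ∈ t.1.1.erase x')) :
    andD1x ι G 𝒯 n x (andD1x ι G 𝒯 (n + 1) x' (Finsupp.single t c)) = 0 := by
  by_cases hx' : x' ∈ t.1.1
  · refine andD1x_apply_eq_zero fun u hu => ?_
    rw [support_andD1x_single (n + 1) x' t c u hu]
    exact fun hmem => hcond ⟨hx', hmem⟩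
  · rw [andD1x_single_not (n + 1) x' t c hx', map_zero]

theorem d1_d2_zero {n : ℕ} (t : AndIdx ι G (n + 2)) (c : 𝒯) {x x' : ι}
    (hcond : ¬(x' ∈ t.1.1 ∧ x ∈ t.1.1.erase x')) :
    andD1x ι G 𝒯 n x (andD2x ι G 𝒯 p fr (n + 1) x' (Finsupp.single t c)) = 0 := by
  by_cases hx' : x' ∈ t.1.1
  · refine andD1x_apply_eq_zero fun u hu => ?_
    rw [support_andD2x_single (n + 1) x' t c u hu]
    exact fun hmem => hcond ⟨hx', hmem⟩
  · rw [andD2x_single_not (n + 1) x' t c hx', map_zero]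

theorem d2_d1_zero {n : ℕ} (t : AndIdx ι G (n + 2)) (c : 𝒯) {x x' : ι}
    (hcond : ¬(x' ∈ t.1.1 ∧ x ∈ t.1.1.erase x')) :
    andD2x ι G 𝒯 p fr n x (andD1x ι G 𝒯 (n + 1) x' (Finsupp.single t c)) = 0 := by
  by_cases hx' : x' ∈ t.1.1
  · refine andD2x_apply_eq_zero fun u hu => ?_
    rw [support_andD1x_single (n + 1) x' t c u hu]
    exact fun hmem => hcond ⟨hx', hmem⟩
  · rw [andD1x_single_not (n + 1) x' t c hx', map_zero]

theorem d2_d2_zero {n : ℕ} (t : AndIdx ι G (n + 2)) (c : 𝒯) {x x' : ι}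
    (hcond : ¬(x' ∈ t.1.1 ∧ x ∈ t.1.1.erase x')) :
    andD2x ι G 𝒯 p fr n x (andD2x ι G 𝒯 p fr (n + 1) x' (Finsupp.single t c)) = 0 := by
  by_cases hx' : x' ∈ t.1.1
  · refine andD2x_apply_eq_zero fun u hu => ?_
    rw [support_andD2x_single (n + 1) x' t c u hu]
    exact fun hmem => hcond ⟨hx', hmem⟩
  · rw [andD2x_single_not (n + 1) x' t c hx', map_zero]

/-! ### Swap cancellation lemmas -/

theorem D11_swap {n : ℕ} (t : AndIdx ι G (n + 2)) (c : 𝒯) (x x' : ι) :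
    andD1x ι G 𝒯 n x (andD1x ι G 𝒯 (n + 1) x' (Finsupp.single t c))
      + andD1x ι G 𝒯 n x' (andD1x ι G 𝒯 (n + 1) x (Finsupp.single t c)) = 0 := by
  rcases eq_or_ne x x' with rfl | hne
  · rw [d1_d1_zero t c fun hc => Finset.notMem_erase x t.1.1 hc.2, add_zero]
  by_cases hx : x ∈ t.1.1
  · by_cases hx' : x' ∈ t.1.1
    · have hsum : (∑ h' : G x', ∑ h : G x,
          Finsupp.single
            (aE1 n x h (aE1 (n + 1) x' h' t hx') (Finset.mem_erase.2 ⟨hne, hx⟩)) c)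
          = ∑ h : G x, ∑ h' : G x',
              Finsupp.single
                (aE1 n x' h' (aE1 (n + 1) x h t hx)
                  (Finset.mem_erase.2 ⟨hne.symm, hx'⟩)) c := by
        rw [Finset.sum_comm]
        exact Finset.sum_congr rfl fun h _ => Finset.sum_congr rfl fun h' _ => by
          rw [aE1_aE1 hne h h' t hx hx']
      rw [d1_d1_single t c hx hx' hne, d1_d1_single t c hx' hx hne.symm, hsum,
        sign_lemma hx hx' hne, neg_smul, neg_add_cancel]
    · rw [d1_d1_zero t c fun hc => hx' hc.1,
        d1_d1_zero t c fun hc => hx' (Finset.mem_of_mem_erase hc.2), add_zero]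
  · rw [d1_d1_zero t c fun hc => hx (Finset.mem_of_mem_erase hc.2),
      d1_d1_zero t c fun hc => hx hc.1, add_zero]

theorem D22_swap {n : ℕ} (t : AndIdx ι G (n + 2)) (c : 𝒯) (x x' : ι) :
    andD2x ι G 𝒯 p fr n x (andD2x ι G 𝒯 p fr (n + 1) x' (Finsupp.single t c))
      + andD2x ι G 𝒯 p fr n x' (andD2x ι G 𝒯 p fr (n + 1) x (Finsupp.single t c)) = 0 := by
  rcases eq_or_ne x x' with rfl | hne
  · rw [d2_d2_zero t c fun hc => Finset.notMem_erase x t.1.1 hc.2, add_zero]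
  by_cases hx : x ∈ t.1.1
  · by_cases hx' : x' ∈ t.1.1
    · have hsum : (∑ k' ∈ (p x').support, ∑ k ∈ (p x).support,
          Finsupp.single
            (aE2 n (fun i => (fr x i)⁻¹ ^ k) x
              (aE2 (n + 1) (fun i => (fr x' i)⁻¹ ^ k') x' t hx')
              (Finset.mem_erase.2 ⟨hne, hx⟩))
            (c * (p x').coeff k' * (p x).coeff k))
          = ∑ k ∈ (p x).support, ∑ k' ∈ (p x').support,
              Finsupp.single
                (aE2 n (fun i => (fr x' i)⁻¹ ^ k') x'
                  (aE2 (n + 1) (fun i => (fr x i)⁻¹ ^ k) x t hx)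
                  (Finset.mem_erase.2 ⟨hne.symm, hx'⟩))
                (c * (p x).coeff k * (p x').coeff k') := by
        rw [Finset.sum_comm]
        exact Finset.sum_congr rfl fun k _ => Finset.sum_congr rfl fun k' _ => by
          rw [aE2_aE2 (fun i => (fr x i)⁻¹ ^ k) (fun i => (fr x' i)⁻¹ ^ k') t hx hx' hne,
            mul_right_comm]
      rw [d2_d2_single t c hx hx' hne, d2_d2_single t c hx' hx hne.symm, hsum,
        sign_lemma hx hx' hne, neg_smul, neg_add_cancel]
    · rw [d2_d2_zero t c fun hc => hx' hc.1,
        d2_d2_zero t c fun hc => hx' (Finset.mem_of_mem_erase hc.2), add_zero]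
  · rw [d2_d2_zero t c fun hc => hx (Finset.mem_of_mem_erase hc.2),
      d2_d2_zero t c fun hc => hx hc.1, add_zero]

theorem Dmix_swap {n : ℕ} (t : AndIdx ι G (n + 2)) (c : 𝒯) (x x' : ι) :
    andD1x ι G 𝒯 n x (andD2x ι G 𝒯 p fr (n + 1) x' (Finsupp.single t c))
      + andD2x ι G 𝒯 p fr n x' (andD1x ι G 𝒯 (n + 1) x (Finsupp.single t c)) = 0 := by
  rcases eq_or_ne x x' with rfl | hne
  · rw [d1_d2_zero t c fun hc => Finset.notMem_erase x t.1.1 hc.2,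
      d2_d1_zero t c fun hc => Finset.notMem_erase x t.1.1 hc.2, add_zero]
  by_cases hx : x ∈ t.1.1
  · by_cases hx' : x' ∈ t.1.1
    · have hsum : (∑ h : G x, ∑ k' ∈ (p x').support,
          Finsupp.single
            (aE2 n (fun i => (fr x' i)⁻¹ ^ k') x' (aE1 (n + 1) x h t hx)
              (Finset.mem_erase.2 ⟨hne.symm, hx'⟩))
            (c * (p x').coeff k'))
          = ∑ k' ∈ (p x').support, ∑ h : G x,
              Finsupp.single
                (aE1 n x h (aE2 (n + 1) (fun i => (fr x' i)⁻¹ ^ k') x' t hx')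
                  (Finset.mem_erase.2 ⟨hne, hx⟩))
                (c * (p x').coeff k') := by
        rw [Finset.sum_comm]
        refine Finset.sum_congr rfl fun k' _ => ?_
        rw [Finset.sum_congr rfl fun h _ => by
          rw [aE2_aE1 (fun i => (fr x' i)⁻¹ ^ k') h t hx hx' hne]]
        exact Fintype.sum_bijective (fun h : G x => (fr x' x)⁻¹ ^ k' * h)
          (Group.mulLeft_bijective _) _ _ (fun h => rfl)
      rw [d1_d2_single t c hx hx' hne, d2_d1_single t c hx hx' hne, hsum,
        sign_lemma hx hx' hne, neg_neg, neg_smul, add_neg_cancel]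
    · rw [d1_d2_zero t c fun hc => hx' hc.1,
        d2_d1_zero t c fun hc => hx' (Finset.mem_of_mem_erase hc.2), add_zero]
  · rw [d1_d2_zero t c fun hc => hx (Finset.mem_of_mem_erase hc.2),
      d2_d1_zero t c fun hc => hx hc.1, add_zero]

/-! ### dite forms and the decomposition of `d` -/

theorem sum_dite_univ {α : Type} [Fintype α] [DecidableEq α] {M : Type} [AddCommMonoid M]
    (s : Finset α) (F : (x : α) → x ∈ s → M) :
    (∑ x : α, if hx : x ∈ s then F x hx else 0) = ∑ x ∈ s.attach, F x.1 x.2 := by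
  rw [show (∑ x : α, if hx : x ∈ s then F x hx else 0)
        = ∑ x ∈ s, if hx : x ∈ s then F x hx else 0 from
      (Finset.sum_subset s.subset_univ fun x _ hx => dif_neg hx).symm,
    ← Finset.sum_attach s fun x => if hx : x ∈ s then F x hx else 0]
  exact Finset.sum_congr rfl fun x _ => dif_pos x.2

theorem andD1x_single_dite (n : ℕ) (x : ι) (t : AndIdx ι G (n + 1)) (c : 𝒯) :
    andD1x ι G 𝒯 n x (Finsupp.single t c)
      = if hx : x ∈ t.1.1 then
          (-((-1 : ℤ) ^ ((t.1.1.filter (fun x' => x' < x)).card))) •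
            ∑ h : G x, Finsupp.single (aE1 n x h t hx) c
        else 0 := by
  by_cases hx : x ∈ t.1.1
  · rw [dif_pos hx]; exact andD1x_single n x t c hx
  · rw [dif_neg hx]; exact andD1x_single_not n x t c hx

theorem andD2x_single_dite (n : ℕ) (x : ι) (t : AndIdx ι G (n + 1)) (c : 𝒯) :
    andD2x ι G 𝒯 p fr n x (Finsupp.single t c)
      = if hx : x ∈ t.1.1 then
          ((-1 : ℤ) ^ ((t.1.1.filter (fun x' => x' < x)).card)) •
            ∑ k ∈ (p x).support,
              Finsupp.single (aE2 n (fun i => (fr x i)⁻¹ ^ k) x t hx) (c * (p x).coeff k)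
        else 0 := by
  by_cases hx : x ∈ t.1.1
  · rw [dif_pos hx]; exact andD2x_single n x t c hx
  · rw [dif_neg hx]; exact andD2x_single_not n x t c hx

theorem andD_single (n : ℕ) (t : AndIdx ι G (n + 1)) (c : 𝒯) :
    andD ι G 𝒯 p fr n (Finsupp.single t c)
      = ∑ x ∈ t.1.1.attach,
          (((-1 : ℤ) ^ ((t.1.1.filter (fun x' => x' < x.1)).card)) •
            ((∑ k ∈ (p x.1).support,
                Finsupp.single (aE2 n (fun i => (fr x.1 i)⁻¹ ^ k) x.1 t x.2)
                  (c * (p x.1).coeff k))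
              - ∑ h : G x.1, Finsupp.single (aE1 n x.1 h t x.2) c)) := by
  rw [andD_eq, Finsupp.lsum_single, LinearMap.toSpanSingleton_apply]
  refine Finset.smul_sum.trans ?_
  refine Finset.sum_congr rfl fun x _ => ?_
  refine (fs_smul_comm c _ _).trans ?_
  congr 1
  refine (smul_sub c _ _).trans ?_
  congr 1
  · refine Finset.smul_sum.trans ?_
    exact Finset.sum_congr rfl fun k _ => Finsupp.smul_single _ _ _
  · refine Finset.smul_sum.trans ?_
    exact Finset.sum_congr rfl fun h _ =>
      (Finsupp.smul_single _ _ _).trans (congrArg _ (mul_one c))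

theorem sum_d1_d2_single (n : ℕ) (t : AndIdx ι G (n + 1)) (c : 𝒯) :
    andD ι G 𝒯 p fr n (Finsupp.single t c)
      = ((∑ x : ι, andD1x ι G 𝒯 n x) + ∑ x : ι, andD2x ι G 𝒯 p fr n x)
          (Finsupp.single t c) := by
  rw [LinearMap.add_apply, LinearMap.sum_apply, LinearMap.sum_apply,
    Finset.sum_congr rfl fun x _ => andD1x_single_dite n x t c,
    Finset.sum_congr rfl fun x _ => andD2x_single_dite n x t c,
    sum_dite_univ t.1.1 _, sum_dite_univ t.1.1 _, andD_single n t c,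
    ← Finset.sum_add_distrib]
  refine Finset.sum_congr rfl fun x _ => ?_
  rw [smul_sub, sub_eq_add_neg, ← neg_smul]
  exact add_comm _ _

/-! ### Equivariance -/

theorem d1_act_single {n : ℕ} (x : ι) (σ : ∀ i, G i) (t : AndIdx ι G (n + 1)) (c : 𝒯) :
    andD1x ι G 𝒯 n x (andActL ι G 𝒯 (n + 1) σ (Finsupp.single t c))
      = andActL ι G 𝒯 n σ (andD1x ι G 𝒯 n x (Finsupp.single t c)) := by
  rw [andActL_single]
  by_cases hx : x ∈ t.1.1
  · rw [andD1x_single n x (aAct (n + 1) σ t) c hx, andD1x_single n x t c hx,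
      map_zsmul, map_sum]
    simp only [aAct_fst]
    rw [Finset.sum_congr rfl fun h _ => andActL_single n σ (aE1 n x h t hx) c]
    congr 1
    refine (Fintype.sum_bijective (fun h : G x => σ x * h)
      (Group.mulLeft_bijective _) _ _ fun h => ?_).symm
    rw [aAct_aE1 σ x h t hx]
  · rw [andD1x_single_not n x (aAct (n + 1) σ t) c hx, andD1x_single_not n x t c hx,
      map_zero]

theorem d2_act_single {n : ℕ} (x : ι) (σ : ∀ i, G i) (t : AndIdx ι G (n + 1)) (c : 𝒯) :
    andD2x ι G 𝒯 p fr n x (andActL ι G 𝒯 (n + 1) σ (Finsupp.single t c))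
      = andActL ι G 𝒯 n σ (andD2x ι G 𝒯 p fr n x (Finsupp.single t c)) := by
  rw [andActL_single]
  by_cases hx : x ∈ t.1.1
  · rw [andD2x_single n x (aAct (n + 1) σ t) c hx, andD2x_single n x t c hx,
      map_zsmul, map_sum]
    simp only [aAct_fst]
    rw [Finset.sum_congr rfl fun k _ =>
      andActL_single n σ (aE2 n (fun i => (fr x i)⁻¹ ^ k) x t hx) (c * (p x).coeff k)]
    congr 1
    exact Finset.sum_congr rfl fun k _ => by
      rw [aAct_aE2 σ (fun i => (fr x i)⁻¹ ^ k) x t hx]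
  · rw [andD2x_single_not n x (aAct (n + 1) σ t) c hx, andD2x_single_not n x t c hx,
      map_zero]

end AuxDefs
/-- decomposing the differential of Anderson's resolution as
`d = d₁ + d₂` with `d_{1,x}[a,y] = −ω(x,y) N_{z(x)}[z(x)a, y/x]` and
`d_{2,x}[a,y] = ω(x,y) p(x;Fr_x^{-1})[a, y/x]`, one has
`d₁² = d₂² = d₁d₂ + d₂d₁ = 0`, so `(ℒ_z; d₁, d₂)` is a double complex, and each
`d_{i,x}` commutes with the `G_z`-action. -/
theorem stmt15 (ι : Type) [Fintype ι] [LinearOrder ι]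
    (G : ι → Type) [∀ i, CommGroup (G i)] [∀ i, Fintype (G i)]
    (𝒯 : Type) [CommRing 𝒯] (p : ι → Polynomial 𝒯) (fr : ι → ∀ i, G i) :
    (∀ n : ℕ, andD ι G 𝒯 p fr n
        = (∑ x : ι, andD1x ι G 𝒯 n x) + (∑ x : ι, andD2x ι G 𝒯 p fr n x)) ∧
      (∀ n : ℕ,
        (∑ x : ι, andD1x ι G 𝒯 n x).comp (∑ x : ι, andD1x ι G 𝒯 (n + 1) x) = 0 ∧
        (∑ x : ι, andD2x ι G 𝒯 p fr n x).comp
            (∑ x : ι, andD2x ι G 𝒯 p fr (n + 1) x) = 0 ∧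
        (∑ x : ι, andD1x ι G 𝒯 n x).comp (∑ x : ι, andD2x ι G 𝒯 p fr (n + 1) x)
            + (∑ x : ι, andD2x ι G 𝒯 p fr n x).comp
                (∑ x : ι, andD1x ι G 𝒯 (n + 1) x) = 0) ∧
      (∀ (n : ℕ) (x : ι) (σ : ∀ i, G i),
        (andD1x ι G 𝒯 n x).comp (andActL ι G 𝒯 (n + 1) σ)
            = (andActL ι G 𝒯 n σ).comp (andD1x ι G 𝒯 n x) ∧
        (andD2x ι G 𝒯 p fr n x).comp (andActL ι G 𝒯 (n + 1) σ)
            = (andActL ι G 𝒯 n σ).comp (andD2x ι G 𝒯 p fr n x)) := by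

  classical
  refine ⟨fun n => ?_, fun n => ⟨?_, ?_, ?_⟩, fun n x σ => ⟨?_, ?_⟩⟩
  · exact Finsupp.lhom_ext fun t c => sum_d1_d2_single n t c
  · -- d₁² = 0
    refine Finsupp.lhom_ext fun t c => ?_
    simp only [LinearMap.comp_apply, LinearMap.sum_apply, map_sum, LinearMap.zero_apply]
    rw [← Finset.sum_product']
    refine Finset.sum_ninvolution Prod.swap (fun q => D11_swap t c q.2 q.1)
      (fun q hq hswap => hq ?_) (fun q => Finset.mem_product.2 ⟨Finset.mem_univ _, Finset.mem_univ _⟩)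
      (fun q => Prod.swap_swap q)
    have h12 : q.2 = q.1 := congrArg Prod.fst hswap
    rw [h12]
    exact d1_d1_zero t c fun hc => Finset.notMem_erase q.1 t.1.1 hc.2
  · -- d₂² = 0
    refine Finsupp.lhom_ext fun t c => ?_
    simp only [LinearMap.comp_apply, LinearMap.sum_apply, map_sum, LinearMap.zero_apply]
    rw [← Finset.sum_product']
    refine Finset.sum_ninvolution Prod.swap (fun q => D22_swap t c q.2 q.1)
      (fun q hq hswap => hq ?_) (fun q => Finset.mem_product.2 ⟨Finset.mem_univ _, Finset.mem_univ _⟩)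
      (fun q => Prod.swap_swap q)
    have h12 : q.2 = q.1 := congrArg Prod.fst hswap
    rw [h12]
    exact d2_d2_zero t c fun hc => Finset.notMem_erase q.1 t.1.1 hc.2
  · -- d₁d₂ + d₂d₁ = 0
    refine Finsupp.lhom_ext fun t c => ?_
    simp only [LinearMap.add_apply, LinearMap.comp_apply, LinearMap.sum_apply, map_sum,
      LinearMap.zero_apply]
    rw [← Finset.sum_product', ← Finset.sum_product', ← Finset.sum_add_distrib]
    refine Finset.sum_ninvolution Prod.swap (fun q => ?_)
      (fun q hq hswap => hq ?_) (fun q => Finset.mem_product.2 ⟨Finset.mem_univ _, Finset.mem_univ _⟩)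
      (fun q => Prod.swap_swap q)
    · simp only [Prod.fst_swap, Prod.snd_swap]
      have h1 := Dmix_swap (p := p) (fr := fr) t c q.2 q.1
      have h2 := Dmix_swap (p := p) (fr := fr) t c q.1 q.2
      rw [eq_neg_of_add_eq_zero_right h1, eq_neg_of_add_eq_zero_right h2]
      abel
    · have h12 : q.2 = q.1 := congrArg Prod.fst hswap
      rw [h12, d1_d2_zero t c fun hc => Finset.notMem_erase q.1 t.1.1 hc.2,
        d2_d1_zero t c fun hc => Finset.notMem_erase q.1 t.1.1 hc.2, add_zero]
  · exact Finsupp.lhom_ext fun t c => by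
      simp only [LinearMap.comp_apply]; exact d1_act_single x σ t c
  · exact Finsupp.lhom_ext fun t c => by
      simp only [LinearMap.comp_apply]; exact d2_act_single x σ t c
end
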